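/- arXiv:0704.2149 — 6 statements merged into one kernel-verified Lean document; each statement's English description precedes it below -/
import Mathlib

section
/- Let h(X) = 1 + b_1 X + b_2 X² + … be a formal power series over ℂ and let g := X^{−1}·h(X), a formal Laurent series. For n ≥ 1 define the polynomial Φ_n(u) := 𝒬_n(b_1 − u, b_2, …, b_n), i.e. the n-th Faber polynomial of the series 1 + (b_1−u)X + b_2X² + … over the ring ℂ[u]; Φ_n is a polynomial of degree n in u. Then the Laurent series Φ_n(g), obtained by evaluating the polynomial Φ_n at g, satisfies: its coefficient at X^{−n} equals 1, and its coefficient at X^{−m} equals 0 for every integer m with 0 ≤ m < n. (In the classical notation z = X^{−1}, g(z) = z·h(1/z) = z + b_1 + b_2 z^{−1} + …, this says Φ_n(g(z)) = z^n + ∑_{k>0} β_{nk} z^{−k} for suitable coefficients β_{nk}.) -/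
open PowerSeries Finset

/-- The power series `h(X) = 1 + b₁ X + b₂ X² + ⋯` attached to a sequence `b`. -/
noncomputable def hSeries {R : Type*} [CommRing R] (b : ℕ → R) : PowerSeries R :=
  PowerSeries.mk fun n => if n = 0 then 1 else b n

/-- The Faber polynomials `𝒬ₙ(b)`, defined by
`−X·h'(X)/h(X) = ∑_{n≥1} 𝒬ₙ(b) Xⁿ` where `h(X) = 1 + b₁X + b₂X² + ⋯`; the inverse
`1/h` exists since the constant term of `h` is `1`. -/
noncomputable def faberQ {R : Type*} [CommRing R] (b : ℕ → R) (n : ℕ) : R :=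
  PowerSeries.coeff n
    (-(PowerSeries.X * (hSeries b).derivativeFun) * (hSeries b).invOfUnit 1)

/-- The polynomial `Φₙ(u) := 𝒬ₙ(b₁ − u, b₂, …, bₙ)`, the `n`-th Faber polynomial of
the series `1 + (b₁ − u)X + b₂X² + ⋯` over the polynomial ring `ℂ[u]`. -/
noncomputable def faberPhi (b : ℕ → ℂ) (n : ℕ) : Polynomial ℂ :=
  faberQ (fun j => if j = 1 then Polynomial.C (b 1) - Polynomial.X else Polynomial.C (b j)) n

section Aux

variable {R S : Type*} [CommRing R] [CommRing S]

lemma constantCoeff_hSeries (b : ℕ → R) : PowerSeries.constantCoeff (hSeries b) = 1 := by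
  rw [← PowerSeries.coeff_zero_eq_constantCoeff_apply]
  simp [hSeries]

lemma map_hSeries (φ : R →+* S) (b : ℕ → R) :
    PowerSeries.map φ (hSeries b) = hSeries (fun j => φ (b j)) := by
  ext n
  simp [hSeries, PowerSeries.coeff_map, apply_ite φ]

lemma map_derivativeFun (φ : R →+* S) (f : PowerSeries R) :
    PowerSeries.map φ f.derivativeFun = (PowerSeries.map φ f).derivativeFun := by
  ext n
  show φ (PowerSeries.coeff n (PowerSeries.derivative R f)) =
    PowerSeries.coeff n (PowerSeries.derivative S (PowerSeries.map φ f))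
  simp [PowerSeries.coeff_map, PowerSeries.coeff_derivativeFun]

lemma constantCoeff_map' (φ : R →+* S) (f : PowerSeries R) :
    PowerSeries.constantCoeff (PowerSeries.map φ f) = φ (PowerSeries.constantCoeff f) := by
  rw [← PowerSeries.coeff_zero_eq_constantCoeff_apply, PowerSeries.coeff_map,
    PowerSeries.coeff_zero_eq_constantCoeff_apply]

lemma map_invOfUnit' (φ : R →+* S) (f : PowerSeries R)
    (hf : PowerSeries.constantCoeff f = 1) :
    PowerSeries.map φ (f.invOfUnit 1) = (PowerSeries.map φ f).invOfUnit 1 := by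
  have hfS : PowerSeries.constantCoeff (PowerSeries.map φ f) = 1 := by
    rw [constantCoeff_map', hf, map_one]
  have h1 : PowerSeries.map φ f * PowerSeries.map φ (f.invOfUnit 1) = 1 := by
    rw [← map_mul, PowerSeries.mul_invOfUnit f 1 (by simp [hf]), map_one]
  have h2 : PowerSeries.map φ f * (PowerSeries.map φ f).invOfUnit 1 = 1 :=
    PowerSeries.mul_invOfUnit _ 1 (by simp [hfS])
  calc PowerSeries.map φ (f.invOfUnit 1)
      = PowerSeries.map φ (f.invOfUnit 1) * (PowerSeries.map φ f *
          (PowerSeries.map φ f).invOfUnit 1) := by rw [h2, mul_one]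
    _ = (PowerSeries.map φ f * PowerSeries.map φ (f.invOfUnit 1)) *
          (PowerSeries.map φ f).invOfUnit 1 := by ring
    _ = (PowerSeries.map φ f).invOfUnit 1 := by rw [h1, one_mul]

lemma invOfUnit_unique {f g : PowerSeries R} (hf : PowerSeries.constantCoeff f = 1)
    (h : f * g = 1) : f.invOfUnit 1 = g := by
  have h2 : f * f.invOfUnit 1 = 1 := PowerSeries.mul_invOfUnit f 1 (by simp [hf])
  calc f.invOfUnit 1 = f.invOfUnit 1 * (f * g) := by rw [h, mul_one]
    _ = (f * f.invOfUnit 1) * g := by ring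
    _ = g := by rw [h2, one_mul]

lemma faberQ_map (φ : R →+* S) (b : ℕ → R) (n : ℕ) :
    φ (faberQ b n) = faberQ (fun j => φ (b j)) n := by
  unfold faberQ
  rw [← PowerSeries.coeff_map]
  congr 1
  rw [map_mul, map_neg, map_mul, PowerSeries.map_X,
    map_derivativeFun, map_invOfUnit' _ _ (constantCoeff_hSeries b), map_hSeries]

lemma geom_series (z : R) :
    (1 - PowerSeries.C z * PowerSeries.X) * PowerSeries.mk (fun m => z ^ m) = 1 := by
  have hexp : (1 - PowerSeries.C z * PowerSeries.X) * PowerSeries.mk (fun m => z ^ m)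
      = PowerSeries.mk (fun m => z ^ m)
        - PowerSeries.C z * (PowerSeries.X * PowerSeries.mk (fun m => z ^ m)) := by ring
  rw [hexp]
  refine PowerSeries.ext fun n => ?_
  rw [map_sub, PowerSeries.coeff_C_mul]
  cases n with
  | zero =>
      rw [PowerSeries.coeff_zero_X_mul, mul_zero, sub_zero]
      simp
  | succ k =>
      rw [PowerSeries.coeff_succ_X_mul, PowerSeries.coeff_mk, PowerSeries.coeff_mk,
        PowerSeries.coeff_one, pow_succ]
      simp [mul_comm]

end Aux

/-- `auxR b m = ∑_{i≥0} b_{m+1+i} Xⁱ`. -/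
noncomputable def auxR (b : ℕ → ℂ) (m : ℕ) : PowerSeries ℂ :=
  PowerSeries.mk fun i => b (m + 1 + i)

/-- `auxE b m = −X·(auxR b m) = −∑_{i≥1} b_{m+i} Xⁱ`. -/
noncomputable def auxE (b : ℕ → ℂ) (m : ℕ) : PowerSeries ℂ :=
  -(PowerSeries.X * auxR b m)

lemma auxR_succ (b : ℕ → ℂ) (m : ℕ) :
    auxR b m = PowerSeries.C (b (m + 1)) + PowerSeries.X * auxR b (m + 1) := by
  ext i
  cases i with
  | zero => simp [auxR]
  | succ k =>
      simp only [auxR, PowerSeries.coeff_mk, map_add, PowerSeries.coeff_C,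
        PowerSeries.coeff_succ_X_mul, Nat.succ_ne_zero, if_false, zero_add]
      congr 1
      omega

lemma hSeries_eq (b : ℕ → ℂ) : hSeries b = 1 + PowerSeries.X * auxR b 0 := by
  ext i
  cases i with
  | zero => simp [hSeries]
  | succ k =>
      simp only [hSeries, PowerSeries.coeff_mk, map_add, PowerSeries.coeff_one,
        PowerSeries.coeff_succ_X_mul, Nat.succ_ne_zero, if_false, zero_add, auxR]
      congr 1
      omega

/-- For `h(X) = 1 + b₁X + b₂X² + ⋯` and the formal Laurent series
`g = X⁻¹·h(X)` (classically `g(z) = z·h(1/z) = z + b₁ + b₂z⁻¹ + ⋯` with `z = X⁻¹`),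
the Laurent series `Φₙ(g)` has coefficient `1` at `X^{−n}` and coefficient `0`
at `X^{−m}` for every `0 ≤ m < n`; i.e. `Φₙ(g(z)) = zⁿ + ∑_{k>0} βₙₖ z^{−k}`. -/
theorem faberPhi_eval_laurent (b : ℕ → ℂ) (n : ℕ) (hn : 1 ≤ n) :
    (Polynomial.aeval
        ((HahnSeries.single (-1 : ℤ) (1 : ℂ) : LaurentSeries ℂ) *
          (HahnSeries.ofPowerSeries ℤ ℂ (hSeries b)))
        (faberPhi b n)).coeff (-(n : ℤ)) = 1 ∧
    ∀ m : ℕ, m < n →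
      (Polynomial.aeval
          ((HahnSeries.single (-1 : ℤ) (1 : ℂ) : LaurentSeries ℂ) *
            (HahnSeries.ofPowerSeries ℤ ℂ (hSeries b)))
          (faberPhi b n)).coeff (-(m : ℤ)) = 0 := by
  classical
  set ι : PowerSeries ℂ →+* LaurentSeries ℂ := HahnSeries.ofPowerSeries ℤ ℂ with hιdef
  set z : LaurentSeries ℂ := HahnSeries.single (-1 : ℤ) (1 : ℂ) with hzdef
  set g : LaurentSeries ℂ := z * ι (hSeries b) with hgdef
  -- coefficients of `ofPowerSeries` at negative indices vanish
  have hneg : ∀ (f : PowerSeries ℂ) (k : ℤ), k < 0 → (ι f).coeff k = 0 := by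
    intro f k hk
    rw [hιdef, HahnSeries.ofPowerSeries_apply]
    apply HahnSeries.embDomain_notin_range
    rintro ⟨m, hm⟩
    have hm' : (m : ℤ) = k := hm
    omega
  have hzX : z * ι PowerSeries.X = 1 := by
    rw [hιdef, HahnSeries.ofPowerSeries_X, hzdef, HahnSeries.single_mul_single,
      neg_add_cancel, one_mul, HahnSeries.single_zero_one]
  set φ : Polynomial ℂ →+* LaurentSeries ℂ := (Polynomial.aeval g).toRingHom with hφdef
  set bt : ℕ → LaurentSeries ℂ :=
    fun j => φ (if j = 1 then Polynomial.C (b 1) - Polynomial.X else Polynomial.C (b j))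
    with hbtdef
  have hstep1 : Polynomial.aeval g (faberPhi b n) = faberQ bt n := by
    rw [faberPhi]
    exact faberQ_map φ _ n
  -- the factorization `hSeries bt = (1 - z·Y)·E`
  set Ebar : PowerSeries (PowerSeries ℂ) := hSeries (auxE b) with hEbardef
  set E : PowerSeries (LaurentSeries ℂ) := PowerSeries.map ι Ebar with hEdef
  set Einv : PowerSeries (LaurentSeries ℂ) := PowerSeries.map ι (Ebar.invOfUnit 1) with hEinvdef
  set G : PowerSeries (LaurentSeries ℂ) := PowerSeries.mk (fun m => z ^ m) with hGdef
  have hEcoeff : ∀ k : ℕ, PowerSeries.coeff k E = ι (if k = 0 then 1 else auxE b k) := by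
    intro k
    rw [hEdef, PowerSeries.coeff_map, hEbardef, hSeries, PowerSeries.coeff_mk]
  have halg : ∀ c : ℂ, algebraMap ℂ (LaurentSeries ℂ) c = ι (PowerSeries.C c) := by
    intro c
    rw [hιdef, HahnSeries.algebraMap_apply']
    congr 1
  have hfact : hSeries bt =
      (1 - PowerSeries.C z * PowerSeries.X) * E := by
    have hexp : (1 - PowerSeries.C z * PowerSeries.X) * E
        = E - PowerSeries.C z * (PowerSeries.X * E) := by ring
    rw [hexp]
    refine PowerSeries.ext fun k => ?_
    rw [map_sub, PowerSeries.coeff_C_mul]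
    cases k with
    | zero =>
        rw [hEcoeff 0, PowerSeries.coeff_zero_X_mul, mul_zero, sub_zero, if_pos rfl, map_one]
        simp [hSeries]
    | succ k =>
        rw [PowerSeries.coeff_succ_X_mul, hEcoeff (k + 1), hEcoeff k]
        have hL : (PowerSeries.coeff (k + 1)) (hSeries bt) = bt (k + 1) := by
          simp [hSeries]
        rw [hL]
        cases k with
        | zero =>
            -- degree-1 coefficient : `b₁ - g = ι(auxE b 1) - z`
            have hb1 : bt 1 = algebraMap ℂ (LaurentSeries ℂ) (b 1) - g := by
              simp [hbtdef, hφdef]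
            have hg' : g = z + ι (auxR b 0) := by
              rw [hgdef, hSeries_eq b, map_add, map_one, map_mul, mul_add, mul_one,
                ← mul_assoc, hzX, one_mul]
            have hE1' : auxE b (0 + 1) = PowerSeries.C (b 1) - auxR b 0 := by
              rw [auxE]; linear_combination auxR_succ b 0
            rw [if_neg (by omega : ¬(0 + 1 = 0)), if_pos rfl, map_one, mul_one, hb1, hg',
              halg, hE1', map_sub]
            ring
        | succ k =>
            -- degree ≥ 2 coefficient : `b_{k+2} = ι(auxE b (k+2)) - z·ι(auxE b (k+1))`
            have hb : bt (k + 1 + 1) = algebraMap ℂ (LaurentSeries ℂ) (b (k + 1 + 1)) := by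
              simp [hbtdef, hφdef, (show k + 1 + 1 ≠ 1 by omega)]
            have hEk1 : z * ι (auxE b (k + 1)) = -ι (auxR b (k + 1)) := by
              have hx : ι (auxE b (k + 1)) = -(ι PowerSeries.X * ι (auxR b (k + 1))) := by
                rw [auxE, map_neg, map_mul]
              rw [hx]
              linear_combination (-ι (auxR b (k + 1))) * hzX
            have hrec : auxE b (k + 1 + 1) + auxR b (k + 1) = PowerSeries.C (b (k + 1 + 1)) := by
              rw [auxE]; linear_combination auxR_succ b (k + 1)
            rw [if_neg (by omega : ¬(k + 1 + 1 = 0)), if_neg (by omega : ¬(k + 1 = 0)),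
              hb, halg, hEk1, sub_neg_eq_add, ← map_add, hrec]
  have hccbt : PowerSeries.constantCoeff (hSeries bt) = 1 := constantCoeff_hSeries bt
  have hccEbar : PowerSeries.constantCoeff Ebar = 1 := by
    rw [hEbardef]; exact constantCoeff_hSeries _
  have hE1 : E * Einv = 1 := by
    rw [hEdef, hEinvdef, ← map_mul, PowerSeries.mul_invOfUnit _ 1 (by simp [hccEbar]), map_one]
  have hG1 : (1 - PowerSeries.C z * PowerSeries.X) * G = 1 := geom_series z
  have hHinv : (hSeries bt).invOfUnit 1 = G * Einv := by
    apply invOfUnit_unique hccbt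
    rw [hfact]
    calc (1 - PowerSeries.C z * PowerSeries.X) * E * (G * Einv)
        = ((1 - PowerSeries.C z * PowerSeries.X) * G) * (E * Einv) := by ring
      _ = 1 := by rw [hG1, hE1, mul_one]
  have hder1 : PowerSeries.derivativeFun
      (1 - PowerSeries.C z * PowerSeries.X)
      = -(PowerSeries.C z) := by
    refine PowerSeries.ext fun j => ?_
    erw [PowerSeries.coeff_derivativeFun, map_sub, PowerSeries.coeff_C_mul]
    cases j with
    | zero => simp
    | succ i => simp [PowerSeries.coeff_one, PowerSeries.coeff_X, PowerSeries.coeff_C]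
  have hH' : PowerSeries.derivativeFun (hSeries bt)
      = (1 - PowerSeries.C z * PowerSeries.X) * E.derivativeFun
        - PowerSeries.C z * E := by
    rw [hfact, PowerSeries.derivativeFun_mul, hder1, smul_eq_mul, smul_eq_mul]
    ring
  have hmapD : PowerSeries.map ι
        (PowerSeries.X * Ebar.derivativeFun * Ebar.invOfUnit 1)
      = PowerSeries.X * E.derivativeFun * Einv := by
    rw [map_mul, map_mul, PowerSeries.map_X, map_derivativeFun, hEdef, hEinvdef]
  have main : -(PowerSeries.X * (hSeries bt).derivativeFun) * (hSeries bt).invOfUnit 1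
      = PowerSeries.C z * PowerSeries.X * G -
        PowerSeries.map ι (PowerSeries.X * Ebar.derivativeFun * Ebar.invOfUnit 1) := by
    rw [hHinv, hH', hmapD]
    linear_combination (-(PowerSeries.X * E.derivativeFun * Einv)) * hG1 +
      (PowerSeries.C z * PowerSeries.X * G) * hE1
  obtain ⟨k, rfl⟩ : ∃ k, n = k + 1 := ⟨n - 1, by omega⟩
  set d : PowerSeries ℂ :=
    PowerSeries.coeff (k + 1) (PowerSeries.X * Ebar.derivativeFun * Ebar.invOfUnit 1)
    with hddef
  have hQ : faberQ bt (k + 1) = z ^ (k + 1) - ι d := by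
    rw [faberQ, main, map_sub, PowerSeries.coeff_map, ← hddef, mul_assoc,
      PowerSeries.coeff_C_mul, PowerSeries.coeff_succ_X_mul, hGdef, PowerSeries.coeff_mk]
    ring_nf
  have hd0 : PowerSeries.constantCoeff d = 0 := by
    have hmapEbar : PowerSeries.map (PowerSeries.constantCoeff (R := ℂ)) Ebar = 1 := by
      refine PowerSeries.ext fun j => ?_
      cases j with
      | zero => simp [hEbardef, PowerSeries.coeff_map, hSeries]
      | succ i =>
          simp [hEbardef, PowerSeries.coeff_map, hSeries, PowerSeries.coeff_one, auxE]
    have h1 : PowerSeries.constantCoeff d = PowerSeries.coeff (k + 1)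
        (PowerSeries.map (PowerSeries.constantCoeff (R := ℂ))
          (PowerSeries.X * Ebar.derivativeFun * Ebar.invOfUnit 1)) := by
      rw [PowerSeries.coeff_map, hddef]
    have h2 : PowerSeries.map (PowerSeries.constantCoeff (R := ℂ))
        (PowerSeries.X * Ebar.derivativeFun * Ebar.invOfUnit 1) = 0 := by
      rw [map_mul, map_mul, PowerSeries.map_X, map_derivativeFun, hmapEbar,
        PowerSeries.derivativeFun_one, mul_zero, zero_mul]
    rw [h1, h2, map_zero]
  have hzpow : z ^ (k + 1) = HahnSeries.single (-((k : ℤ) + 1)) (1 : ℂ) := by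
    rw [hzdef, HahnSeries.single_pow, one_pow]
    congr 1
    push_cast [nsmul_eq_mul]
    ring
  constructor
  · rw [hstep1, hQ, HahnSeries.coeff_sub, hzpow]
    have h1 : (HahnSeries.single (-((k : ℤ) + 1)) (1 : ℂ)).coeff (-((k + 1 : ℕ) : ℤ)) = 1 := by
      have : (-((k + 1 : ℕ) : ℤ)) = -((k : ℤ) + 1) := by push_cast; ring
      rw [this, HahnSeries.coeff_single_same]
    rw [h1, hneg d _ (by push_cast; omega), sub_zero]
  · intro m hm
    rw [hstep1, hQ, HahnSeries.coeff_sub, hzpow]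
    have h1 : (HahnSeries.single (-((k : ℤ) + 1)) (1 : ℂ)).coeff (-(m : ℤ)) = 0 := by
      apply HahnSeries.coeff_single_of_ne
      intro h
      omega
    rw [h1, zero_sub, neg_eq_zero]
    rcases Nat.eq_zero_or_pos m with hm0 | hm1
    · subst hm0
      have : (-(((0 : ℕ) : ℤ))) = (((0 : ℕ) : ℤ)) := by norm_num
      rw [this, hιdef, HahnSeries.ofPowerSeries_apply_coeff,
        PowerSeries.coeff_zero_eq_constantCoeff_apply, hd0]
    · exact hneg d _ (by push_cast; omega)
end

section
/- Let R be a commutative ring, f(ξ) = ∑_{n≥0} A_n ξ^n a formal power series over R, and θ(z) = ∑_{j≥1} c_j z^j a formal power series over R with zero constant term. Then for every n ≥ 0, the coefficient of z^n in the composition f(θ(z)) equals ∑_{m: ‖m‖ = n} A_{|m|} · (|m|!/∏_j m_j!) · c^m, where the sum is over all finitely supported sequences m = (m_1, m_2, …) of nonnegative integers with ‖m‖ = n (the coefficient |m|!/∏_j m_j! is the multinomial coefficient, an integer). -/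
open PowerSeries Finset

/-- Formal composition `f(θ(z))` of power series, for `θ` with zero constant term:
the `n`-th coefficient of `∑ₖ Aₖ θᵏ`. Only terms with `k ≤ n` contribute when the
constant term of `θ` vanishes. -/
noncomputable def compPS {R : Type*} [CommRing R] (f θ : PowerSeries R) : PowerSeries R :=
  PowerSeries.mk fun n => ∑ k ∈ Finset.range (n + 1),
    PowerSeries.coeff k f * PowerSeries.coeff n (θ ^ k)

private lemma mult_subset_eq {s t : Finset ℕ} {f : ℕ → ℕ} (h : t ⊆ s)
    (h' : ∀ i ∈ s, i ∉ t → f i = 0) : Nat.multinomial s f = Nat.multinomial t f := by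
  have hp : ∏ i ∈ s, (f i).factorial = ∏ i ∈ t, (f i).factorial := by
    refine (Finset.prod_subset h fun i hi hit => ?_).symm
    rw [h' i hi hit, Nat.factorial_zero]
  have hs : ∑ i ∈ s, f i = ∑ i ∈ t, f i :=
    (Finset.sum_subset h fun i hi hit => h' i hi hit).symm
  have := Nat.multinomial_spec (s := s) (f := f)
  rw [hp, hs, ← Nat.multinomial_spec (s := t) (f := f)] at this
  exact Nat.eq_of_mul_eq_mul_left (Finset.prod_pos fun i _ => Nat.factorial_pos _) this

private lemma coeff_theta_pow {R : Type*} [CommRing R] (c : ℕ → R) (n k : ℕ) :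
    PowerSeries.coeff n ((PowerSeries.mk fun j => if j = 0 then 0 else c j) ^ k) =
      PowerSeries.coeff n ((∑ j ∈ Icc 1 n, PowerSeries.C (c j) * X ^ j) ^ k) := by
  have hA : ∀ d ≤ n, PowerSeries.coeff d (∑ j ∈ Icc 1 n, PowerSeries.C (c j) * X ^ j)
      = if d = 0 then 0 else c d := by
    intro d hd
    rw [map_sum]
    simp only [coeff_C_mul, coeff_X_pow, mul_ite, mul_one, mul_zero]
    rw [Finset.sum_ite_eq (Icc 1 n) d c]
    rcases Nat.eq_zero_or_pos d with rfl | hdpos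
    · simp
    · rw [if_pos (mem_Icc.2 ⟨hdpos, hd⟩), if_neg hdpos.ne']
  rw [coeff_pow, coeff_pow]
  refine Finset.sum_congr rfl fun l hl => Finset.prod_congr rfl fun i hi => ?_
  have hmem := (mem_finsuppAntidiag.1 hl)
  have hle : l i ≤ n := by
    rw [← hmem.1]
    exact Finset.single_le_sum (fun _ _ => Nat.zero_le _) hi
  rw [hA _ hle, coeff_mk]

private lemma coeff_trunc_pow {R : Type*} [CommRing R] (c : ℕ → R) (n k : ℕ) :
    PowerSeries.coeff n ((∑ j ∈ Icc 1 n, PowerSeries.C (c j) * X ^ j) ^ k) =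
      ∑ g ∈ piAntidiag (Icc 1 n) k, (Nat.multinomial (Icc 1 n) g : R) *
        ((∏ j ∈ Icc 1 n, c j ^ g j) * if (∑ j ∈ Icc 1 n, j * g j) = n then 1 else 0) := by
  rw [Finset.sum_pow_eq_sum_piAntidiag, map_sum]
  refine Finset.sum_congr rfl fun g hg => ?_
  have h1 : ∏ j ∈ Icc 1 n, (PowerSeries.C (c j) * X ^ j) ^ g j
      = PowerSeries.C (∏ j ∈ Icc 1 n, c j ^ g j) * X ^ (∑ j ∈ Icc 1 n, j * g j) := by
    simp_rw [mul_pow, ← pow_mul, ← map_pow]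
    rw [Finset.prod_mul_distrib, ← map_prod, Finset.prod_pow_eq_pow_sum]
  rw [h1, ← mul_assoc, ← map_natCast PowerSeries.C (Nat.multinomial (Icc 1 n) g),
    ← map_mul, coeff_C_mul, coeff_X_pow]
  rcases eq_or_ne (∑ j ∈ Icc 1 n, j * g j) n with h | h
  · rw [if_pos h.symm, if_pos h]; ring
  · rw [if_neg (Ne.symm h), if_neg h]; ring


/-- For `f(ξ) = ∑_{k≥0} Aₖ ξᵏ` and `θ(z) = ∑_{j≥1} cⱼ zʲ` (zero constant term) over a
commutative ring, the coefficient of `zⁿ` in `f(θ(z))` equals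
`∑_{m : ‖m‖ = n} A_{|m|} · (|m|!/∏ⱼ mⱼ!) · c^m`, the sum being over finitely
supported sequences `m = (m₁, m₂, …)` of nonnegative integers (i.e. `m 0 = 0`)
with `‖m‖ = ∑ j·mⱼ = n`; `|m|!/∏ mⱼ!` is the (integer) multinomial coefficient. -/
theorem coeff_comp_multinomial {R : Type*} [CommRing R] (A c : ℕ → R) (n : ℕ) :
    PowerSeries.coeff n
        (compPS (PowerSeries.mk A) (PowerSeries.mk fun j => if j = 0 then 0 else c j)) =
      ∑ᶠ (m : ℕ →₀ ℕ) (_ : m 0 = 0 ∧ (m.sum fun j e => j * e) = n),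
        m.multinomial • (A (m.sum fun _ e => e) * ∏ j ∈ m.support, c j ^ m j) := by
  classical
  set P : (ℕ →₀ ℕ) → Prop := fun m => m 0 = 0 ∧ (m.sum fun j e => j * e) = n with hP
  set G : (ℕ →₀ ℕ) → R := fun m =>
    m.multinomial • (A (m.sum fun _ e => e) * ∏ j ∈ m.support, c j ^ m j) with hG
  set T : Finset (ℕ →₀ ℕ) := (range (n + 1)).biUnion (fun k => finsuppAntidiag (Icc 1 n) k)
    with hT
  -- RHS as a finite sum
  have hRHS : (∑ᶠ (m : ℕ →₀ ℕ) (_ : P m), G m) = ∑ m ∈ T, if P m then G m else 0 := by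
    have h1 : ∀ m : ℕ →₀ ℕ, (∑ᶠ (_ : P m), G m) = if P m then G m else 0 :=
      fun m => finsum_eq_if
    rw [finsum_congr h1]
    refine finsum_eq_sum_of_support_subset _ fun m hm => ?_
    simp only [Function.mem_support, ne_eq, ite_eq_right_iff, not_forall] at hm
    obtain ⟨⟨hm0, hmn⟩, -⟩ := hm
    have hsupp : m.support ⊆ Icc 1 n := by
      intro j hj
      have hj0 : j ≠ 0 := by
        rintro rfl
        exact (Finsupp.mem_support_iff.1 hj) hm0
      have hjle : j ≤ n := by
        calc j ≤ j * m j := Nat.le_mul_of_pos_right j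
                (Nat.pos_of_ne_zero (Finsupp.mem_support_iff.1 hj))
          _ ≤ m.sum fun j e => j * e :=
              Finset.single_le_sum (f := fun j => j * m j) (fun _ _ => Nat.zero_le _) hj
          _ = n := hmn
      exact mem_Icc.2 ⟨Nat.one_le_iff_ne_zero.2 hj0, hjle⟩
    have hk : ∑ j ∈ Icc 1 n, m j ≤ n := by
      calc ∑ j ∈ Icc 1 n, m j ≤ ∑ j ∈ Icc 1 n, j * m j :=
            Finset.sum_le_sum fun j hj =>
              Nat.le_mul_of_pos_left (m j) (mem_Icc.1 hj).1
        _ = m.sum fun j e => j * e := by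
            rw [Finsupp.sum_of_support_subset m hsupp _ (fun j _ => mul_zero j)]
        _ = n := hmn
    simp only [hT, Finset.coe_biUnion, Set.mem_iUnion, Finset.mem_coe]
    exact ⟨∑ j ∈ Icc 1 n, m j, Finset.mem_range.2 (Nat.lt_succ_of_le hk),
      mem_finsuppAntidiag.2 ⟨rfl, hsupp⟩⟩
  rw [hRHS]
  -- disjointness to split sum over T
  have hdisj : (↑(range (n + 1)) : Set ℕ).PairwiseDisjoint
      (fun k => finsuppAntidiag (Icc 1 n) k) := by
    intro k _ k' _ hkk'
    simp only [Finset.disjoint_left]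
    intro m hm hm'
    exact hkk' ((mem_finsuppAntidiag.1 hm).1.symm.trans (mem_finsuppAntidiag.1 hm').1)
  rw [hT, Finset.sum_biUnion hdisj]
  -- LHS
  show (PowerSeries.coeff n) (PowerSeries.mk fun n => ∑ k ∈ Finset.range (n + 1),
    PowerSeries.coeff k (PowerSeries.mk A) *
      PowerSeries.coeff n ((PowerSeries.mk fun j => if j = 0 then 0 else c j) ^ k)) = _
  rw [coeff_mk]
  refine Finset.sum_congr rfl fun k hk => ?_
  rw [coeff_mk, coeff_theta_pow, coeff_trunc_pow, Finset.mul_sum]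
  -- now a bijection between piAntidiag and finsuppAntidiag
  refine (Finset.sum_bij' (i := fun (m : ℕ →₀ ℕ) (_ : m ∈ finsuppAntidiag (Icc 1 n) k) => ⇑m)
    (j := fun (g : ℕ → ℕ) (hg : g ∈ piAntidiag (Icc 1 n) k) =>
      (⟨(Icc 1 n).filter (g · ≠ 0), g, fun a => by
        have := (mem_piAntidiag.1 hg).2 a
        simp only [Finset.mem_filter, ne_eq]
        tauto⟩ : ℕ →₀ ℕ))
    ?_ ?_ ?_ ?_ ?_).symm
  · intro m hm
    obtain ⟨h1, h2⟩ := mem_finsuppAntidiag.1 hm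
    exact mem_piAntidiag.2 ⟨h1, fun i hi => h2 (Finsupp.mem_support_iff.2 hi)⟩
  · intro g hg
    refine mem_finsuppAntidiag.2 ⟨(mem_piAntidiag.1 hg).1, ?_⟩
    intro a ha
    exact (Finset.mem_filter.1 (Finsupp.mem_support_iff.2 (Finsupp.mem_support_iff.1 ha))).1
  · intro m hm
    ext a
    rfl
  · intro g hg
    rfl
  · -- value equality
    intro m hm
    obtain ⟨hsum, hsupp⟩ := mem_finsuppAntidiag.1 hm
    have hm0 : m 0 = 0 := by
      by_contra h
      have := hsupp (Finsupp.mem_support_iff.2 h)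
      simp at this
    have hw : (m.sum fun j e => j * e) = ∑ j ∈ Icc 1 n, j * m j :=
      Finsupp.sum_of_support_subset m hsupp _ (fun j _ => mul_zero j)
    have hks : (m.sum fun _ e => e) = k := by
      rw [Finsupp.sum_of_support_subset m hsupp _ (fun j _ => rfl), hsum]
    have hmult : (m.multinomial : ℕ) = Nat.multinomial (Icc 1 n) ⇑m := by
      rw [Finsupp.multinomial_eq]
      exact (mult_subset_eq hsupp fun i _ hi => Finsupp.notMem_support_iff.1 hi).symm
    have hprod : (∏ j ∈ m.support, c j ^ m j) = ∏ j ∈ Icc 1 n, c j ^ m j :=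
      Finset.prod_subset hsupp fun j _ hj => by
        rw [Finsupp.notMem_support_iff.1 hj, pow_zero]
    have hPm : P m ↔ (∑ j ∈ Icc 1 n, j * m j) = n := by
      rw [hP]
      simp only [hm0, true_and, hw]
    simp only [hG, hPm, hks, hmult, hprod, nsmul_eq_mul]
    split_ifs with h
    · ring
    · ring
end

section
/- Let φ(z) = 1 + ∑_{j≥1} c_j z^j and ψ(z) = ∑_{j≥1} α_j c_j z^j be formal power series over ℂ (c_j, α_j ∈ ℂ), let k ≥ 1 be an integer and p ∈ ℂ, and set φ(z)^p := exp(p·log φ(z)). Then for every n ≥ 0, the coefficient of z^n in ψ(z)^k φ(z)^p equals k! · ∑_{m: ‖m‖ = n} (∏_{i=0}^{|m|−k−1}(p−i)) · W_k(m) · c^m / ∏_j m_j!, where W_k(m) denotes the coefficient of s^k in ∏_j (1+α_j s)^{m_j} (equivalently W_k(m) = 𝒫_k(T_1, …, T_k) with T_i = (−1)^i ∑_j m_j α_j^i); here ∏_{i=0}^{|m|−k−1}(p−i) = p(p−1)⋯(p+k−|m|+1) is the falling factorial with |m|−k factors, understood as 1 when |m| = k, and W_k(m) = 0 when k > |m|,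 so terms with |m| < k vanish. -/
open PowerSeries Finset

noncomputable def expPS {R : Type*} [CommRing R] [Algebra ℚ R] (u : PowerSeries R) :
    PowerSeries R :=
  PowerSeries.mk fun n => ∑ k ∈ Finset.range (n + 1),
    ((k.factorial : ℚ)⁻¹ : ℚ) • PowerSeries.coeff n (u ^ k)

/-- Formal logarithm `log(1 + u)` (for `u` with zero constant term). -/
noncomputable def logOneAddPS {R : Type*} [CommRing R] [Algebra ℚ R] (u : PowerSeries R) :
    PowerSeries R :=
  PowerSeries.mk fun n => ∑ k ∈ Finset.range (n + 1),
    (((-1 : ℚ) ^ (k + 1) / k) : ℚ) • PowerSeries.coeff n (u ^ k)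

/-- Complex power `(1 + u)^p := exp(p·log(1+u))` for `u` with zero constant term. -/
noncomputable def onePlusPow (u : PowerSeries ℂ) (p : ℂ) : PowerSeries ℂ :=
  expPS (PowerSeries.C p * logOneAddPS u)

/-- `W_k(m)`: the coefficient of `sᵏ` in `∏ⱼ (1 + αⱼ s)^{mⱼ}`
(equivalently `𝒫ₖ(T₁,…,Tₖ)` with `Tᵢ = (−1)ᶦ ∑ⱼ mⱼ αⱼⁱ`). -/
noncomputable def Wcoeff (α : ℕ → ℂ) (m : ℕ →₀ ℕ) (k : ℕ) : ℂ :=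
  PowerSeries.coeff k (∏ j ∈ m.support, (1 + PowerSeries.C (α j) * PowerSeries.X) ^ m j)

/-! ### auxiliary: falling factorial coefficients -/

noncomputable def ffc (p : ℂ) (r : ℕ) : ℂ := ∏ i ∈ Finset.range r, (p - i)

noncomputable def bbc (p : ℂ) (r : ℕ) : ℂ := ffc p r / r.factorial

lemma bbc_zero (p : ℂ) : bbc p 0 = 1 := by simp [bbc, ffc]

lemma bbc_succ (p : ℂ) (j : ℕ) : ((j : ℂ) + 1) * bbc p (j + 1) = (p - j) * bbc p j := by
  have h1 : ((j + 1).factorial : ℂ) = (j + 1) * (j.factorial : ℂ) := by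
    rw [Nat.factorial_succ]; push_cast; ring
  have h2 : ffc p (j + 1) = ffc p j * (p - j) := by
    simp [ffc, Finset.prod_range_succ]
  have hj : ((j : ℂ) + 1) ≠ 0 := Nat.cast_add_one_ne_zero j
  have hf : (j.factorial : ℂ) ≠ 0 := by exact_mod_cast j.factorial_ne_zero
  rw [bbc, bbc, h1, h2]
  field_simp

/-! ### mkSum machinery -/

noncomputable def mkSum (e : ℕ → ℂ) (F : ℕ → PowerSeries ℂ) : PowerSeries ℂ :=
  PowerSeries.mk fun n => ∑ r ∈ Finset.range (n + 1), e r * PowerSeries.coeff n (F r)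

lemma coeff_pow_mul_eq_zero {v : PowerSeries ℂ} (hv : constantCoeff v = 0) (g : PowerSeries ℂ)
    {n k : ℕ} (h : n < k) : PowerSeries.coeff n (v ^ k * g) = 0 := by
  have hd : (X : PowerSeries ℂ) ^ k ∣ v ^ k * g :=
    Dvd.dvd.mul_right (pow_dvd_pow_of_dvd (X_dvd_iff.mpr hv) k) g
  exact X_pow_dvd_iff.mp hd n h

lemma coeff_pow_eq_zero {v : PowerSeries ℂ} (hv : constantCoeff v = 0)
    {n k : ℕ} (h : n < k) : PowerSeries.coeff n (v ^ k) = 0 := by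
  simpa using coeff_pow_mul_eq_zero hv 1 h

lemma coeff_mkSum (e : ℕ → ℂ) {F : ℕ → PowerSeries ℂ}
    (hF : ∀ r n, n < r → PowerSeries.coeff n (F r) = 0) {n N : ℕ} (h : n < N) :
    PowerSeries.coeff n (mkSum e F) = ∑ r ∈ Finset.range N, e r * PowerSeries.coeff n (F r) := by
  rw [mkSum, coeff_mk]
  apply Finset.sum_subset (Finset.range_subset_range.mpr h)
  intro r _ hr
  rw [Finset.mem_range, not_lt] at hr
  rw [hF r n (by omega), mul_zero]

lemma mul_mkSum (e : ℕ → ℂ) {F : ℕ → PowerSeries ℂ}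
    (hF : ∀ r n, n < r → PowerSeries.coeff n (F r) = 0) (g : PowerSeries ℂ) :
    g * mkSum e F = mkSum e (fun r => g * F r) := by
  ext n
  rw [coeff_mul]
  conv_rhs => rw [mkSum, coeff_mk]
  have : ∀ ab ∈ antidiagonal n, PowerSeries.coeff ab.1 g * PowerSeries.coeff ab.2 (mkSum e F)
      = ∑ r ∈ Finset.range (n + 1), e r *
        (PowerSeries.coeff ab.1 g * PowerSeries.coeff ab.2 (F r)) := by
    intro ab hab
    rw [Finset.HasAntidiagonal.mem_antidiagonal] at hab
    rw [coeff_mkSum e hF (show ab.2 < n + 1 by omega), Finset.mul_sum]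
    exact Finset.sum_congr rfl fun r _ => by ring
  rw [Finset.sum_congr rfl this, Finset.sum_comm]
  exact Finset.sum_congr rfl fun r _ => by rw [coeff_mul, Finset.mul_sum]

lemma expPS_eq_mkSum (v : PowerSeries ℂ) :
    expPS v = mkSum (fun k => ((k.factorial : ℂ))⁻¹) (fun k => v ^ k) := by
  ext n
  rw [expPS, coeff_mk, mkSum, coeff_mk]
  refine Finset.sum_congr rfl fun k _ => ?_
  rw [Rat.smul_def]
  push_cast
  ring

lemma logOneAddPS_eq_mkSum (v : PowerSeries ℂ) :
    logOneAddPS v = mkSum (fun k => ((-1 : ℂ)) ^ (k + 1) / k) (fun k => v ^ k) := by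
  ext n
  rw [logOneAddPS, coeff_mk, mkSum, coeff_mk]
  refine Finset.sum_congr rfl fun k _ => ?_
  rw [Rat.smul_def]
  push_cast
  ring

/-! ### derivative computations -/

lemma fact_succ_inv (i : ℕ) (z : ℂ) :
    (((i+1).factorial : ℂ))⁻¹ * (((i : ℂ) + 1) * z) = ((i.factorial : ℂ))⁻¹ * z := by
  have h1 : (((i+1).factorial : ℂ)) = ((i:ℂ)+1) * (i.factorial : ℂ) := by
    rw [Nat.factorial_succ]; push_cast; ring
  have hj : ((i : ℂ) + 1) ≠ 0 := Nat.cast_add_one_ne_zero i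
  have hf : (i.factorial : ℂ) ≠ 0 := by exact_mod_cast i.factorial_ne_zero
  rw [h1]
  field_simp

lemma coeff_derivative_pow (v : PowerSeries ℂ) (k n : ℕ) :
    PowerSeries.coeff (n+1) (v ^ k) * ((n : ℂ) + 1)
      = (k : ℂ) * PowerSeries.coeff n (v ^ (k-1) * d⁄dX ℂ v) := by
  have h := (coeff_derivative (v ^ k) n).symm
  rw [h, Derivation.leibniz_pow]
  have : ((k : ℕ) • (v ^ (k-1) • d⁄dX ℂ v)) = (k : PowerSeries ℂ) * (v ^ (k-1) * d⁄dX ℂ v) := by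
    rw [smul_eq_mul, nsmul_eq_mul]
  rw [this, ← map_natCast PowerSeries.C k, coeff_C_mul]

lemma derivative_expPS {v : PowerSeries ℂ} (hv : constantCoeff v = 0) :
    d⁄dX ℂ (expPS v) = d⁄dX ℂ v * expPS v := by
  have hOrd : ∀ r n, n < r → PowerSeries.coeff n (v ^ r) = 0 :=
    fun r n h => coeff_pow_eq_zero hv h
  ext n
  rw [coeff_derivative, expPS_eq_mkSum, coeff_mkSum _ hOrd (show n+1 < n+2 by omega),
    Finset.sum_mul]
  have hterm : ∀ k ∈ Finset.range (n+2),
      ((k.factorial : ℂ))⁻¹ * PowerSeries.coeff (n+1) (v^k) * ((n:ℂ)+1)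
      = ((k.factorial : ℂ))⁻¹ * ((k:ℂ) * PowerSeries.coeff n (v ^ (k-1) * d⁄dX ℂ v)) := by
    intro k _
    rw [mul_assoc, coeff_derivative_pow]
  rw [Finset.sum_congr rfl hterm, Finset.sum_range_succ']
  simp only [Nat.cast_zero, zero_mul, mul_zero, add_zero, Nat.cast_succ, Nat.add_sub_cancel]
  rw [mul_mkSum _ hOrd, mkSum, coeff_mk]
  refine Finset.sum_congr rfl fun i _ => ?_
  rw [fact_succ_inv, mul_comm (v ^ i)]

lemma derivative_logOneAddPS {u : PowerSeries ℂ} (hu : constantCoeff u = 0) :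
    d⁄dX ℂ (logOneAddPS u) = mkSum (fun j => (-1 : ℂ)^j) (fun j => u ^ j * d⁄dX ℂ u) := by
  have hOrd : ∀ r n, n < r → PowerSeries.coeff n (u ^ r) = 0 :=
    fun r n h => coeff_pow_eq_zero hu h
  ext n
  rw [coeff_derivative, logOneAddPS_eq_mkSum, coeff_mkSum _ hOrd (show n+1 < n+2 by omega),
    Finset.sum_mul]
  have hterm : ∀ k ∈ Finset.range (n+2),
      (-1:ℂ)^(k+1)/k * PowerSeries.coeff (n+1) (u^k) * ((n:ℂ)+1)
      = (-1:ℂ)^(k+1)/k * ((k:ℂ) * PowerSeries.coeff n (u ^ (k-1) * d⁄dX ℂ u)) := by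
    intro k _
    rw [mul_assoc, coeff_derivative_pow]
  rw [Finset.sum_congr rfl hterm, Finset.sum_range_succ']
  simp only [Nat.cast_zero, zero_mul, mul_zero, add_zero, Nat.cast_succ, Nat.add_sub_cancel]
  rw [mkSum, coeff_mk]
  refine Finset.sum_congr rfl fun i _ => ?_
  have hi : ((i : ℂ) + 1) ≠ 0 := Nat.cast_add_one_ne_zero i
  have : (-1:ℂ)^(i+1+1) = (-1:ℂ)^i := by ring
  rw [this]
  field_simp

lemma one_add_mul_derivative_logOneAddPS {u : PowerSeries ℂ} (hu : constantCoeff u = 0) :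
    (1 + u) * d⁄dX ℂ (logOneAddPS u) = d⁄dX ℂ u := by
  have hOrd : ∀ r n, n < r → PowerSeries.coeff n (u ^ r * d⁄dX ℂ u) = 0 :=
    fun r n h => coeff_pow_mul_eq_zero hu _ h
  rw [derivative_logOneAddPS hu, add_mul, one_mul, mul_mkSum _ hOrd]
  ext n
  rw [map_add, coeff_mkSum _ hOrd n.lt_succ_self, mkSum, coeff_mk]
  have key : ∀ j ∈ Finset.range (n+1), (-1:ℂ)^j * PowerSeries.coeff n (u * (u ^ j * d⁄dX ℂ u))
      = -((-1:ℂ)^(j+1) * PowerSeries.coeff n (u ^ (j+1) * d⁄dX ℂ u)) := by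
    intro j _
    rw [show u * (u^j * d⁄dX ℂ u) = u^(j+1) * d⁄dX ℂ u by ring]
    ring
  rw [Finset.sum_congr rfl key, Finset.sum_neg_distrib]
  have h1 := Finset.sum_range_succ'
    (fun j => (-1:ℂ)^j * PowerSeries.coeff n (u^j * d⁄dX ℂ u)) (n+1)
  have h2 : ∑ j ∈ Finset.range (n+2), (-1:ℂ)^j * PowerSeries.coeff n (u^j * d⁄dX ℂ u)
      = ∑ j ∈ Finset.range (n+1), (-1:ℂ)^j * PowerSeries.coeff n (u^j * d⁄dX ℂ u) := by
    rw [Finset.sum_range_succ, hOrd (n+1) n (by omega)]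
    ring
  have h3 : PowerSeries.coeff n (u ^ 0 * d⁄dX ℂ u) = PowerSeries.coeff n (d⁄dX ℂ u) := by
    rw [pow_zero, one_mul]
  linear_combination h1 - h2 + h3

lemma constantCoeff_logOneAddPS (u : PowerSeries ℂ) :
    constantCoeff (logOneAddPS u) = 0 := by
  rw [logOneAddPS, constantCoeff_mk]
  simp

lemma ode_onePlusPow {u : PowerSeries ℂ} (hu : constantCoeff u = 0) (p : ℂ) :
    (1 + u) * d⁄dX ℂ (onePlusPow u p)
      = PowerSeries.C p * (d⁄dX ℂ u * onePlusPow u p) := by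
  have hw : constantCoeff (PowerSeries.C p * logOneAddPS u) = 0 := by
    rw [map_mul, constantCoeff_logOneAddPS, mul_zero]
  rw [onePlusPow, derivative_expPS hw]
  have hdw : d⁄dX ℂ (PowerSeries.C p * logOneAddPS u)
      = PowerSeries.C p * d⁄dX ℂ (logOneAddPS u) := by
    rw [Derivation.leibniz]
    simp [smul_eq_mul]
  rw [hdw]
  have hlog := one_add_mul_derivative_logOneAddPS hu
  linear_combination (PowerSeries.C p * expPS (PowerSeries.C p * logOneAddPS u)) * hlog

lemma derivative_mkSum_pow {u : PowerSeries ℂ} (hu : constantCoeff u = 0) (p : ℂ) :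
    d⁄dX ℂ (mkSum (bbc p) (fun r => u ^ r))
      = mkSum (fun j => ((j:ℂ)+1) * bbc p (j+1)) (fun j => u ^ j * d⁄dX ℂ u) := by
  have hOrd : ∀ r n, n < r → PowerSeries.coeff n (u ^ r) = 0 :=
    fun r n h => coeff_pow_eq_zero hu h
  ext n
  rw [coeff_derivative, coeff_mkSum _ hOrd (show n+1 < n+2 by omega), Finset.sum_mul]
  have hterm : ∀ k ∈ Finset.range (n+2),
      bbc p k * PowerSeries.coeff (n+1) (u^k) * ((n:ℂ)+1)
      = bbc p k * ((k:ℂ) * PowerSeries.coeff n (u ^ (k-1) * d⁄dX ℂ u)) := by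
    intro k _
    rw [mul_assoc, coeff_derivative_pow]
  rw [Finset.sum_congr rfl hterm, Finset.sum_range_succ']
  simp only [Nat.cast_zero, zero_mul, mul_zero, add_zero, Nat.cast_succ, Nat.add_sub_cancel]
  rw [mkSum, coeff_mk]
  refine Finset.sum_congr rfl fun i _ => ?_
  ring

lemma ode_mkSum_pow {u : PowerSeries ℂ} (hu : constantCoeff u = 0) (p : ℂ) :
    (1 + u) * d⁄dX ℂ (mkSum (bbc p) (fun r => u ^ r))
      = PowerSeries.C p * (d⁄dX ℂ u * mkSum (bbc p) (fun r => u ^ r)) := by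
  have hOrd : ∀ r n, n < r → PowerSeries.coeff n (u ^ r) = 0 :=
    fun r n h => coeff_pow_eq_zero hu h
  have hOrd2 : ∀ r n, n < r → PowerSeries.coeff n (u ^ r * d⁄dX ℂ u) = 0 :=
    fun r n h => coeff_pow_mul_eq_zero hu _ h
  rw [derivative_mkSum_pow hu p, add_mul, one_mul, mul_mkSum _ hOrd2, mul_mkSum _ hOrd]
  ext n
  rw [map_add, coeff_mkSum _ hOrd2 n.lt_succ_self, coeff_C_mul,
    coeff_mkSum (e := bbc p) (F := fun r => d⁄dX ℂ u * u ^ r)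
      (fun r m h => by
        show PowerSeries.coeff m (d⁄dX ℂ u * u ^ r) = 0
        rw [mul_comm]; exact coeff_pow_mul_eq_zero hu _ h) n.lt_succ_self,
    mkSum, coeff_mk, Finset.mul_sum]
  set t : ℕ → ℂ := fun j => PowerSeries.coeff n (u ^ j * d⁄dX ℂ u) with ht
  have hsnd : ∑ j ∈ Finset.range (n+1),
      ((j:ℂ)+1) * bbc p (j+1) * PowerSeries.coeff n (u * (u ^ j * d⁄dX ℂ u))
      = ∑ j ∈ Finset.range (n+1), ((j:ℂ) * bbc p j) * t j := by
    have h1 := Finset.sum_range_succ' (fun i : ℕ => (i:ℂ) * bbc p i * t i) (n+1)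
    have h2 : ∑ j ∈ Finset.range (n+2), (j:ℂ) * bbc p j * t j
        = ∑ j ∈ Finset.range (n+1), (j:ℂ) * bbc p j * t j := by
      rw [Finset.sum_range_succ, show t (n+1) = 0 from hOrd2 (n+1) n (by omega)]
      ring
    have h3 : ∀ j ∈ Finset.range (n+1),
        ((j:ℂ)+1) * bbc p (j+1) * PowerSeries.coeff n (u * (u ^ j * d⁄dX ℂ u))
        = (fun i : ℕ => (i:ℂ) * bbc p i * t i) (j+1) := by
      intro j _
      rw [show u * (u^j * d⁄dX ℂ u) = u^(j+1) * d⁄dX ℂ u by ring]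
      push_cast
      rfl
    rw [Finset.sum_congr rfl h3]
    linear_combination h2 - h1
  rw [hsnd, ← Finset.sum_add_distrib]
  refine Finset.sum_congr rfl fun j _ => ?_
  have hb := bbc_succ p j
  have : PowerSeries.coeff n (d⁄dX ℂ u * u ^ j) = t j := by rw [mul_comm]
  rw [this]
  linear_combination t j * hb

lemma ode_unique {u F G : PowerSeries ℂ} (hu : constantCoeff u = 0) (p : ℂ)
    (hF : (1 + u) * d⁄dX ℂ F = PowerSeries.C p * (d⁄dX ℂ u * F))
    (hG : (1 + u) * d⁄dX ℂ G = PowerSeries.C p * (d⁄dX ℂ u * G))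
    (h0 : PowerSeries.coeff 0 F = PowerSeries.coeff 0 G) : F = G := by
  have hu0 : PowerSeries.coeff 0 u = 0 := by
    rw [coeff_zero_eq_constantCoeff]; exact hu
  ext n
  induction n using Nat.strong_induction_on with
  | _ n ih =>
    match n, ih with
    | 0, _ => exact h0
    | (m+1), ih =>
      have e1 : PowerSeries.coeff m ((1+u) * d⁄dX ℂ F)
          = PowerSeries.coeff m (PowerSeries.C p * (d⁄dX ℂ u * F)) := by rw [hF]
      have e2 : PowerSeries.coeff m ((1+u) * d⁄dX ℂ G)
          = PowerSeries.coeff m (PowerSeries.C p * (d⁄dX ℂ u * G)) := by rw [hG]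
      have hins : PowerSeries.coeff m (u * d⁄dX ℂ F) = PowerSeries.coeff m (u * d⁄dX ℂ G) := by
        rw [coeff_mul, coeff_mul]
        refine Finset.sum_congr rfl fun ab hab => ?_
        rw [Finset.HasAntidiagonal.mem_antidiagonal] at hab
        rcases Nat.eq_zero_or_pos ab.1 with h|h
        · rw [h, hu0, zero_mul, zero_mul]
        · rw [coeff_derivative, coeff_derivative, ih (ab.2+1) (by omega)]
      have hrhs : PowerSeries.coeff m (PowerSeries.C p * (d⁄dX ℂ u * F))
          = PowerSeries.coeff m (PowerSeries.C p * (d⁄dX ℂ u * G)) := by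
        rw [coeff_C_mul, coeff_C_mul, coeff_mul, coeff_mul]
        congr 1
        refine Finset.sum_congr rfl fun ab hab => ?_
        rw [Finset.HasAntidiagonal.mem_antidiagonal] at hab
        rw [ih ab.2 (by omega)]
      have expand : ∀ H : PowerSeries ℂ, PowerSeries.coeff m ((1+u) * d⁄dX ℂ H)
          = PowerSeries.coeff (m+1) H * ((m:ℂ)+1) + PowerSeries.coeff m (u * d⁄dX ℂ H) := by
        intro H
        rw [add_mul, one_mul, map_add, coeff_derivative]
      rw [expand] at e1 e2
      have : PowerSeries.coeff (m+1) F * ((m:ℂ)+1)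
          = PowerSeries.coeff (m+1) G * ((m:ℂ)+1) := by
        linear_combination e1 - e2 - hins + hrhs
      exact mul_right_cancel₀ (Nat.cast_add_one_ne_zero m) this

lemma onePlusPow_eq_mkSum {u : PowerSeries ℂ} (hu : constantCoeff u = 0) (p : ℂ) :
    onePlusPow u p = mkSum (bbc p) (fun r => u ^ r) := by
  refine ode_unique hu p (ode_onePlusPow hu p) (ode_mkSum_pow hu p) ?_
  rw [onePlusPow, expPS, coeff_mk, mkSum, coeff_mk]
  simp [bbc_zero]

lemma coeff_onePlusPow {u : PowerSeries ℂ} (hu : constantCoeff u = 0) (p : ℂ) {n N : ℕ}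
    (h : n < N) :
    PowerSeries.coeff n (onePlusPow u p)
      = ∑ r ∈ Finset.range N, bbc p r * PowerSeries.coeff n (u ^ r) := by
  rw [onePlusPow_eq_mkSum hu p, coeff_mkSum _ (fun r m hh => coeff_pow_eq_zero hu hh) h]

/-! ### combinatorial part -/

lemma coeff_pow_congr {v T : PowerSeries ℂ} {d : ℕ}
    (h : ∀ i ≤ d, PowerSeries.coeff i v = PowerSeries.coeff i T) :
    ∀ (r : ℕ) {e : ℕ}, e ≤ d → PowerSeries.coeff e (v ^ r) = PowerSeries.coeff e (T ^ r) := by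
  intro r
  induction r with
  | zero => intro e _; rfl
  | succ r ih =>
    intro e he
    rw [pow_succ, pow_succ, coeff_mul, coeff_mul]
    refine Finset.sum_congr rfl fun ab hab => ?_
    rw [Finset.HasAntidiagonal.mem_antidiagonal] at hab
    rw [ih (by omega), h ab.2 (by omega)]

lemma coeff_mk_pow (g : ℕ → ℂ) (n d r : ℕ) (hd : d ≤ n) :
    PowerSeries.coeff d ((PowerSeries.mk fun j => if j = 0 then 0 else g j) ^ r) =
      ∑ f ∈ (Finset.Icc 1 n).piAntidiag r,
        if ∑ j ∈ Finset.Icc 1 n, j * f j = d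
        then (Nat.multinomial (Finset.Icc 1 n) f : ℂ) * ∏ j ∈ Finset.Icc 1 n, g j ^ f j
        else 0 := by
  classical
  set s := Finset.Icc 1 n with hs
  set T : PowerSeries ℂ := ∑ j ∈ s, PowerSeries.C (g j) * X ^ j with hT
  have hagree : ∀ i ≤ d,
      PowerSeries.coeff i (PowerSeries.mk fun j => if j = 0 then 0 else g j)
        = PowerSeries.coeff i T := by
    intro i hi
    rw [coeff_mk, hT, map_sum]
    have hterm : ∀ j ∈ s, PowerSeries.coeff i (PowerSeries.C (g j) * X ^ j)
        = if j = i then g j else 0 := by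
      intro j _
      rw [coeff_C_mul, coeff_X_pow]
      by_cases hji : j = i
      · simp [hji]
      · simp [hji, Ne.symm hji]
    rw [Finset.sum_congr rfl hterm, Finset.sum_ite_eq' s i g]
    by_cases h0 : i = 0
    · have : (0:ℕ) ∉ s := by simp [hs]
      simp [h0, this]
    · have : i ∈ s := by rw [hs]; rw [Finset.mem_Icc]; omega
      simp [h0, this]
  rw [coeff_pow_congr hagree r le_rfl, hT, Finset.sum_pow_eq_sum_piAntidiag, map_sum]
  refine Finset.sum_congr rfl fun f hf => ?_
  have hprod : ∏ j ∈ s, (PowerSeries.C (g j) * X ^ j) ^ f j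
      = PowerSeries.C (∏ j ∈ s, g j ^ f j) * X ^ (∑ j ∈ s, j * f j) := by
    calc ∏ j ∈ s, (PowerSeries.C (g j) * X ^ j) ^ f j
        = ∏ j ∈ s, (PowerSeries.C (g j ^ f j) * X ^ (j * f j)) := by
          refine Finset.prod_congr rfl fun j _ => ?_
          rw [mul_pow, ← map_pow, ← pow_mul]
      _ = _ := by
          rw [Finset.prod_mul_distrib, ← map_prod, Finset.prod_pow_eq_pow_sum]
  rw [hprod, ← map_natCast PowerSeries.C (Nat.multinomial s f), ← mul_assoc, ← map_mul,
    coeff_C_mul, coeff_X_pow]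
  by_cases hw : ∑ j ∈ s, j * f j = d
  · simp [hw]
  · simp [hw, Ne.symm hw]

lemma coeff_one_add_pow (a : ℂ) (t i : ℕ) :
    PowerSeries.coeff i ((1 + PowerSeries.C a * X) ^ t) = (t.choose i : ℂ) * a ^ i := by
  rw [show (1 + PowerSeries.C a * X) = (PowerSeries.C a * X + 1) by ring, add_pow, map_sum]
  have hterm : ∀ m ∈ Finset.range (t+1),
      PowerSeries.coeff i ((PowerSeries.C a * X)^m * 1^(t-m) * ((t.choose m : ℕ) : ℂ⟦X⟧))
        = if m = i then (t.choose i : ℂ) * a ^ i else 0 := by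
    intro m _
    have h1 : (PowerSeries.C a * X)^m * 1^(t-m) * ((t.choose m : ℕ) : ℂ⟦X⟧)
        = PowerSeries.C (a^m * (t.choose m : ℂ)) * X ^ m := by
      rw [one_pow, mul_one, mul_pow, ← map_pow, ← map_natCast PowerSeries.C (t.choose m),
        map_mul]
      ring
    rw [h1, coeff_C_mul, coeff_X_pow]
    by_cases him : m = i
    · subst him; simp [mul_comm]
    · simp [him, Ne.symm him]
  rw [Finset.sum_congr rfl hterm, Finset.sum_ite_eq']
  by_cases hit : i ∈ Finset.range (t+1)
  · simp [hit]
  · rw [if_neg hit]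
    rw [Finset.mem_range, not_lt] at hit
    rw [Nat.choose_eq_zero_of_lt (by omega), Nat.cast_zero, zero_mul]

lemma Wcoeff_eq (α : ℕ → ℂ) (n k : ℕ) (M : ℕ →₀ ℕ) (hsupp : M.support ⊆ Finset.Icc 1 n) :
    Wcoeff α M k = ∑ l ∈ (Finset.Icc 1 n).piAntidiag k,
      ∏ j ∈ Finset.Icc 1 n, (((M j).choose (l j) : ℂ) * α j ^ (l j)) := by
  classical
  set s := Finset.Icc 1 n with hs
  rw [Wcoeff, Finset.prod_subset hsupp (fun j _ hj => by
    rw [Finsupp.notMem_support_iff.mp hj, pow_zero]), coeff_prod]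
  refine Finset.sum_nbij' (fun l => (l : ℕ → ℕ))
    (fun f => Finsupp.onFinset s (fun j => if j ∈ s then f j else 0)
      (fun a ha => by by_contra hc; simp [hc] at ha)) ?_ ?_ ?_ ?_ ?_
  · intro l hl
    rw [Finset.mem_finsuppAntidiag] at hl
    rw [Finset.mem_piAntidiag]
    exact ⟨hl.1, fun i hi => hl.2 (Finsupp.mem_support_iff.mpr hi)⟩
  · intro f hf
    rw [Finset.mem_piAntidiag] at hf
    rw [Finset.mem_finsuppAntidiag]
    constructor
    · rw [← hf.1]
      refine Finset.sum_congr rfl fun j hj => ?_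
      simp [Finsupp.onFinset, hj]
    · exact Finsupp.support_onFinset_subset
  · intro l hl
    rw [Finset.mem_finsuppAntidiag] at hl
    ext j
    simp only [Finsupp.onFinset_apply]
    by_cases hj : j ∈ s
    · simp [hj]
    · simp only [hj, if_false]
      exact (Finsupp.notMem_support_iff.mp (fun hc => hj (hl.2 hc))).symm
  · intro f hf
    rw [Finset.mem_piAntidiag] at hf
    funext j
    simp only [Finsupp.onFinset_apply]
    by_cases hj : j ∈ s
    · simp [hj]
    · simp only [hj, if_false]
      by_contra hc
      exact hj (hf.2 j fun h => hc h.symm)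
  · intro l _
    refine Finset.prod_congr rfl fun j _ => ?_
    rw [coeff_one_add_pow]

lemma collapse_antidiag (n : ℕ) (X Y : ℂ) (a' b' : ℕ) :
    ∑ ab ∈ Finset.HasAntidiagonal.antidiagonal n, (if a' = ab.1 then X else 0) * (if b' = ab.2 then Y else 0)
      = if a' + b' = n then X * Y else 0 := by
  classical
  have h : ∀ ab ∈ Finset.HasAntidiagonal.antidiagonal n,
      (if a' = ab.1 then X else 0) * (if b' = ab.2 then Y else 0)
        = if ab = (a', b') then X * Y else 0 := by
    intro ab _
    rcases ab with ⟨x, y⟩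
    by_cases h1 : a' = x <;> by_cases h2 : b' = y
    · rw [if_pos h1, if_pos h2, if_pos (by rw [Prod.ext_iff]; exact ⟨h1.symm, h2.symm⟩)]
    · rw [if_pos h1, if_neg h2, mul_zero,
        if_neg (fun hc => h2 (congrArg Prod.snd hc).symm)]
    · rw [if_neg h1, zero_mul, if_neg (fun hc => h1 (congrArg Prod.fst hc).symm)]
    · rw [if_neg h1, zero_mul, if_neg (fun hc => h1 (congrArg Prod.fst hc).symm)]
  rw [Finset.sum_congr rfl h, Finset.sum_ite_eq' (Finset.HasAntidiagonal.antidiagonal n) (a', b')]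
  simp [Finset.HasAntidiagonal.mem_antidiagonal]

noncomputable local instance decEqPi : DecidableEq (ℕ → ℕ) := Classical.decEq _

lemma lhs_eq (c α : ℕ → ℂ) (k : ℕ) (p : ℂ) (n : ℕ) :
    PowerSeries.coeff n
        ((PowerSeries.mk fun j => if j = 0 then 0 else α j * c j) ^ k *
          onePlusPow (PowerSeries.mk fun j => if j = 0 then 0 else c j) p) =
    ∑ l ∈ (Finset.Icc 1 n).piAntidiag k,
      ∑ f ∈ (Finset.range (n+1)).biUnion (Finset.Icc 1 n).piAntidiag,
        if (∑ j ∈ Finset.Icc 1 n, j * l j) + (∑ j ∈ Finset.Icc 1 n, j * f j) = n then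
          ((Nat.multinomial (Finset.Icc 1 n) l : ℂ) * ∏ j ∈ Finset.Icc 1 n, (α j * c j) ^ l j) *
          (bbc p (∑ j ∈ Finset.Icc 1 n, f j) *
           ((Nat.multinomial (Finset.Icc 1 n) f : ℂ) * ∏ j ∈ Finset.Icc 1 n, c j ^ f j))
        else 0 := by
  classical
  set s := Finset.Icc 1 n with hs
  have hu : constantCoeff (PowerSeries.mk fun j => if j = 0 then 0 else c j) = 0 := by
    rw [constantCoeff_mk]; simp
  rw [coeff_mul]
  have hstep : ∀ ab ∈ Finset.HasAntidiagonal.antidiagonal n,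
      PowerSeries.coeff ab.1 ((PowerSeries.mk fun j => if j = 0 then 0 else α j * c j) ^ k) *
        PowerSeries.coeff ab.2 (onePlusPow (PowerSeries.mk fun j => if j = 0 then 0 else c j) p)
      = ∑ l ∈ s.piAntidiag k, ∑ r ∈ Finset.range (n+1), ∑ f ∈ s.piAntidiag r,
          (if (∑ j ∈ s, j * l j) = ab.1 then
            (Nat.multinomial s l : ℂ) * ∏ j ∈ s, (α j * c j) ^ l j else 0) *
          (if (∑ j ∈ s, j * f j) = ab.2 then
            bbc p r * ((Nat.multinomial s f : ℂ) * ∏ j ∈ s, c j ^ f j) else 0) := by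
    intro ab hab
    rw [Finset.HasAntidiagonal.mem_antidiagonal] at hab
    rw [coeff_mk_pow (fun j => α j * c j) n ab.1 k (by omega),
      coeff_onePlusPow hu p (show ab.2 < n + 1 by omega)]
    have hinner : ∀ r ∈ Finset.range (n+1),
        bbc p r * PowerSeries.coeff ab.2
          ((PowerSeries.mk fun j => if j = 0 then 0 else c j) ^ r)
        = ∑ f ∈ s.piAntidiag r, (if (∑ j ∈ s, j * f j) = ab.2 then
            bbc p r * ((Nat.multinomial s f : ℂ) * ∏ j ∈ s, c j ^ f j) else 0) := by
      intro r _
      rw [coeff_mk_pow c n ab.2 r (by omega), Finset.mul_sum]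
      refine Finset.sum_congr rfl fun f _ => ?_
      by_cases hw : (∑ j ∈ s, j * f j) = ab.2 <;> simp [hw, ← hs]
    rw [Finset.sum_congr rfl hinner, Finset.sum_mul]
    refine Finset.sum_congr rfl fun l _ => ?_
    rw [Finset.mul_sum]
    refine Finset.sum_congr rfl fun r _ => ?_
    rw [Finset.mul_sum]
  rw [Finset.sum_congr rfl hstep]
  rw [Finset.sum_comm]
  refine Finset.sum_congr rfl fun l _ => ?_
  rw [Finset.sum_comm]
  have hmerge : ∀ r ∈ Finset.range (n+1),
      ∑ ab ∈ Finset.HasAntidiagonal.antidiagonal n, ∑ f ∈ s.piAntidiag r,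
        (if (∑ j ∈ s, j * l j) = ab.1 then
          (Nat.multinomial s l : ℂ) * ∏ j ∈ s, (α j * c j) ^ l j else 0) *
        (if (∑ j ∈ s, j * f j) = ab.2 then
          bbc p r * ((Nat.multinomial s f : ℂ) * ∏ j ∈ s, c j ^ f j) else 0)
      = ∑ f ∈ s.piAntidiag r,
        if (∑ j ∈ s, j * l j) + (∑ j ∈ s, j * f j) = n then
          ((Nat.multinomial s l : ℂ) * ∏ j ∈ s, (α j * c j) ^ l j) *
          (bbc p (∑ j ∈ s, f j) * ((Nat.multinomial s f : ℂ) * ∏ j ∈ s, c j ^ f j))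
        else 0 := by
    intro r hr
    rw [Finset.sum_comm]
    refine Finset.sum_congr rfl fun f hf => ?_
    rw [collapse_antidiag]
    have : ∑ j ∈ s, f j = r := by
      rw [Finset.mem_piAntidiag] at hf
      exact hf.1
    rw [this]
  rw [Finset.sum_congr rfl hmerge]
  have hdisj : (↑(Finset.range (n+1)) : Set ℕ).PairwiseDisjoint s.piAntidiag := by
    intro r1 _ r2 _ hne
    simp only [Function.onFun]
    rw [Finset.disjoint_left]
    intro f h1 h2
    rw [Finset.mem_piAntidiag] at h1 h2
    exact hne (h1.1 ▸ h2.1)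
  rw [← Finset.sum_biUnion hdisj]

lemma reindex_sum (n k : ℕ) (Φ : (ℕ → ℕ) → (ℕ → ℕ) → ℂ) :
    ∑ l ∈ (Finset.Icc 1 n).piAntidiag k,
      ∑ f ∈ (Finset.range (n+1)).biUnion (Finset.Icc 1 n).piAntidiag,
        (if (∑ j ∈ Finset.Icc 1 n, j * l j) + (∑ j ∈ Finset.Icc 1 n, j * f j) = n
         then Φ l f else 0)
    = ∑ m ∈ ((Finset.range (n+1)).biUnion (Finset.Icc 1 n).piAntidiag).filter
          (fun m => ∑ j ∈ Finset.Icc 1 n, j * m j = n),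
        ∑ l ∈ (Finset.Icc 1 n).piAntidiag k,
          (if ∀ j ∈ Finset.Icc 1 n, l j ≤ m j then Φ l (m - l) else 0) := by
  set s := Finset.Icc 1 n with hs
  set BU := (Finset.range (n+1)).biUnion s.piAntidiag with hBUdef
  have hBU : ∀ f, f ∈ BU ↔ ((∑ j ∈ s, f j) ≤ n ∧ ∀ i, f i ≠ 0 → i ∈ s) := by
    intro f
    rw [hBUdef, Finset.mem_biUnion]
    constructor
    · rintro ⟨r, hr, hf⟩
      rw [Finset.mem_piAntidiag] at hf
      rw [Finset.mem_range] at hr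
      refine ⟨?_, hf.2⟩
      rw [hf.1]
      omega
    · rintro ⟨h1, h2⟩
      exact ⟨∑ j ∈ s, f j, by rw [Finset.mem_range]; omega,
        by rw [Finset.mem_piAntidiag]; exact ⟨rfl, h2⟩⟩
  have hσw : ∀ f : ℕ → ℕ, (∑ j ∈ s, f j) ≤ ∑ j ∈ s, j * f j := by
    intro f
    apply Finset.sum_le_sum
    intro j hj
    have h1 : 1 ≤ j := (Finset.mem_Icc.mp (hs ▸ hj)).1
    exact Nat.le_mul_of_pos_left _ h1
  rw [← Finset.sum_product' ((s.piAntidiag k)) BU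
    (fun l f => if (∑ j ∈ s, j * l j) + (∑ j ∈ s, j * f j) = n then Φ l f else 0),
    ← Finset.sum_filter]
  have hR : ∑ m ∈ BU.filter (fun m => ∑ j ∈ s, j * m j = n), ∑ l ∈ s.piAntidiag k,
        (if ∀ j ∈ s, l j ≤ m j then Φ l (m - l) else 0)
      = ∑ y ∈ ((BU.filter (fun m => ∑ j ∈ s, j * m j = n)) ×ˢ s.piAntidiag k).filter
          (fun y => ∀ j ∈ s, y.2 j ≤ y.1 j), Φ y.2 (y.1 - y.2) := by
    conv_rhs => rw [Finset.sum_filter]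
    exact (Finset.sum_product' _ _ _).symm
  refine Eq.trans ?_ hR.symm
  refine Finset.sum_nbij' (fun x => (x.1 + x.2, x.1)) (fun y => (y.2, y.1 - y.2))
    ?_ ?_ ?_ ?_ ?_
  · rintro ⟨l, f⟩ hx
    dsimp only at hx ⊢
    rw [Finset.mem_filter, Finset.mem_product] at hx
    obtain ⟨⟨hl, hf⟩, hcond⟩ := hx
    dsimp only at hl hf hcond ⊢
    rw [Finset.mem_piAntidiag] at hl
    rw [hBU] at hf
    have hwadd : ∑ j ∈ s, j * (l + f) j = (∑ j ∈ s, j * l j) + ∑ j ∈ s, j * f j := by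
      rw [← Finset.sum_add_distrib]
      exact Finset.sum_congr rfl fun j _ => by simp [Nat.mul_add]
    refine Finset.mem_filter.mpr ⟨Finset.mem_product.mpr ⟨Finset.mem_filter.mpr ⟨?_, ?_⟩, ?_⟩, ?_⟩
    · dsimp only
      rw [hBU]
      have hσadd : ∑ j ∈ s, (l + f) j = (∑ j ∈ s, l j) + ∑ j ∈ s, f j := by
        rw [← Finset.sum_add_distrib]; rfl
      refine ⟨?_, ?_⟩
      · have h2 := hσw l
        have h3 := hσw f
        omega
      · intro i hi
        have hor : l i ≠ 0 ∨ f i ≠ 0 := by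
          by_contra hc
          push_neg at hc
          apply hi
          show l i + f i = 0
          omega
        rcases hor with h|h
        · exact hl.2 i h
        · exact hf.2 i h
    · dsimp only
      rw [hwadd]
      exact hcond
    · dsimp only
      rw [Finset.mem_piAntidiag]
      exact hl
    · intro j _
      exact Nat.le_add_right _ _
  · rintro ⟨m, l⟩ hy
    dsimp only at hy ⊢
    rw [Finset.mem_filter, Finset.mem_product, Finset.mem_filter] at hy
    obtain ⟨⟨⟨hmBU, hmw⟩, hl⟩, hle⟩ := hy
    dsimp only at hmBU hmw hl hle ⊢
    rw [hBU] at hmBU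
    rw [Finset.mem_piAntidiag] at hl
    have hleall : ∀ j, l j ≤ m j := by
      intro j
      by_cases hj : j ∈ s
      · exact hle j hj
      · have h0 : l j = 0 := by
          by_contra hc
          exact hj (hl.2 j hc)
        omega
    have e1 : ∑ j ∈ s, j * (m - l) j = ∑ j ∈ s, (j * m j - j * l j) :=
      Finset.sum_congr rfl fun j _ => by simp [Nat.mul_sub]
    have e2 : ∑ j ∈ s, (j * m j - j * l j) = (∑ j ∈ s, j * m j) - ∑ j ∈ s, j * l j :=
      Finset.sum_tsub_distrib s fun j hj => Nat.mul_le_mul_left j (hle j hj)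
    have e3 : (∑ j ∈ s, j * l j) ≤ ∑ j ∈ s, j * m j :=
      Finset.sum_le_sum fun j hj => Nat.mul_le_mul_left j (hle j hj)
    refine Finset.mem_filter.mpr ⟨Finset.mem_product.mpr ⟨?_, ?_⟩, ?_⟩
    · dsimp only
      rw [Finset.mem_piAntidiag]
      exact hl
    · dsimp only
      rw [hBU]
      refine ⟨?_, ?_⟩
      · calc ∑ j ∈ s, (m - l) j ≤ ∑ j ∈ s, m j :=
              Finset.sum_le_sum fun j _ => by simp [Pi.sub_apply]
          _ ≤ n := hmBU.1
      · intro i hi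
        apply hmBU.2
        simp only [Pi.sub_apply] at hi
        omega
    · dsimp only
      rw [e1, e2]
      omega
  · rintro ⟨l, f⟩ _
    have hfl : (l + f) - l = f := by
      funext j
      simp [Pi.add_apply, Pi.sub_apply]
    try dsimp only
    rw [hfl]
  · rintro ⟨m, l⟩ hy
    dsimp only at hy ⊢
    rw [Finset.mem_filter, Finset.mem_product, Finset.mem_filter] at hy
    obtain ⟨⟨⟨hmBU, hmw⟩, hl⟩, hle⟩ := hy
    dsimp only at hmBU hmw hl hle
    rw [Finset.mem_piAntidiag] at hl
    have hleall : ∀ j, l j ≤ m j := by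
      intro j
      by_cases hj : j ∈ s
      · exact hle j hj
      · have h0 : l j = 0 := by
          by_contra hc
          exact hj (hl.2 j hc)
        omega
    have hml : l + (m - l) = m := by
      funext j
      simp only [Pi.add_apply, Pi.sub_apply]
      exact Nat.add_sub_cancel' (hleall j)
    try dsimp only
    rw [hml]
  · rintro ⟨l, f⟩ _
    have hfl : (l + f) - l = f := by
      funext j
      simp [Pi.add_apply, Pi.sub_apply]
    try dsimp only
    rw [hfl]

lemma prod_fact_ne_zero (s : Finset ℕ) (f : ℕ → ℕ) :
    (∏ j ∈ s, ((f j).factorial : ℂ)) ≠ 0 := by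
  rw [Finset.prod_ne_zero_iff]
  intro j _
  exact_mod_cast (f j).factorial_ne_zero

lemma multinomial_cast_eq (s : Finset ℕ) (l : ℕ → ℕ) :
    (Nat.multinomial s l : ℂ) = ((∑ j ∈ s, l j).factorial : ℂ) / ∏ j ∈ s, ((l j).factorial : ℂ) := by
  rw [eq_div_iff (prod_fact_ne_zero s l)]
  have h := Nat.multinomial_spec s l
  have h2 : ((∏ i ∈ s, (l i).factorial) * Nat.multinomial s l : ℂ)
      = ((∑ i ∈ s, l i).factorial : ℂ) := by exact_mod_cast congrArg (Nat.cast : ℕ → ℂ) h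
  push_cast at h2 ⊢
  linear_combination h2

lemma per_m (c α : ℕ → ℂ) (k n : ℕ) (p : ℂ) (m : ℕ → ℕ) :
    ∑ l ∈ (Finset.Icc 1 n).piAntidiag k,
      (if ∀ j ∈ Finset.Icc 1 n, l j ≤ m j then
        ((Nat.multinomial (Finset.Icc 1 n) l : ℂ) *
            ∏ j ∈ Finset.Icc 1 n, (α j * c j) ^ l j) *
        (bbc p (∑ j ∈ Finset.Icc 1 n, (m - l) j) *
         ((Nat.multinomial (Finset.Icc 1 n) (m - l) : ℂ) *
            ∏ j ∈ Finset.Icc 1 n, c j ^ (m - l) j))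
       else 0)
    = (k.factorial : ℂ) * (ffc p ((∑ j ∈ Finset.Icc 1 n, m j) - k)
        * (∑ l ∈ (Finset.Icc 1 n).piAntidiag k,
            ∏ j ∈ Finset.Icc 1 n, (((m j).choose (l j) : ℂ) * α j ^ (l j)))
        * (∏ j ∈ Finset.Icc 1 n, c j ^ m j)
        / ∏ j ∈ Finset.Icc 1 n, ((m j).factorial : ℂ)) := by
  classical
  set s := Finset.Icc 1 n with hs
  rw [Finset.mul_sum, Finset.sum_mul, Finset.sum_div, Finset.mul_sum]
  refine Finset.sum_congr rfl fun l hl => ?_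
  rw [Finset.mem_piAntidiag] at hl
  by_cases hle : ∀ j ∈ s, l j ≤ m j
  · rw [if_pos hle]
    have hlall : ∀ j, l j ≤ m j := fun j => by
      by_cases hj : j ∈ s
      · exact hle j hj
      · have h0 : l j = 0 := by
          by_contra hc
          exact hj (hl.2 j hc)
        omega
    have hσl : ∑ j ∈ s, l j = k := hl.1
    have hsub : ∑ j ∈ s, (m - l) j = (∑ j ∈ s, m j) - k := by
      rw [← hσl]
      calc ∑ j ∈ s, (m - l) j = ∑ j ∈ s, (m j - l j) :=
            Finset.sum_congr rfl fun j _ => rfl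
        _ = _ := Finset.sum_tsub_distrib s fun j hj => hle j hj
    have hMl := multinomial_cast_eq s l
    rw [hσl] at hMl
    have hMml := multinomial_cast_eq s (m - l)
    rw [hsub] at hMml
    have hprodsplit : ∏ j ∈ s, ((α j * c j) ^ l j)
        = (∏ j ∈ s, α j ^ l j) * ∏ j ∈ s, c j ^ l j := by
      rw [← Finset.prod_mul_distrib]
      exact Finset.prod_congr rfl fun j _ => mul_pow _ _ _
    have hchoosesplit : ∏ j ∈ s, (((m j).choose (l j) : ℂ) * α j ^ l j)
        = (∏ j ∈ s, ((m j).choose (l j) : ℂ)) * ∏ j ∈ s, α j ^ l j :=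
      Finset.prod_mul_distrib
    have hcm : ∏ j ∈ s, c j ^ m j = (∏ j ∈ s, c j ^ l j) * ∏ j ∈ s, c j ^ (m - l) j := by
      rw [← Finset.prod_mul_distrib]
      refine Finset.prod_congr rfl fun j _ => ?_
      rw [← pow_add]
      congr 1
      have := hlall j
      simp only [Pi.sub_apply]
      omega
    have hfact : (∏ j ∈ s, ((m j).choose (l j) : ℂ)) *
          ((∏ j ∈ s, ((l j).factorial : ℂ)) * ∏ j ∈ s, (((m - l) j).factorial : ℂ))
        = ∏ j ∈ s, ((m j).factorial : ℂ) := by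
      rw [← Finset.prod_mul_distrib, ← Finset.prod_mul_distrib]
      refine Finset.prod_congr rfl fun j hj => ?_
      have h := Nat.choose_mul_factorial_mul_factorial (hlall j)
      have h2 : (((m j).choose (l j) * (l j).factorial * ((m j) - (l j)).factorial : ℕ) : ℂ)
          = (((m j).factorial : ℕ) : ℂ) := by exact_mod_cast congrArg (Nat.cast : ℕ → ℂ) h
      push_cast at h2
      have h3 : (m - l) j = m j - l j := rfl
      rw [h3]
      push_cast
      linear_combination h2
    have hCh : (∏ j ∈ s, ((m j).choose (l j) : ℂ)) ≠ 0 := by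
      rw [Finset.prod_ne_zero_iff]
      intro j _
      have := Nat.choose_pos (hlall j)
      exact_mod_cast Nat.pos_iff_ne_zero.mp this
    have hPl := prod_fact_ne_zero s l
    have hPml := prod_fact_ne_zero s (m - l)
    have hDf : (((∑ j ∈ s, m j) - k).factorial : ℂ) ≠ 0 := by
      exact_mod_cast Nat.factorial_ne_zero _
    rw [hsub, bbc, hMl, hMml, hprodsplit, hchoosesplit, hcm, ← hfact]
    simp only [div_mul_eq_mul_div, ← mul_div_assoc, div_div]
    rw [div_eq_div_iff (mul_ne_zero hPl (mul_ne_zero hDf hPml))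
      (mul_ne_zero hCh (mul_ne_zero hPl hPml))]
    ring
  · rw [if_neg hle]
    push_neg at hle
    obtain ⟨j0, hj0s, hj0⟩ := hle
    have hch0 : ∏ j ∈ s, (((m j).choose (l j) : ℂ) * α j ^ (l j)) = 0 := by
      refine Finset.prod_eq_zero hj0s ?_
      rw [Nat.choose_eq_zero_of_lt (by omega), Nat.cast_zero, zero_mul]
    rw [hch0]
    ring

noncomputable def toF (n : ℕ) (m : ℕ → ℕ) : ℕ →₀ ℕ :=
  Finsupp.onFinset (Finset.Icc 1 n) (fun j => if j ∈ Finset.Icc 1 n then m j else 0)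
    (fun a ha => by by_contra hc; simp [hc] at ha)

lemma toF_apply (n : ℕ) (m : ℕ → ℕ) (j : ℕ) :
    toF n m j = if j ∈ Finset.Icc 1 n then m j else 0 := rfl

lemma rhs_eq (c α : ℕ → ℂ) (k n : ℕ) (p : ℂ) :
    ∑ᶠ (m : ℕ →₀ ℕ) (_ : m 0 = 0 ∧ (m.sum fun j e => j * e) = n),
        (∏ i ∈ Finset.range ((m.sum fun _ e => e) - k), (p - i)) * Wcoeff α m k *
          (∏ j ∈ m.support, c j ^ m j) / ∏ j ∈ m.support, ((m j).factorial : ℂ)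
    = ∑ m ∈ ((Finset.range (n+1)).biUnion (Finset.Icc 1 n).piAntidiag).filter
          (fun m => ∑ j ∈ Finset.Icc 1 n, j * m j = n),
        ffc p ((∑ j ∈ Finset.Icc 1 n, m j) - k)
          * (∑ l ∈ (Finset.Icc 1 n).piAntidiag k,
              ∏ j ∈ Finset.Icc 1 n, (((m j).choose (l j) : ℂ) * α j ^ (l j)))
          * (∏ j ∈ Finset.Icc 1 n, c j ^ m j)
          / ∏ j ∈ Finset.Icc 1 n, ((m j).factorial : ℂ) := by
  classical
  set s := Finset.Icc 1 n with hs
  set B := ((Finset.range (n+1)).biUnion s.piAntidiag).filter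
      (fun m => ∑ j ∈ s, j * m j = n) with hB
  set P : (ℕ →₀ ℕ) → Prop := fun m => m 0 = 0 ∧ (m.sum fun j e => j * e) = n with hP
  set R : (ℕ →₀ ℕ) → ℂ := fun m =>
    (∏ i ∈ Finset.range ((m.sum fun _ e => e) - k), (p - i)) * Wcoeff α m k *
      (∏ j ∈ m.support, c j ^ m j) / ∏ j ∈ m.support, ((m j).factorial : ℂ) with hR
  have step1 : ∀ M : ℕ →₀ ℕ, (∑ᶠ (_ : P M), R M) = if P M then R M else 0 :=
    fun M => finsum_eq_if
  rw [finsum_congr step1]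
  -- facts about members of B
  have hBfacts : ∀ m ∈ B, (∀ i, m i ≠ 0 → i ∈ s) ∧ (∑ j ∈ s, j * m j = n) := by
    intro m hm
    rw [hB, Finset.mem_filter, Finset.mem_biUnion] at hm
    obtain ⟨⟨r, _, hmr⟩, hw⟩ := hm
    rw [Finset.mem_piAntidiag] at hmr
    exact ⟨hmr.2, hw⟩
  have hcoe : ∀ m ∈ B, ∀ j, toF n m j = m j := by
    intro m hm j
    rw [toF_apply]
    by_cases hj : j ∈ s
    · simp [hs ▸ hj]
    · rw [if_neg (by rw [← hs]; exact hj)]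
      by_contra hc
      exact hj ((hBfacts m hm).1 j fun h => hc h.symm)
  have hsuppB : ∀ m ∈ B, (toF n m).support ⊆ s := fun m _ => Finsupp.support_onFinset_subset
  have hPtoF : ∀ m ∈ B, P (toF n m) := by
    intro m hm
    constructor
    · rw [hcoe m hm 0]
      by_contra hc
      have := (hBfacts m hm).1 0 hc
      rw [hs] at this
      simp at this
    · rw [Finsupp.sum_of_support_subset _ (hsuppB m hm) _ (fun i _ => by simp)]
      calc ∑ j ∈ s, j * toF n m j = ∑ j ∈ s, j * m j :=
            Finset.sum_congr rfl fun j _ => by rw [hcoe m hm j]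
        _ = n := (hBfacts m hm).2
  -- support of the function is inside B.image (toF n)
  have hsupport : Function.support (fun M => if P M then R M else 0)
      ⊆ ↑(B.image (toF n)) := by
    intro M hM
    have hPM : P M := by
      by_contra hc
      apply hM
      simp [hc]
    obtain ⟨hM0, hMw⟩ := hPM
    have hMsupp : ∀ i, M i ≠ 0 → i ∈ s := by
      intro i hi
      have hi0 : i ≠ 0 := fun h => hi (h ▸ hM0)
      have hiS : i ∈ M.support := Finsupp.mem_support_iff.mpr hi
      have hle : i * M i ≤ M.sum fun j e => j * e := by
        exact Finset.single_le_sum (f := fun j => j * M j) (fun j _ => Nat.zero_le _) hiS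
      rw [hMw] at hle
      have : 1 ≤ M i := Nat.one_le_iff_ne_zero.mpr hi
      rw [hs, Finset.mem_Icc]
      constructor
      · omega
      · calc i ≤ M i * i := Nat.le_mul_of_pos_left i this
          _ = i * M i := mul_comm _ _
          _ ≤ n := hle
    have hMw' : ∑ j ∈ s, j * M j = n := by
      rw [← hMw, Finsupp.sum_of_support_subset _ (fun j hj =>
        hMsupp j (Finsupp.mem_support_iff.mp hj)) _ (fun i _ => by simp)]
    have hMσ : ∑ j ∈ s, M j ≤ n := by
      calc ∑ j ∈ s, M j ≤ ∑ j ∈ s, j * M j := Finset.sum_le_sum fun j hj => by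
            have h1 : 1 ≤ j := (Finset.mem_Icc.mp (hs ▸ hj)).1
            exact Nat.le_mul_of_pos_left _ h1
        _ = n := hMw'
    have hMB : (M : ℕ → ℕ) ∈ B := by
      rw [hB, Finset.mem_filter, Finset.mem_biUnion]
      refine ⟨⟨∑ j ∈ s, M j, by rw [Finset.mem_range]; omega, ?_⟩, hMw'⟩
      rw [Finset.mem_piAntidiag]
      exact ⟨rfl, fun i hi => hMsupp i hi⟩
    rw [Finset.coe_image]
    refine ⟨(M : ℕ → ℕ), hMB, ?_⟩
    ext j
    rw [toF_apply]
    by_cases hj : j ∈ s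
    · rw [if_pos (hs ▸ hj)]
    · rw [if_neg (by rw [← hs]; exact hj)]
      by_contra hc
      exact hj (hMsupp j fun h => hc h.symm)
  rw [finsum_eq_sum_of_support_subset _ hsupport]
  rw [Finset.sum_image (fun m hm m' hm' heq => ?_)]
  swap
  · -- injectivity
    funext j
    by_cases hj : j ∈ s
    · rw [← hcoe m hm j, ← hcoe m' hm' j, heq]
    · have h1 : m j = 0 := by
        by_contra hc
        exact hj ((hBfacts m hm).1 j hc)
      have h2 : m' j = 0 := by
        by_contra hc
        exact hj ((hBfacts m' hm').1 j hc)
      rw [h1, h2]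
  refine Finset.sum_congr rfl fun m hm => ?_
  rw [if_pos (hPtoF m hm)]
  rw [hR]
  dsimp only
  have hsum1 : ((toF n m).sum fun _ e => e) = ∑ j ∈ s, m j := by
    rw [Finsupp.sum_of_support_subset _ (hsuppB m hm) _ (fun i _ => rfl)]
    exact Finset.sum_congr rfl fun j _ => hcoe m hm j
  have hW : Wcoeff α (toF n m) k
      = ∑ l ∈ s.piAntidiag k, ∏ j ∈ s, (((m j).choose (l j) : ℂ) * α j ^ (l j)) := by
    rw [Wcoeff_eq α n k (toF n m) (hsuppB m hm)]
    refine Finset.sum_congr rfl fun l _ => Finset.prod_congr rfl fun j _ => ?_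
    rw [hcoe m hm j]
  have hprodc : ∏ j ∈ (toF n m).support, c j ^ (toF n m j) = ∏ j ∈ s, c j ^ m j := by
    rw [Finset.prod_subset (hsuppB m hm) (fun j _ hj => by
      rw [Finsupp.notMem_support_iff.mp hj, pow_zero])]
    exact Finset.prod_congr rfl fun j _ => by rw [hcoe m hm j]
  have hprodf : ∏ j ∈ (toF n m).support, ((toF n m j).factorial : ℂ)
      = ∏ j ∈ s, ((m j).factorial : ℂ) := by
    rw [Finset.prod_subset (hsuppB m hm) (fun j _ hj => by
      rw [Finsupp.notMem_support_iff.mp hj]; simp)]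
    exact Finset.prod_congr rfl fun j _ => by rw [hcoe m hm j]
  rw [hsum1, hW, hprodc, hprodf, ffc]


/-- For `φ(z) = 1 + ∑_{j≥1} cⱼ zʲ`, `ψ(z) = ∑_{j≥1} αⱼ cⱼ zʲ`, an integer `k ≥ 1` and
`p ∈ ℂ`, the coefficient of `zⁿ` in `ψ(z)ᵏ φ(z)^p` equals
`k! · ∑_{m : ‖m‖ = n} (p(p−1)⋯(p+k−|m|+1)) · W_k(m) · c^m / ∏ⱼ mⱼ!`, the sum over
finitely supported sequences `m` (i.e. `m 0 = 0`) with `‖m‖ = n`; the falling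
factorial has `|m| − k` factors (`1` when `|m| = k`), and `W_k(m) = 0` when
`k > |m|`, so terms with `|m| < k` vanish. -/
theorem coeff_psi_pow_phi_pow (c α : ℕ → ℂ) (k : ℕ) (hk : 1 ≤ k) (p : ℂ) (n : ℕ) :
    PowerSeries.coeff n
        ((PowerSeries.mk fun j => if j = 0 then 0 else α j * c j) ^ k *
          onePlusPow (PowerSeries.mk fun j => if j = 0 then 0 else c j) p) =
      (k.factorial : ℂ) *
        ∑ᶠ (m : ℕ →₀ ℕ) (_ : m 0 = 0 ∧ (m.sum fun j e => j * e) = n),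
          (∏ i ∈ Finset.range ((m.sum fun _ e => e) - k), (p - i)) * Wcoeff α m k *
            (∏ j ∈ m.support, c j ^ m j) / ∏ j ∈ m.support, ((m j).factorial : ℂ) := by
  rw [lhs_eq c α k p n]
  rw [reindex_sum n k (fun l f =>
    ((Nat.multinomial (Finset.Icc 1 n) l : ℂ) * ∏ j ∈ Finset.Icc 1 n, (α j * c j) ^ l j) *
    (bbc p (∑ j ∈ Finset.Icc 1 n, f j) *
      ((Nat.multinomial (Finset.Icc 1 n) f : ℂ) * ∏ j ∈ Finset.Icc 1 n, c j ^ f j)))]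
  rw [Finset.sum_congr rfl (fun m _ => per_m c α k n p m)]
  rw [rhs_eq c α k n p, ← Finset.mul_sum]
end

section
/- Let f(z) = z + c_1 z² + c_2 z³ + … be a formal power series over ℂ and p ∈ ℂ. Define z^{p+1} f''(z)/f(z)^p := z·f''(z) · exp(−p·log(f(z)/z)), which is well defined since f(z)/z has constant term 1. Then for every n ≥ 0, its coefficient of z^n equals ∑_{m: ‖m‖ = n} 𝔟_m(p) · c^m / ∏_j m_j!, where for |m| ≥ 1, 𝔟_m(p) = (−1)^{|m|+1} · (∏_{i=0}^{|m|−2}(p+i)) · (M_1 + M_2) (the product p(p+1)⋯(p+|m|−2) = (p+|m|−2)!/(p−1)! having |m|−1 factors, equal to 1 when |m| = 1), and the term for m = 0 is zero. -/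
open PowerSeries Finset

/-- The formal power series `f(z) = z + c₁z² + c₂z³ + ⋯`. -/
noncomputable def fSeries (c : ℕ → ℂ) : PowerSeries ℂ :=
  PowerSeries.mk fun n => if n = 0 then 0 else if n = 1 then 1 else c (n - 1)

/-- The series `z^{p+1} f''(z)/f(z)^p := z·f''(z) · exp(−p·log(f(z)/z))`,
well defined since `f(z)/z = 1 + c₁z + ⋯` has constant term `1`. -/
noncomputable def GSeries (c : ℕ → ℂ) (p : ℂ) : PowerSeries ℂ :=
  PowerSeries.X * (fSeries c).derivativeFun.derivativeFun *
    onePlusPow (PowerSeries.mk fun j => if j = 0 then 0 else c j) (-p)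

namespace ZF
noncomputable section

def wd (m : ℕ →₀ ℕ) : ℕ := m.sum fun j e => j * e
def wd2 (m : ℕ →₀ ℕ) : ℕ := m.sum fun j e => j ^ 2 * e
def tm (m : ℕ →₀ ℕ) : ℕ := m.sum fun _ e => e
def pf (m : ℕ →₀ ℕ) : ℂ := ∏ j ∈ m.support, ((m j).factorial : ℂ)
def cm (c : ℕ → ℂ) (m : ℕ →₀ ℕ) : ℂ := ∏ j ∈ m.support, c j ^ m j

lemma wd_add (a b : ℕ →₀ ℕ) : wd (a + b) = wd a + wd b :=
  Finsupp.sum_add_index' (by simp) (by intros; ring)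

lemma tm_add (a b : ℕ →₀ ℕ) : tm (a + b) = tm a + tm b :=
  Finsupp.sum_add_index' (by simp) (by intros; ring)

lemma wd_single (j e : ℕ) : wd (Finsupp.single j e) = j * e :=
  Finsupp.sum_single_index (by simp)

lemma tm_single (j e : ℕ) : tm (Finsupp.single j e) = e :=
  Finsupp.sum_single_index (by simp)

lemma le_wd {m : ℕ →₀ ℕ} {j : ℕ} (hj : j ∈ m.support) : j * m j ≤ wd m :=
  Finset.single_le_sum (f := fun j => j * m j) (fun _ _ => Nat.zero_le _) hj

lemma tm_le_wd {m : ℕ →₀ ℕ} (h0 : m 0 = 0) : tm m ≤ wd m := by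
  refine Finset.sum_le_sum fun j hj => ?_
  have hj0 : j ≠ 0 := by rintro rfl; exact (Finsupp.mem_support_iff.1 hj) h0
  have : 1 ≤ j := Nat.one_le_iff_ne_zero.2 hj0
  nlinarith [Nat.zero_le (m j)]

lemma support_subset_range {m : ℕ →₀ ℕ} {n : ℕ} (hw : wd m = n) :
    m.support ⊆ Finset.range (n + 1) := by
  intro j hj
  have h1 : 1 ≤ m j := Nat.one_le_iff_ne_zero.2 (Finsupp.mem_support_iff.1 hj)
  have h2 := le_wd hj
  have h3 : j ≤ j * m j := Nat.le_mul_of_pos_right j (by omega)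
  simp only [Finset.mem_range]
  omega

lemma tm_eq_zero_iff {m : ℕ →₀ ℕ} : tm m = 0 ↔ m = 0 := by
  constructor
  · intro h
    ext j
    by_contra hj
    have hj' : j ∈ m.support := Finsupp.mem_support_iff.2 (by simpa using hj)
    have h1 : 1 ≤ m j := Nat.one_le_iff_ne_zero.2 (by simpa using hj)
    have : m j ≤ tm m := by
      rw [tm, Finsupp.sum]
      exact Finset.single_le_sum (f := fun a => m a) (fun _ _ => Nat.zero_le _) hj'
    omega
  · rintro rfl; simp [tm]

/-- the finset of `m` with `m 0 = 0` and weighted degree `n`. -/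
def S (n : ℕ) : Finset (ℕ →₀ ℕ) :=
  (((Finset.range (n+1)).biUnion fun k => (Finset.range (n+1)).finsuppAntidiag k).filter
    fun m => m 0 = 0 ∧ wd m = n)

lemma mem_S {n : ℕ} {m : ℕ →₀ ℕ} : m ∈ S n ↔ m 0 = 0 ∧ wd m = n := by
  constructor
  · intro h; exact (Finset.mem_filter.1 h).2
  · rintro ⟨h0, hw⟩
    refine Finset.mem_filter.2 ⟨?_, h0, hw⟩
    refine Finset.mem_biUnion.2 ⟨tm m, ?_, ?_⟩
    · simp only [Finset.mem_range]
      have := tm_le_wd h0; omega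
    · refine Finset.mem_finsuppAntidiag.2 ⟨?_, support_subset_range hw⟩
      rw [tm, Finsupp.sum]
      exact (Finset.sum_subset (support_subset_range hw)
        (fun x _ hx => Finsupp.notMem_support_iff.1 hx)).symm

lemma S_zero : S 0 = {0} := by
  ext m
  simp only [mem_S, Finset.mem_singleton]
  constructor
  · rintro ⟨h0, hw⟩
    have hsupp : m.support = ∅ := by
      by_contra hne
      obtain ⟨j, hj⟩ := Finset.nonempty_of_ne_empty hne
      have h1 : m j ≠ 0 := Finsupp.mem_support_iff.1 hj
      have hj0 : j ≠ 0 := fun hc => h1 (by rw [hc]; exact h0)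
      have h2 := le_wd hj
      rw [hw] at h2
      have h3 : 1 ≤ j * m j := Nat.one_le_iff_ne_zero.2 (Nat.mul_ne_zero hj0 h1)
      omega
    exact Finsupp.support_eq_empty.1 hsupp
  · rintro rfl; simp [wd]

lemma single_le {m : ℕ →₀ ℕ} {j : ℕ} (h : m j ≠ 0) : Finsupp.single j 1 ≤ m := by
  rw [Finsupp.single_le_iff]; omega

/-- pointing bijection -/
lemma pointing (F : (ℕ →₀ ℕ) → ℂ) {j n : ℕ} (hj : 1 ≤ j) (hjn : j ≤ n) :
    ∑ m ∈ S n, (m j : ℂ) * F m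
      = ∑ m ∈ S (n - j), ((m j : ℂ) + 1) * F (m + Finsupp.single j 1) := by
  rw [← Finset.sum_filter_of_ne (p := fun m => m j ≠ 0)
    (by intro m _ h
        by_contra hc
        rw [hc] at h
        simp at h)]
  refine Finset.sum_nbij' (fun m => m - Finsupp.single j 1) (fun m => m + Finsupp.single j 1)
    ?_ ?_ ?_ ?_ ?_
  · intro m hm
    rw [Finset.mem_filter] at hm
    obtain ⟨hmS, hmj⟩ := hm
    rw [mem_S] at hmS
    rw [mem_S]
    have hle : Finsupp.single j 1 ≤ m := single_le hmj
    have hsub : m - Finsupp.single j 1 + Finsupp.single j 1 = m := tsub_add_cancel_of_le hle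
    constructor
    · have := Finsupp.tsub_apply m (Finsupp.single j 1) 0
      rw [this, hmS.1, Finsupp.single_apply, if_neg (by omega)]
      omega
    · have : wd (m - Finsupp.single j 1) + j * 1 = n := by
        rw [← wd_single j 1, ← wd_add, hsub, hmS.2]
      omega
  · intro m hm
    rw [mem_S] at hm
    rw [Finset.mem_filter, mem_S]
    refine ⟨⟨?_, ?_⟩, ?_⟩
    · rw [Finsupp.add_apply, hm.1, Finsupp.single_apply, if_neg (by omega)]
      omega
    · rw [wd_add, wd_single, hm.2]; omega
    · rw [Finsupp.add_apply, Finsupp.single_apply, if_pos rfl]; omega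
  · intro m hm
    rw [Finset.mem_filter] at hm
    exact tsub_add_cancel_of_le (single_le hm.2)
  · intro m _
    exact add_tsub_cancel_right m (Finsupp.single j 1)
  · intro m hm
    rw [Finset.mem_filter] at hm
    have hle : Finsupp.single j 1 ≤ m := single_le hm.2
    have hsub : m - Finsupp.single j 1 + Finsupp.single j 1 = m := tsub_add_cancel_of_le hle
    rw [hsub]
    congr 1
    have happ := Finsupp.tsub_apply m (Finsupp.single j 1) j
    simp only [Finsupp.single_apply, if_pos rfl, Finsupp.single_eq_same] at happ
    rw [happ]
    have h1 : 1 ≤ m j := Nat.one_le_iff_ne_zero.2 hm.2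
    push_cast [Nat.cast_sub h1]
    ring

lemma prod_congr_support {m : ℕ →₀ ℕ} {g : ℕ → ℕ → ℂ} (hg : ∀ j, g j 0 = 1)
    {s : Finset ℕ} (hs : m.support ⊆ s) :
    ∏ j ∈ m.support, g j (m j) = ∏ j ∈ s, g j (m j) :=
  Finset.prod_subset hs (fun x _ hx => by
    rw [Finsupp.notMem_support_iff.1 hx]; exact hg x)

lemma pf_add_single (m : ℕ →₀ ℕ) (j : ℕ) :
    pf (m + Finsupp.single j 1) = ((m j : ℂ) + 1) * pf m := by
  classical
  set m' : ℕ →₀ ℕ := m + Finsupp.single j 1 with hm'def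
  have hm' : ∀ i : ℕ, m' i = m i + (Finsupp.single j 1) i :=
    fun i => Finsupp.add_apply m (Finsupp.single j 1) i
  set s := insert j m.support with hs
  have hsub1 : m.support ⊆ s := Finset.subset_insert _ _
  have hsub2 : m'.support ⊆ s := by
    rw [hm'def]
    refine Finsupp.support_add.trans ?_
    apply Finset.union_subset (Finset.subset_insert _ _)
    refine (Finsupp.support_single_subset).trans ?_
    intro x hx
    rw [Finset.mem_singleton] at hx
    rw [hx]
    exact Finset.mem_insert_self _ _
  have h1 : pf m' = ∏ i ∈ s, ((m' i).factorial : ℂ) :=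
    prod_congr_support (g := fun _ e => ((e.factorial : ℂ))) (by simp) hsub2
  have h2 : pf m = ∏ i ∈ s, ((m i).factorial : ℂ) :=
    prod_congr_support (g := fun _ e => ((e.factorial : ℂ))) (by simp) hsub1
  have hj : j ∈ s := Finset.mem_insert_self _ _
  rw [h1, h2, ← Finset.mul_prod_erase s _ hj, ← Finset.mul_prod_erase s _ hj]
  have happ : m' j = m j + 1 := by rw [hm' j, Finsupp.single_eq_same]
  have hother : ∀ i ∈ s.erase j, m' i = m i := by
    intro i hi
    have hne : i ≠ j := Finset.ne_of_mem_erase hi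
    rw [hm' i, Finsupp.single_apply, if_neg (Ne.symm hne), add_zero]
  rw [happ, Finset.prod_congr rfl (fun i hi => by rw [hother i hi])]
  rw [Nat.factorial_succ]
  push_cast
  ring

lemma cm_add_single (c : ℕ → ℂ) (m : ℕ →₀ ℕ) (j : ℕ) :
    cm c (m + Finsupp.single j 1) = c j * cm c m := by
  show Finsupp.prod _ (fun j e => c j ^ e) = c j * Finsupp.prod m (fun j e => c j ^ e)
  rw [Finsupp.prod_add_index' (by simp) (fun a b₁ b₂ => pow_add (c a) b₁ b₂)]
  rw [Finsupp.prod_single_index (by simp)]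
  ring

lemma pf_ne_zero (m : ℕ →₀ ℕ) : pf m ≠ 0 := by
  refine Finset.prod_ne_zero_iff.2 fun j _ => ?_
  exact_mod_cast Nat.factorial_ne_zero (m j)

/-! power series part -/

def uS (c : ℕ → ℂ) : PowerSeries ℂ := PowerSeries.mk fun j => if j = 0 then 0 else c j

lemma constantCoeff_uS (c : ℕ → ℂ) : PowerSeries.constantCoeff (uS c) = 0 := by
  rw [← PowerSeries.coeff_zero_eq_constantCoeff, uS, PowerSeries.coeff_mk, if_pos rfl]

lemma coeff_pow_eq_zero {v : PowerSeries ℂ} (hv : PowerSeries.constantCoeff v = 0)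
    {n k : ℕ} (h : n < k) : PowerSeries.coeff n (v ^ k) = 0 := by
  have hd : (PowerSeries.X : PowerSeries ℂ) ^ k ∣ v ^ k :=
    pow_dvd_pow_of_dvd (PowerSeries.X_dvd_iff.mpr hv) k
  rw [PowerSeries.X_pow_dvd_iff] at hd
  exact hd n h

lemma coeff_pow_mul_eq_zero {v g : PowerSeries ℂ} (hv : PowerSeries.constantCoeff v = 0)
    {n k : ℕ} (h : n < k) : PowerSeries.coeff n (v ^ k * g) = 0 := by
  have hd : (PowerSeries.X : PowerSeries ℂ) ^ k ∣ v ^ k * g :=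
    Dvd.dvd.mul_right (pow_dvd_pow_of_dvd (PowerSeries.X_dvd_iff.mpr hv) k) g
  rw [PowerSeries.X_pow_dvd_iff] at hd
  exact hd n h

/-- multinomial expansion of coefficients of `u^k`. -/
lemma coeff_u_pow (c : ℕ → ℂ) (k : ℕ) : ∀ n : ℕ,
    PowerSeries.coeff n ((uS c) ^ k)
      = ∑ m ∈ S n, if tm m = k then (k.factorial : ℂ) / pf m * cm c m else 0 := by
  induction k with
  | zero =>
    intro n
    rw [pow_zero, PowerSeries.coeff_one]
    rcases Nat.eq_zero_or_pos n with rfl | hn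
    · rw [if_pos rfl, S_zero, Finset.sum_singleton]
      rw [if_pos (by simp [tm])]
      simp [pf, cm]
    · rw [if_neg (by omega)]
      refine (Finset.sum_eq_zero fun m hm => ?_).symm
      rw [mem_S] at hm
      rw [if_neg]
      intro htm
      have : m = 0 := tm_eq_zero_iff.1 htm
      rw [this] at hm
      simp [wd] at hm
      omega
  | succ k IH =>
    intro n
    have hsplit : (uS c) ^ (k+1) = uS c * (uS c) ^ k := by ring
    rw [hsplit, PowerSeries.coeff_mul, Finset.Nat.sum_antidiagonal_eq_sum_range_succ_mk]
    have hL : ∀ j ∈ Finset.range (n+1),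
        PowerSeries.coeff j (uS c) * PowerSeries.coeff (n - j) ((uS c)^k)
        = (if j = 0 then 0 else c j) * ∑ m ∈ S (n-j),
            if tm m = k then (k.factorial : ℂ) / pf m * cm c m else 0 := by
      intro j _
      rw [IH (n - j), uS, PowerSeries.coeff_mk]
    rw [Finset.sum_congr rfl hL]
    -- now the RHS side manipulation
    have hR : ∀ m ∈ S n, (if tm m = k + 1 then ((k+1).factorial : ℂ) / pf m * cm c m else 0)
        = ∑ j ∈ Finset.range (n+1), (m j : ℂ) *
            (if tm m = k + 1 then (k.factorial : ℂ) / pf m * cm c m else 0) := by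
      intro m hm
      rw [← Finset.sum_mul]
      have hsum : ∑ j ∈ Finset.range (n+1), (m j : ℂ) = (tm m : ℂ) := by
        rw [tm, Finsupp.sum]
        rw [Finset.sum_subset (support_subset_range (mem_S.1 hm).2)
          (fun x _ hx => Finsupp.notMem_support_iff.1 hx)]
        push_cast
        rfl
      rw [hsum]
      by_cases htm : tm m = k + 1
      · rw [if_pos htm, if_pos htm, htm, Nat.factorial_succ]
        push_cast
        ring
      · rw [if_neg htm, if_neg htm, mul_zero]
    rw [Finset.sum_congr rfl hR, Finset.sum_comm]
    refine Finset.sum_congr rfl fun j hj => ?_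
    rcases Nat.eq_zero_or_pos j with rfl | hjpos
    · rw [if_pos rfl, zero_mul]
      symm
      refine Finset.sum_eq_zero fun m hm => ?_
      rw [(mem_S.1 hm).1]
      simp
    · rw [if_neg (by omega)]
      have hjn : j ≤ n := by simp only [Finset.mem_range] at hj; omega
      rw [pointing _ hjpos hjn]
      rw [Finset.mul_sum]
      refine Finset.sum_congr rfl fun m hm => ?_
      have htm : tm (m + Finsupp.single j 1) = tm m + 1 := by
        rw [tm_add, tm_single]
      rw [htm, pf_add_single, cm_add_single]
      by_cases h : tm m = k
      · rw [if_pos (show tm m + 1 = k + 1 by omega), if_pos h]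
        have hne : ((m j : ℂ) + 1) ≠ 0 := by
          have h1 : ((m j + 1 : ℕ) : ℂ) ≠ 0 := Nat.cast_ne_zero.2 (by omega)
          push_cast at h1
          exact h1
        field_simp [hne, pf_ne_zero m]
      · rw [if_neg (show ¬(tm m + 1 = k + 1) by omega), if_neg h, mul_zero, mul_zero]

/-! derivative lemmas -/

lemma ratsmul (q : ℚ) (z : ℂ) : q • z = (q : ℂ) * z := by rw [Rat.smul_def]

lemma coeff_dF (f : PowerSeries ℂ) (n : ℕ) :
    PowerSeries.coeff n f.derivativeFun = PowerSeries.coeff (n + 1) f * (n + 1) :=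
  PowerSeries.coeff_derivative f n

lemma dF_C (r : ℂ) : (PowerSeries.C r).derivativeFun = 0 :=
  PowerSeries.derivative_C

lemma coeff_dfun_pow (f : PowerSeries ℂ) (k : ℕ) : ∀ n : ℕ,
    PowerSeries.coeff n ((f ^ (k+1)).derivativeFun)
      = ((k : ℂ) + 1) * PowerSeries.coeff n (f ^ k * f.derivativeFun) := by
  induction k with
  | zero =>
    intro n
    rw [pow_one, pow_zero, one_mul]
    norm_num
  | succ k IH =>
    intro n
    rw [pow_succ f (k+1), PowerSeries.derivativeFun_mul, map_add]
    rw [smul_eq_mul, smul_eq_mul]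
    have h2 : PowerSeries.coeff n (f * (f ^ (k+1)).derivativeFun)
        = ((k : ℂ) + 1) * PowerSeries.coeff n (f ^ (k+1) * f.derivativeFun) := by
      rw [PowerSeries.coeff_mul]
      have : ∀ x ∈ Finset.HasAntidiagonal.antidiagonal n,
          PowerSeries.coeff x.1 f * PowerSeries.coeff x.2 ((f ^ (k+1)).derivativeFun)
          = ((k : ℂ) + 1) * (PowerSeries.coeff x.1 f *
              PowerSeries.coeff x.2 (f ^ k * f.derivativeFun)) := by
        intro x _
        rw [IH x.2]; ring
      rw [Finset.sum_congr rfl this, ← Finset.mul_sum, ← PowerSeries.coeff_mul]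
      have : f * (f ^ k * f.derivativeFun) = f ^ (k+1) * f.derivativeFun := by ring
      rw [this]
    rw [h2]
    push_cast
    ring

lemma coeff_dexp (v : PowerSeries ℂ) (n : ℕ) :
    PowerSeries.coeff n (expPS v).derivativeFun
      = ∑ k ∈ Finset.range (n+1),
          ((k.factorial : ℂ))⁻¹ * PowerSeries.coeff n (v ^ k * v.derivativeFun) := by
  rw [coeff_dF, expPS, PowerSeries.coeff_mk, Finset.sum_mul,
    Finset.sum_range_succ']
  have h0 : ((Nat.factorial 0 : ℚ)⁻¹ : ℚ) • PowerSeries.coeff (n+1) (v ^ 0) * ((n:ℂ)+1) = 0 := by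
    rw [pow_zero, PowerSeries.coeff_one, if_neg (by omega)]
    simp
  rw [h0, add_zero]
  refine Finset.sum_congr rfl fun k _ => ?_
  rw [ratsmul]
  have hd : PowerSeries.coeff (n+1) (v ^ (k+1)) * ((n:ℂ)+1)
      = PowerSeries.coeff n ((v ^ (k+1)).derivativeFun) := by
    rw [coeff_dF]
  rw [mul_assoc, hd, coeff_dfun_pow]
  have hne : ((k:ℂ)+1) ≠ 0 := by
    have h1 : ((k + 1 : ℕ) : ℂ) ≠ 0 := Nat.cast_ne_zero.2 (by omega)
    push_cast at h1; exact h1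
  have hne2 : ((k.factorial : ℂ)) ≠ 0 := Nat.cast_ne_zero.2 (Nat.factorial_ne_zero k)
  rw [Rat.cast_inv, Rat.cast_natCast, Nat.factorial_succ]
  push_cast
  field_simp

lemma dexp {v : PowerSeries ℂ} (hv : PowerSeries.constantCoeff v = 0) :
    (expPS v).derivativeFun = v.derivativeFun * expPS v := by
  ext n
  rw [coeff_dexp v n, PowerSeries.coeff_mul, Finset.Nat.sum_antidiagonal_eq_sum_range_succ_mk]
  have hterm : ∀ i ∈ Finset.range (n+1),
      PowerSeries.coeff i v.derivativeFun * PowerSeries.coeff (n-i) (expPS v)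
      = ∑ k ∈ Finset.range (n+1), ((k.factorial : ℂ))⁻¹ *
          (PowerSeries.coeff i v.derivativeFun * PowerSeries.coeff (n-i) (v ^ k)) := by
    intro i hi
    rw [expPS, PowerSeries.coeff_mk]
    have hext : ∑ k ∈ Finset.range (n-i+1), ((k.factorial : ℚ)⁻¹ : ℚ) • PowerSeries.coeff (n-i) (v ^ k)
        = ∑ k ∈ Finset.range (n+1), ((k.factorial : ℚ)⁻¹ : ℚ) • PowerSeries.coeff (n-i) (v ^ k) := by
      refine Finset.sum_subset (Finset.range_subset_range.2 (by omega)) fun k _ hk => ?_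
      rw [Finset.mem_range, not_lt] at hk
      rw [coeff_pow_eq_zero hv (by omega), smul_zero]
    rw [hext, Finset.mul_sum]
    refine Finset.sum_congr rfl fun k _ => ?_
    rw [ratsmul, Rat.cast_inv, Rat.cast_natCast]
    ring
  rw [Finset.sum_congr rfl hterm, Finset.sum_comm]
  refine Finset.sum_congr rfl fun k _ => ?_
  rw [← Finset.mul_sum]
  congr 1
  rw [mul_comm (v ^ k) v.derivativeFun, PowerSeries.coeff_mul,
    Finset.Nat.sum_antidiagonal_eq_sum_range_succ_mk]

lemma coeff_dlog (u : PowerSeries ℂ) (n : ℕ) :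
    PowerSeries.coeff n (logOneAddPS u).derivativeFun
      = ∑ k ∈ Finset.range (n+1), (-1:ℂ)^k * PowerSeries.coeff n (u ^ k * u.derivativeFun) := by
  rw [coeff_dF, logOneAddPS, PowerSeries.coeff_mk, Finset.sum_mul,
    Finset.sum_range_succ']
  have h0 : (((-1:ℚ)^(0+1) / (0:ℕ)) : ℚ) • PowerSeries.coeff (n+1) (u ^ 0) * ((n:ℂ)+1) = 0 := by
    norm_num
  rw [h0, add_zero]
  refine Finset.sum_congr rfl fun k _ => ?_
  rw [ratsmul]
  have hd : PowerSeries.coeff (n+1) (u ^ (k+1)) * ((n:ℂ)+1)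
      = PowerSeries.coeff n ((u ^ (k+1)).derivativeFun) := by
    rw [coeff_dF]
  rw [mul_assoc, hd, coeff_dfun_pow]
  have hne : ((k:ℂ)+1) ≠ 0 := by
    have h1 : ((k + 1 : ℕ) : ℂ) ≠ 0 := Nat.cast_ne_zero.2 (by omega)
    push_cast at h1; exact h1
  have hcast : (((-1:ℚ)^(k+1+1) / ((k+1:ℕ) : ℚ) : ℚ) : ℂ) = (-1:ℂ)^k / ((k:ℂ)+1) := by
    push_cast
    rw [pow_succ, pow_succ]
    ring
  rw [hcast]
  field_simp

lemma dlog {u : PowerSeries ℂ} (hu : PowerSeries.constantCoeff u = 0) :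
    (1 + u) * (logOneAddPS u).derivativeFun = u.derivativeFun := by
  ext n
  rw [add_mul, one_mul, map_add, coeff_dlog u n]
  have hmul : PowerSeries.coeff n (u * (logOneAddPS u).derivativeFun)
      = ∑ k ∈ Finset.range (n+1), (-1:ℂ)^k *
          PowerSeries.coeff n (u ^ (k+1) * u.derivativeFun) := by
    rw [PowerSeries.coeff_mul, Finset.Nat.sum_antidiagonal_eq_sum_range_succ_mk]
    have hterm : ∀ i ∈ Finset.range (n+1),
        PowerSeries.coeff i u * PowerSeries.coeff (n-i) (logOneAddPS u).derivativeFun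
        = ∑ k ∈ Finset.range (n+1), (-1:ℂ)^k *
            (PowerSeries.coeff i u * PowerSeries.coeff (n-i) (u ^ k * u.derivativeFun)) := by
      intro i hi
      rw [coeff_dlog u (n-i)]
      have hext : ∑ k ∈ Finset.range (n-i+1), (-1:ℂ)^k * PowerSeries.coeff (n-i) (u ^ k * u.derivativeFun)
          = ∑ k ∈ Finset.range (n+1), (-1:ℂ)^k * PowerSeries.coeff (n-i) (u ^ k * u.derivativeFun) := by
        refine Finset.sum_subset (Finset.range_subset_range.2 (by omega)) fun k _ hk => ?_
        rw [Finset.mem_range, not_lt] at hk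
        rw [coeff_pow_mul_eq_zero hu (by omega), mul_zero]
      rw [hext, Finset.mul_sum]
      refine Finset.sum_congr rfl fun k _ => ?_
      ring
    rw [Finset.sum_congr rfl hterm, Finset.sum_comm]
    refine Finset.sum_congr rfl fun k _ => ?_
    rw [← Finset.mul_sum]
    congr 1
    have hc : PowerSeries.coeff n (u * (u ^ k * u.derivativeFun))
        = ∑ i ∈ Finset.range (n+1), PowerSeries.coeff i u *
            PowerSeries.coeff (n-i) (u ^ k * u.derivativeFun) := by
      rw [PowerSeries.coeff_mul, Finset.Nat.sum_antidiagonal_eq_sum_range_succ_mk]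
    rw [← hc]
    congr 1
    ring
  rw [hmul, ← Finset.sum_add_distrib]
  have htel : ∀ k ∈ Finset.range (n+1),
      (-1:ℂ)^k * PowerSeries.coeff n (u ^ k * u.derivativeFun)
        + (-1:ℂ)^k * PowerSeries.coeff n (u ^ (k+1) * u.derivativeFun)
      = (fun i => (-1:ℂ)^i * PowerSeries.coeff n (u ^ i * u.derivativeFun)) k
        - (fun i => (-1:ℂ)^i * PowerSeries.coeff n (u ^ i * u.derivativeFun)) (k+1) := by
    intro k _
    simp only [pow_succ]
    ring
  rw [Finset.sum_congr rfl htel, Finset.sum_range_sub']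
  simp only [pow_zero, one_mul]
  rw [coeff_pow_mul_eq_zero hu (show n < n+1 by omega), mul_zero, sub_zero]

/-! ODE uniqueness -/

lemma ode_unique {u g A B : PowerSeries ℂ} (hu : PowerSeries.constantCoeff u = 0)
    (hA : (1 + u) * A.derivativeFun = g * A) (hB : (1 + u) * B.derivativeFun = g * B)
    (h0 : PowerSeries.coeff 0 A = PowerSeries.coeff 0 B) : A = B := by
  ext n
  induction n using Nat.strong_induction_on with
  | _ n IH =>
    match n with
    | 0 => exact h0
    | (d+1) =>
      have hgAB : PowerSeries.coeff d (g * A) = PowerSeries.coeff d (g * B) := by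
        rw [PowerSeries.coeff_mul, PowerSeries.coeff_mul]
        refine Finset.sum_congr rfl fun x hx => ?_
        rw [Finset.HasAntidiagonal.mem_antidiagonal] at hx
        rw [IH x.2 (by omega)]
      have hd : PowerSeries.coeff d ((1+u) * A.derivativeFun)
          = PowerSeries.coeff d ((1+u) * B.derivativeFun) := by
        rw [hA, hB]; exact hgAB
      rw [PowerSeries.coeff_mul, PowerSeries.coeff_mul] at hd
      have hsub : ∑ x ∈ Finset.HasAntidiagonal.antidiagonal d, PowerSeries.coeff x.1 (1+u) *
          (PowerSeries.coeff x.2 A.derivativeFun - PowerSeries.coeff x.2 B.derivativeFun)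
          = 0 := by
        simp only [mul_sub]
        rw [Finset.sum_sub_distrib, hd, sub_self]
      have hsingle : ∑ x ∈ Finset.HasAntidiagonal.antidiagonal d, PowerSeries.coeff x.1 (1+u) *
          (PowerSeries.coeff x.2 A.derivativeFun - PowerSeries.coeff x.2 B.derivativeFun)
          = PowerSeries.coeff 0 (1+u) *
            (PowerSeries.coeff d A.derivativeFun - PowerSeries.coeff d B.derivativeFun) := by
        refine Finset.sum_eq_single_of_mem (0, d) (by simp) fun b hb hbne => ?_
        rw [Finset.HasAntidiagonal.mem_antidiagonal] at hb
        have hb2 : b.2 < d := by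
          rcases Nat.lt_or_ge b.2 d with h | h
          · exact h
          · exfalso
            have h2 : b.2 = d := by omega
            have h1 : b.1 = 0 := by omega
            apply hbne
            have hb' : b = (b.1, b.2) := rfl
            rw [hb', h1, h2]
        rw [coeff_dF, coeff_dF,
          IH (b.2+1) (by omega), sub_self, mul_zero]
      rw [hsingle] at hsub
      have hone : PowerSeries.coeff 0 (1+u) = 1 + PowerSeries.coeff 0 u := by
        rw [map_add, PowerSeries.coeff_one, if_pos rfl]
      have hu0 : PowerSeries.coeff 0 u = 0 := by
        rw [PowerSeries.coeff_zero_eq_constantCoeff]; exact hu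
      rw [hone, hu0, add_zero, one_mul, coeff_dF,
        coeff_dF, ← sub_mul] at hsub
      have hne : ((d:ℂ)+1) ≠ 0 := by
        have h1 : ((d + 1 : ℕ) : ℂ) ≠ 0 := Nat.cast_ne_zero.2 (by omega)
        push_cast at h1; exact h1
      rcases mul_eq_zero.1 hsub with h | h
      · exact sub_eq_zero.1 h
      · exact absurd h hne

/-! binomial series -/

def W (c : ℕ → ℂ) (q : ℂ) : PowerSeries ℂ :=
  PowerSeries.mk fun n => ∑ k ∈ Finset.range (n+1),
    (∏ i ∈ Finset.range k, (q - i)) / (k.factorial : ℂ) * PowerSeries.coeff n ((uS c)^k)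

lemma beta_rec (q : ℂ) (k : ℕ) :
    (∏ i ∈ Finset.range (k+1), (q - i)) / ((k+1).factorial : ℂ) * ((k:ℂ)+1)
      = (q - k) * ((∏ i ∈ Finset.range k, (q - i)) / (k.factorial : ℂ)) := by
  rw [Finset.prod_range_succ, Nat.factorial_succ]
  have hne : ((k:ℂ)+1) ≠ 0 := by
    have h1 : ((k + 1 : ℕ) : ℂ) ≠ 0 := Nat.cast_ne_zero.2 (by omega)
    push_cast at h1; exact h1
  have hne2 : ((k.factorial : ℂ)) ≠ 0 := Nat.cast_ne_zero.2 (Nat.factorial_ne_zero k)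
  push_cast
  field_simp

lemma coeff_W_deriv (c : ℕ → ℂ) (q : ℂ) (N : ℕ) :
    PowerSeries.coeff N (W c q).derivativeFun
      = ∑ k ∈ Finset.range (N+1), (∏ i ∈ Finset.range (k+1), (q - i)) / (((k+1).factorial : ℂ))
          * (((k:ℂ)+1) * PowerSeries.coeff N ((uS c)^k * (uS c).derivativeFun)) := by
  rw [coeff_dF, W, PowerSeries.coeff_mk, Finset.sum_mul,
    Finset.sum_range_succ']
  have h0 : (∏ i ∈ Finset.range 0, (q - i)) / ((Nat.factorial 0 : ℂ))
      * PowerSeries.coeff (N+1) ((uS c) ^ 0) * ((N:ℂ)+1) = 0 := by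
    rw [pow_zero, PowerSeries.coeff_one, if_neg (by omega)]
    simp
  rw [h0, add_zero]
  refine Finset.sum_congr rfl fun k _ => ?_
  have hd : PowerSeries.coeff (N+1) ((uS c) ^ (k+1)) * ((N:ℂ)+1)
      = PowerSeries.coeff N (((uS c) ^ (k+1)).derivativeFun) := by
    rw [coeff_dF]
  rw [mul_assoc, hd, coeff_dfun_pow]

lemma W_ode (c : ℕ → ℂ) (q : ℂ) :
    (1 + uS c) * (W c q).derivativeFun
      = (PowerSeries.C q * (uS c).derivativeFun) * W c q := by
  set u := uS c with hu
  have hu0 : PowerSeries.constantCoeff u = 0 := constantCoeff_uS c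
  ext n
  set A : ℕ → ℂ := fun k => PowerSeries.coeff n (u ^ k * u.derivativeFun) with hA
  set β : ℕ → ℂ := fun k => (∏ i ∈ Finset.range k, (q - i)) / (k.factorial : ℂ) with hβ
  have hterm2 : PowerSeries.coeff n (u * (W c q).derivativeFun)
      = ∑ k ∈ Finset.range (n+1), β (k+1) * (((k:ℂ)+1) * A (k+1)) := by
    rw [PowerSeries.coeff_mul, Finset.Nat.sum_antidiagonal_eq_sum_range_succ_mk]
    have hstep : ∀ i ∈ Finset.range (n+1),
        PowerSeries.coeff i u * PowerSeries.coeff (n-i) (W c q).derivativeFun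
        = ∑ k ∈ Finset.range (n+1), β (k+1) * (((k:ℂ)+1) *
            (PowerSeries.coeff i u * PowerSeries.coeff (n-i) (u ^ k * u.derivativeFun))) := by
      intro i hi
      rw [coeff_W_deriv]
      have hext : ∑ k ∈ Finset.range (n-i+1), (∏ x ∈ Finset.range (k+1), (q - x)) / (((k+1).factorial : ℂ))
            * (((k:ℂ)+1) * PowerSeries.coeff (n-i) (u ^ k * u.derivativeFun))
          = ∑ k ∈ Finset.range (n+1), (∏ x ∈ Finset.range (k+1), (q - x)) / (((k+1).factorial : ℂ))
            * (((k:ℂ)+1) * PowerSeries.coeff (n-i) (u ^ k * u.derivativeFun)) := by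
        refine Finset.sum_subset (Finset.range_subset_range.2 (by omega)) fun k _ hk => ?_
        rw [Finset.mem_range, not_lt] at hk
        rw [coeff_pow_mul_eq_zero hu0 (by omega), mul_zero, mul_zero]
      rw [hext, Finset.mul_sum]
      refine Finset.sum_congr rfl fun k _ => ?_
      rw [hβ]
      ring
    rw [Finset.sum_congr rfl hstep, Finset.sum_comm]
    refine Finset.sum_congr rfl fun k _ => ?_
    rw [← Finset.mul_sum]
    congr 1
    rw [← Finset.mul_sum]
    congr 1
    have hc : PowerSeries.coeff n (u * (u ^ k * u.derivativeFun))
        = ∑ i ∈ Finset.range (n+1), PowerSeries.coeff i u *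
            PowerSeries.coeff (n-i) (u ^ k * u.derivativeFun) := by
      rw [PowerSeries.coeff_mul, Finset.Nat.sum_antidiagonal_eq_sum_range_succ_mk]
    rw [← hc, hA]
    congr 1
    ring
  have hterm3 : PowerSeries.coeff n ((PowerSeries.C q * u.derivativeFun) * W c q)
      = ∑ k ∈ Finset.range (n+1), q * (β k * A k) := by
    have hinner : PowerSeries.coeff n (u.derivativeFun * W c q)
        = ∑ k ∈ Finset.range (n+1), β k * A k := by
      rw [PowerSeries.coeff_mul, Finset.Nat.sum_antidiagonal_eq_sum_range_succ_mk]
      have hstep : ∀ i ∈ Finset.range (n+1),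
          PowerSeries.coeff i u.derivativeFun * PowerSeries.coeff (n-i) (W c q)
          = ∑ k ∈ Finset.range (n+1), β k *
              (PowerSeries.coeff i u.derivativeFun * PowerSeries.coeff (n-i) (u ^ k)) := by
        intro i hi
        rw [W, PowerSeries.coeff_mk]
        have hext : ∑ k ∈ Finset.range (n-i+1), (∏ x ∈ Finset.range k, (q - x)) / ((k.factorial : ℂ))
              * PowerSeries.coeff (n-i) (u ^ k)
            = ∑ k ∈ Finset.range (n+1), (∏ x ∈ Finset.range k, (q - x)) / ((k.factorial : ℂ))
              * PowerSeries.coeff (n-i) (u ^ k) := by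
          refine Finset.sum_subset (Finset.range_subset_range.2 (by omega)) fun k _ hk => ?_
          rw [Finset.mem_range, not_lt] at hk
          rw [coeff_pow_eq_zero hu0 (by omega), mul_zero]
        rw [hext, Finset.mul_sum]
        refine Finset.sum_congr rfl fun k _ => ?_
        rw [hβ]
        ring
      rw [Finset.sum_congr rfl hstep]
      rw [Finset.sum_comm]
      refine Finset.sum_congr rfl fun k _ => ?_
      rw [← Finset.mul_sum]
      congr 1
      have hc : PowerSeries.coeff n (u.derivativeFun * u ^ k)
          = ∑ i ∈ Finset.range (n+1), PowerSeries.coeff i u.derivativeFun *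
              PowerSeries.coeff (n-i) (u ^ k) := by
        rw [PowerSeries.coeff_mul, Finset.Nat.sum_antidiagonal_eq_sum_range_succ_mk]
      rw [← hc, hA]
      dsimp only
      rw [mul_comm (u ^ k) u.derivativeFun]
    rw [mul_assoc, PowerSeries.coeff_C_mul, hinner, Finset.mul_sum]
  rw [add_mul, one_mul, map_add, hterm2, hterm3, coeff_W_deriv]
  have hshift : ∑ k ∈ Finset.range (n+1), β (k+1) * (((k:ℂ)+1) * A (k+1))
      = ∑ k ∈ Finset.range (n+1), β k * ((k:ℂ) * A k) := by
    have h2 : ∑ k ∈ Finset.range (n+2), β k * ((k:ℂ) * A k)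
        = ∑ k ∈ Finset.range (n+1), β (k+1) * (((k:ℂ)+1) * A (k+1)) + β 0 * ((0:ℂ) * A 0) := by
      rw [Finset.sum_range_succ']
      push_cast
      ring_nf
    have h3 : ∑ k ∈ Finset.range (n+2), β k * ((k:ℂ) * A k)
        = ∑ k ∈ Finset.range (n+1), β k * ((k:ℂ) * A k) + β (n+1) * (((n+1:ℕ):ℂ) * A (n+1)) := by
      rw [Finset.sum_range_succ]
    have hz : A (n+1) = 0 := by
      rw [hA]
      exact coeff_pow_mul_eq_zero hu0 (by omega)
    rw [hz] at h3
    simp only [Nat.cast_zero, zero_mul, mul_zero, add_zero] at h2 h3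
    rw [← h2, h3]
  rw [hshift, ← Finset.sum_add_distrib]
  refine Finset.sum_congr rfl fun k _ => ?_
  have := beta_rec q k
  have hβk : β (k+1) * (((k:ℂ)+1) * A k) = (q - k) * β k * A k := by
    rw [hβ]
    dsimp only
    rw [← mul_assoc, this]
    try ring
  rw [hβk]
  try ring

lemma coeff_zero_log (u : PowerSeries ℂ) : PowerSeries.coeff 0 (logOneAddPS u) = 0 := by
  rw [logOneAddPS, PowerSeries.coeff_mk, Finset.sum_range_one]
  norm_num

lemma coeff_zero_expPS (v : PowerSeries ℂ) : PowerSeries.coeff 0 (expPS v) = 1 := by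
  rw [expPS, PowerSeries.coeff_mk, Finset.sum_range_one, pow_zero, PowerSeries.coeff_one,
    if_pos rfl]
  norm_num

lemma opp_ode (c : ℕ → ℂ) (q : ℂ) :
    (1 + uS c) * (onePlusPow (uS c) q).derivativeFun
      = (PowerSeries.C q * (uS c).derivativeFun) * onePlusPow (uS c) q := by
  have hv0 : PowerSeries.constantCoeff (PowerSeries.C q * logOneAddPS (uS c)) = 0 := by
    rw [map_mul]
    have : PowerSeries.constantCoeff (logOneAddPS (uS c)) = 0 := by
      rw [← PowerSeries.coeff_zero_eq_constantCoeff]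
      exact coeff_zero_log _
    rw [this, mul_zero]
  have hdC : (PowerSeries.C q * logOneAddPS (uS c)).derivativeFun
      = PowerSeries.C q * (logOneAddPS (uS c)).derivativeFun := by
    rw [PowerSeries.derivativeFun_mul, dF_C]
    rw [smul_eq_mul, smul_eq_mul, mul_zero, add_zero]
  rw [onePlusPow, dexp hv0, hdC]
  have hassoc : (1 + uS c) * (PowerSeries.C q * (logOneAddPS (uS c)).derivativeFun
      * expPS (PowerSeries.C q * logOneAddPS (uS c)))
      = PowerSeries.C q * ((1 + uS c) * (logOneAddPS (uS c)).derivativeFun)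
        * expPS (PowerSeries.C q * logOneAddPS (uS c)) := by
    ring
  rw [hassoc, dlog (constantCoeff_uS c)]

lemma opp_eq_W (c : ℕ → ℂ) (q : ℂ) : onePlusPow (uS c) q = W c q := by
  refine ode_unique (constantCoeff_uS c) (opp_ode c q) (W_ode c q) ?_
  rw [onePlusPow, coeff_zero_expPS, W, PowerSeries.coeff_mk, Finset.sum_range_one]
  rw [pow_zero, PowerSeries.coeff_one, if_pos rfl]
  norm_num

lemma coeff_W_S (c : ℕ → ℂ) (q : ℂ) (N : ℕ) :
    PowerSeries.coeff N (W c q)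
      = ∑ m ∈ S N, (∏ i ∈ Finset.range (tm m), (q - i)) * cm c m / pf m := by
  rw [W, PowerSeries.coeff_mk]
  have hstep : ∀ k ∈ Finset.range (N+1),
      (∏ i ∈ Finset.range k, (q - i)) / (k.factorial : ℂ) * PowerSeries.coeff N ((uS c)^k)
      = ∑ m ∈ S N, (if tm m = k then (∏ i ∈ Finset.range k, (q - i)) / (k.factorial : ℂ)
          * ((k.factorial : ℂ) / pf m * cm c m) else 0) := by
    intro k _
    rw [coeff_u_pow, Finset.mul_sum]
    refine Finset.sum_congr rfl fun m _ => ?_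
    by_cases h : tm m = k
    · rw [if_pos h, if_pos h]
    · rw [if_neg h, if_neg h, mul_zero]
  rw [Finset.sum_congr rfl hstep, Finset.sum_comm]
  refine Finset.sum_congr rfl fun m hm => ?_
  have hmem : tm m ∈ Finset.range (N+1) := by
    rw [Finset.mem_range]
    rw [mem_S] at hm
    have := tm_le_wd hm.1
    omega
  rw [Finset.sum_ite_eq (Finset.range (N+1)) (tm m), if_pos hmem]
  have hfac : ((tm m).factorial : ℂ) ≠ 0 := Nat.cast_ne_zero.2 (Nat.factorial_ne_zero _)
  field_simp [pf_ne_zero m]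

def BODY (c : ℕ → ℂ) (p : ℂ) (m : ℕ →₀ ℕ) : ℂ :=
  (-1 : ℂ) ^ (tm m + 1) * (∏ i ∈ Finset.range (tm m - 1), (p + (i:ℂ))) *
    ((wd m : ℂ) + (wd2 m : ℂ)) * cm c m / pf m

lemma neg_prod (p : ℂ) (k : ℕ) :
    ∏ i ∈ Finset.range k, (-p - (i:ℂ)) = (-1)^k * ∏ i ∈ Finset.range k, (p + (i:ℂ)) := by
  induction k with
  | zero => simp
  | succ k IH =>
    rw [Finset.prod_range_succ, Finset.prod_range_succ, IH, pow_succ]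
    ring

lemma coeff_Xfpp (c : ℕ → ℂ) (j : ℕ) :
    PowerSeries.coeff j (PowerSeries.X * (fSeries c).derivativeFun.derivativeFun)
      = if j = 0 then 0 else ((j:ℂ) + (j:ℂ)^2) * c j := by
  match j with
  | 0 =>
    rw [if_pos rfl, PowerSeries.coeff_zero_eq_constantCoeff, map_mul,
      PowerSeries.constantCoeff_X, zero_mul]
  | (i+1) =>
    rw [if_neg (by omega), PowerSeries.coeff_succ_X_mul, coeff_dF,
      coeff_dF, fSeries, PowerSeries.coeff_mk,
      if_neg (by omega), if_neg (by omega)]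
    have : i + 1 + 1 - 1 = i + 1 := by omega
    rw [this]
    push_cast
    ring

/-- the sum over `S n` of `BODY` equals the coefficient-type sum. -/
lemma sum_BODY (c : ℕ → ℂ) (p : ℂ) (n : ℕ) :
    ∑ m ∈ S n, BODY c p m
      = ∑ j ∈ Finset.range (n+1), (if j = 0 then 0 else ((j:ℂ) + (j:ℂ)^2) * c j) *
          PowerSeries.coeff (n-j) (W c (-p)) := by
  have hper : ∀ m ∈ S n, BODY c p m
      = ∑ j ∈ Finset.range (n+1), (m j : ℂ) * (((j:ℂ)+(j:ℂ)^2) *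
          ((-1:ℂ)^(tm m + 1) * (∏ i ∈ Finset.range (tm m - 1), (p + (i:ℂ))) *
            cm c m / pf m)) := by
    intro m hm
    rw [mem_S] at hm
    have hw1 : (wd m : ℕ) = ∑ j ∈ Finset.range (n+1), j * m j := by
      rw [wd, Finsupp.sum]
      exact Finset.sum_subset (support_subset_range hm.2)
        (fun x _ hx => by rw [Finsupp.notMem_support_iff.1 hx, mul_zero])
    have hw2 : (wd2 m : ℕ) = ∑ j ∈ Finset.range (n+1), j^2 * m j := by
      rw [wd2, Finsupp.sum]
      exact Finset.sum_subset (support_subset_range hm.2)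
        (fun x _ hx => by rw [Finsupp.notMem_support_iff.1 hx, mul_zero])
    have hms : (wd m : ℂ) + (wd2 m : ℂ)
        = ∑ j ∈ Finset.range (n+1), ((j:ℂ)+(j:ℂ)^2) * (m j : ℂ) := by
      rw [hw1, hw2]
      push_cast
      rw [← Finset.sum_add_distrib]
      refine Finset.sum_congr rfl fun j _ => ?_
      ring
    rw [BODY, hms, Finset.mul_sum, Finset.sum_mul, Finset.sum_div]
    refine Finset.sum_congr rfl fun j _ => ?_
    ring
  rw [Finset.sum_congr rfl hper, Finset.sum_comm]
  refine Finset.sum_congr rfl fun j hj => ?_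
  rcases Nat.eq_zero_or_pos j with rfl | hjpos
  · rw [if_pos rfl, zero_mul]
    refine Finset.sum_eq_zero fun m hm => ?_
    rw [(mem_S.1 hm).1]
    simp
  · rw [if_neg (by omega)]
    have hjn : j ≤ n := by rw [Finset.mem_range] at hj; omega
    rw [pointing _ hjpos hjn]
    have hper2 : ∀ m ∈ S (n - j), ((m j : ℂ) + 1) * (((j:ℂ)+(j:ℂ)^2) *
          ((-1:ℂ)^(tm (m + Finsupp.single j 1) + 1) *
            (∏ i ∈ Finset.range (tm (m + Finsupp.single j 1) - 1), (p + (i:ℂ))) *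
            cm c (m + Finsupp.single j 1) / pf (m + Finsupp.single j 1)))
        = (((j:ℂ)+(j:ℂ)^2) * c j) *
            ((∏ i ∈ Finset.range (tm m), (-p - (i:ℂ))) * cm c m / pf m) := by
      intro m _
      have htm : tm (m + Finsupp.single j 1) = tm m + 1 := by rw [tm_add, tm_single]
      rw [htm, pf_add_single, cm_add_single, neg_prod]
      have h1 : tm m + 1 - 1 = tm m := by omega
      rw [h1]
      have hne : ((m j : ℂ) + 1) ≠ 0 := by
        have h2 : ((m j + 1 : ℕ) : ℂ) ≠ 0 := Nat.cast_ne_zero.2 (by omega)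
        push_cast at h2; exact h2
      have hpow : (-1:ℂ)^(tm m + 1 + 1) = (-1:ℂ)^(tm m) := by
        rw [show tm m + 1 + 1 = tm m + 2 by omega, pow_add]
        norm_num
      rw [hpow]
      field_simp [pf_ne_zero m]
    rw [Finset.sum_congr rfl hper2, ← Finset.mul_sum]
    rw [coeff_W_S c (-p) (n-j)]

lemma finsum_BODY (c : ℕ → ℂ) (p : ℂ) (n : ℕ) :
    (∑ᶠ (m : ℕ →₀ ℕ) (_ : m ≠ 0 ∧ m 0 = 0 ∧ wd m = n), BODY c p m)
      = ∑ m ∈ S n, BODY c p m := by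
  classical
  have h2 : ∀ m : ℕ →₀ ℕ, (∑ᶠ (_ : m ≠ 0 ∧ m 0 = 0 ∧ wd m = n), BODY c p m)
      = if (m ≠ 0 ∧ m 0 = 0 ∧ wd m = n) then BODY c p m else 0 := fun m => finsum_eq_if
  rw [finsum_congr h2]
  rw [finsum_eq_sum_of_support_subset _ (s := S n) ?_]
  · refine Finset.sum_congr rfl fun m hm => ?_
    rw [mem_S] at hm
    by_cases h0 : m = 0
    · rw [if_neg (by tauto)]
      subst h0
      rw [BODY]
      simp [wd, wd2]
    · rw [if_pos ⟨h0, hm.1, hm.2⟩]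
  · intro m hm
    rw [Function.mem_support] at hm
    by_cases hP : (m ≠ 0 ∧ m 0 = 0 ∧ wd m = n)
    · exact Finset.mem_coe.mpr (mem_S.2 ⟨hP.2.1, hP.2.2⟩)
    · rw [if_neg hP] at hm
      exact absurd rfl hm

end
end ZF

/-- For `f(z) = z + c₁z² + ⋯` and `p ∈ ℂ`, the coefficient of `zⁿ` in
`z^{p+1} f''(z)/f(z)^p` equals `∑_{m : ‖m‖ = n} 𝔟_m(p) c^m / ∏ⱼ mⱼ!`, where for
`|m| ≥ 1`, `𝔟_m(p) = (−1)^{|m|+1} (∏_{i=0}^{|m|−2}(p+i)) (M₁ + M₂)` (the falling-type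
product `p(p+1)⋯(p+|m|−2)` having `|m|−1` factors, `1` when `|m| = 1`), with
`M₁ = ∑ j·mⱼ`, `M₂ = ∑ j²·mⱼ`, and the term for `m = 0` is zero. -/
theorem coeff_z_fsecond_over_f (c : ℕ → ℂ) (p : ℂ) (n : ℕ) :
    PowerSeries.coeff n (GSeries c p) =
      ∑ᶠ (m : ℕ →₀ ℕ) (_ : m ≠ 0 ∧ m 0 = 0 ∧ (m.sum fun j e => j * e) = n),
        (-1 : ℂ) ^ ((m.sum fun _ e => e) + 1) *
          (∏ i ∈ Finset.range ((m.sum fun _ e => e) - 1), (p + i)) *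
          (((m.sum fun j e => j * e : ℕ) : ℂ) + ((m.sum fun j e => j ^ 2 * e : ℕ) : ℂ)) *
          (∏ j ∈ m.support, c j ^ m j) / ∏ j ∈ m.support, ((m j).factorial : ℂ) := by
  show PowerSeries.coeff n (GSeries c p)
      = ∑ᶠ (m : ℕ →₀ ℕ) (_ : m ≠ 0 ∧ m 0 = 0 ∧ ZF.wd m = n), ZF.BODY c p m
  rw [ZF.finsum_BODY, ZF.sum_BODY]
  rw [GSeries]
  have hu : (PowerSeries.mk fun j => if j = 0 then 0 else c j) = ZF.uS c := rfl
  rw [hu, ZF.opp_eq_W]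
  rw [PowerSeries.coeff_mul, Finset.Nat.sum_antidiagonal_eq_sum_range_succ_mk]
  refine Finset.sum_congr rfl fun j _ => ?_
  rw [ZF.coeff_Xfpp]
end

section
/- Let f(z) = z + c_1 z² + c_2 z³ + … be a formal power series over ℂ and define the Schwarzian-type series S_f(z) := 2 f'''(z)/f'(z) − 3 (f''(z)/f'(z))², where 1/f'(z) is the formal inverse of f'(z) (which has constant term 1). Then z² S_f(z) = ∑_{m ≠ 0} 𝔡_m · (∏_j (j+1)^{m_j} / ∏_j m_j!) · c^m · z^{‖m‖}, where the sum is over nonzero finitely supported sequences m of nonnegative integers and 𝔡_m = (−1)^{|m|} (|m|−1)! · (M_2 − 3M_1² + 2M_1). -/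
open PowerSeries Finset

/-- The Schwarzian-type series `S_f(z) = 2 f'''(z)/f'(z) − 3 (f''(z)/f'(z))²`, where
`1/f'(z)` is the formal inverse of `f'(z)` (whose constant term is `1`). -/
noncomputable def schwarzian (c : ℕ → ℂ) : PowerSeries ℂ :=
  2 * (fSeries c).derivativeFun.derivativeFun.derivativeFun *
      ((fSeries c).derivativeFun.invOfUnit 1) -
    3 * ((fSeries c).derivativeFun.derivativeFun * ((fSeries c).derivativeFun.invOfUnit 1)) ^ 2

namespace SchwAux

/-- total degree -/
def deg (m : ℕ →₀ ℕ) : ℕ := m.sum fun _ e => e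
/-- weighted degree -/
def wt (m : ℕ →₀ ℕ) : ℕ := m.sum fun j e => j * e

noncomputable def Scut (n : ℕ) : Finset (ℕ →₀ ℕ) :=
  ((range (n+1)).finsupp (fun _ => range (n+1))).filter
    (fun m => m 0 = 0 ∧ wt m = n)

lemma wt_eq_sum (m : ℕ →₀ ℕ) : wt m = ∑ j ∈ m.support, j * m j := rfl
lemma deg_eq_sum (m : ℕ →₀ ℕ) : deg m = ∑ j ∈ m.support, m j := rfl

lemma le_wt {m : ℕ →₀ ℕ} {j : ℕ} (hj : j ∈ m.support) : j * m j ≤ wt m :=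
  Finset.single_le_sum (f := fun j => j * m j) (fun _ _ => Nat.zero_le _) hj

lemma mem_Scut {n : ℕ} {m : ℕ →₀ ℕ} : m ∈ Scut n ↔ m 0 = 0 ∧ wt m = n := by
  constructor
  · intro h; exact (Finset.mem_filter.1 h).2
  · rintro ⟨h0, hw⟩
    refine Finset.mem_filter.2 ⟨Finset.mem_finsupp_iff.2 ⟨?_, ?_⟩, h0, hw⟩
    · intro j hj
      have hj1 : 1 ≤ j := by
        rcases Nat.eq_zero_or_pos j with rfl | h
        · exact absurd h0 (Finsupp.mem_support_iff.1 hj)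
        · exact h
      have := le_wt hj
      have hmj : 1 ≤ m j := Nat.one_le_iff_ne_zero.2 (Finsupp.mem_support_iff.1 hj)
      rw [hw] at this
      simp only [Finset.mem_range]
      have : j * 1 ≤ n := le_trans (Nat.mul_le_mul_left j hmj) this
      omega
    · intro i _
      simp only [Finset.mem_range]
      by_cases hi : i ∈ m.support
      · have hi1 : 1 ≤ i := by
          rcases Nat.eq_zero_or_pos i with rfl | h
          · exact absurd h0 (Finsupp.mem_support_iff.1 hi)
          · exact h
        have := le_wt hi
        rw [hw] at this
        have : 1 * m i ≤ n := le_trans (Nat.mul_le_mul_right (m i) hi1) this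
        omega
      · simp [Finsupp.notMem_support_iff.1 hi]

lemma support_subset_of_mem_Scut {n : ℕ} {m : ℕ →₀ ℕ} (h : m ∈ Scut n) :
    m.support ⊆ range (n+1) :=
  (Finset.mem_finsupp_iff.1 (Finset.mem_filter.1 h).1).1

lemma Scut_zero : Scut 0 = {0} := by
  ext m
  simp only [mem_Scut, Finset.mem_singleton]
  constructor
  · rintro ⟨h0, hw⟩
    ext j
    by_contra hj
    have hj' : j ∈ m.support := Finsupp.mem_support_iff.2 (by simpa using hj)
    have := le_wt hj'
    rw [hw, Nat.le_zero] at this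
    have hj1 : j ≠ 0 := fun h => by simp [h, h0] at hj
    have : m j = 0 := by
      rcases Nat.mul_eq_zero.1 this with h | h
      · exact absurd h hj1
      · exact h
    simp [this] at hj
  · rintro rfl; simp [wt]

/-- The basic weighted sum. -/
noncomputable def Bsum (t : ℕ → ℂ) (n : ℕ) (W : (ℕ →₀ ℕ) → ℂ) : ℂ :=
  ∑ m ∈ Scut n, W m *
    ((∏ j ∈ m.support, t j ^ m j) / ∏ j ∈ m.support, ((m j).factorial : ℂ))

lemma wt_add (m m' : ℕ →₀ ℕ) : wt (m + m') = wt m + wt m' :=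
  Finsupp.sum_add_index' (fun _ => Nat.mul_zero _) (fun a b₁ b₂ => Nat.mul_add a b₁ b₂)

lemma deg_add (m m' : ℕ →₀ ℕ) : deg (m + m') = deg m + deg m' :=
  Finsupp.sum_add_index' (fun _ => rfl) (fun _ _ _ => rfl)

lemma wt_single (k e : ℕ) : wt (Finsupp.single k e) = k * e :=
  Finsupp.sum_single_index (Nat.mul_zero _)

lemma deg_single (k e : ℕ) : deg (Finsupp.single k e) = e :=
  Finsupp.sum_single_index rfl

lemma prod_pow_add_single (t : ℕ → ℂ) (m' : ℕ →₀ ℕ) (k : ℕ) :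
    ∏ j ∈ (m' + Finsupp.single k 1).support, t j ^ ((m' + Finsupp.single k 1) : ℕ →₀ ℕ) j
      = t k * ∏ j ∈ m'.support, t j ^ m' j := by
  have h1 : ((m' + Finsupp.single k 1).prod fun j e => t j ^ e)
      = (m'.prod fun j e => t j ^ e) * ((Finsupp.single k 1).prod fun j e => t j ^ e) :=
    Finsupp.prod_add_index' (fun _ => pow_zero _) (fun a b₁ b₂ => pow_add _ _ _)
  have h2 : ((Finsupp.single k 1).prod fun j e => t j ^ e) = t k ^ 1 :=
    Finsupp.prod_single_index (pow_zero _)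
  change ((m' + Finsupp.single k 1).prod fun j e => t j ^ e) = _
  rw [h1, h2, pow_one, mul_comm]
  rfl

lemma prod_factorial_add_single (m' : ℕ →₀ ℕ) {N k : ℕ} (hs : m'.support ⊆ range N)
    (hk : k ∈ range N) :
    ∏ j ∈ (m' + Finsupp.single k 1).support, (((((m' + Finsupp.single k 1) : ℕ →₀ ℕ)) j).factorial : ℂ)
      = ((m' k : ℂ) + 1) * ∏ j ∈ m'.support, ((m' j).factorial : ℂ) := by
  set m := m' + Finsupp.single k 1 with hm
  have hsm : m.support ⊆ range N := by
    refine subset_trans Finsupp.support_add ?_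
    exact Finset.union_subset hs (subset_trans Finsupp.support_single_subset (by simpa using hk))
  have e1 : ∏ j ∈ m.support, ((m j).factorial : ℂ) = ∏ j ∈ range N, ((m j).factorial : ℂ) :=
    Finsupp.prod_of_support_subset m hsm (fun j e => ((e.factorial : ℂ))) (fun i _ => by simp)
  have e2 : ∏ j ∈ m'.support, ((m' j).factorial : ℂ) = ∏ j ∈ range N, ((m' j).factorial : ℂ) :=
    Finsupp.prod_of_support_subset m' hs (fun j e => ((e.factorial : ℂ))) (fun i _ => by simp)
  rw [e1, e2, ← Finset.mul_prod_erase (range N) _ hk, ← Finset.mul_prod_erase (range N) _ hk]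
  have hmk : m k = m' k + 1 := by simp [hm]
  have : ∏ j ∈ (range N).erase k, ((m j).factorial : ℂ)
      = ∏ j ∈ (range N).erase k, ((m' j).factorial : ℂ) := by
    refine Finset.prod_congr rfl fun j hj => ?_
    have hkj : ¬ k = j := fun h => (Finset.ne_of_mem_erase hj) h.symm
    have : m j = m' j := by
      simp [hm, Finsupp.single_apply, hkj]
    rw [this]
  rw [this, hmk, Nat.factorial_succ]
  push_cast
  ring

/-- The key reindexing lemma. -/
lemma reindex (t : ℕ → ℂ) (q : ℕ → ℂ) (W : (ℕ →₀ ℕ) → ℂ) (n : ℕ) :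
    ∑ k ∈ Icc 1 n, q k * t k * Bsum t (n-k) W
      = Bsum t n (fun m => ∑ k ∈ m.support, q k * (m k : ℂ) * W (m - Finsupp.single k 1)) := by
  unfold Bsum
  simp_rw [Finset.mul_sum, Finset.sum_mul]
  rw [Finset.sum_sigma', Finset.sum_sigma']
  refine Finset.sum_nbij' (fun p => ⟨p.2 + Finsupp.single p.1 1, p.1⟩)
    (fun p => ⟨p.2, p.1 - Finsupp.single p.2 1⟩) ?_ ?_ ?_ ?_ ?_
  · rintro ⟨k, m'⟩ hp
    simp only [Finset.mem_sigma, Finset.mem_Icc] at hp ⊢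
    obtain ⟨⟨hk1, hkn⟩, hm'⟩ := hp
    rw [mem_Scut] at hm'
    constructor
    · rw [mem_Scut]
      constructor
      · simp [Finsupp.single_apply, hm'.1, Nat.one_le_iff_ne_zero.1 hk1]
      · rw [wt_add, wt_single, hm'.2]; omega
    · simp [Finsupp.mem_support_iff]
  · rintro ⟨m, k⟩ hp
    simp only [Finset.mem_sigma] at hp ⊢
    obtain ⟨hm, hk⟩ := hp
    rw [mem_Scut] at hm
    have hk0 : k ≠ 0 := fun h => by
      subst h; exact (Finsupp.mem_support_iff.1 hk) hm.1
    have hkmk : k * m k ≤ n := hm.2 ▸ le_wt hk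
    have hmk1 : 1 ≤ m k := Nat.one_le_iff_ne_zero.2 (Finsupp.mem_support_iff.1 hk)
    have hkn : k ≤ n := le_trans (le_trans (Nat.le_mul_of_pos_right k hmk1) le_rfl) hkmk
    have hle : Finsupp.single k 1 ≤ m := Finsupp.single_le_iff.2 hmk1
    have hsub : m - Finsupp.single k 1 + Finsupp.single k 1 = m := tsub_add_cancel_of_le hle
    constructor
    · simp only [Finset.mem_Icc]
      exact ⟨Nat.one_le_iff_ne_zero.2 hk0, hkn⟩
    · rw [mem_Scut]
      constructor
      · rw [Finsupp.coe_tsub]; simp [Finsupp.single_apply, hm.1, hk0]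
      · have := wt_add (m - Finsupp.single k 1) (Finsupp.single k 1)
        rw [hsub, wt_single, hm.2] at this
        omega
  · rintro ⟨k, m'⟩ hp
    simp only [Finset.mem_sigma, Finset.mem_Icc] at hp
    simp only [Sigma.mk.inj_iff, heq_eq_eq, add_tsub_cancel_right, and_true, true_and]
    try exact ⟨trivial, trivial⟩
    try trivial
  · rintro ⟨m, k⟩ hp
    simp only [Finset.mem_sigma] at hp
    obtain ⟨hm, hk⟩ := hp
    rw [mem_Scut] at hm
    have hmk1 : 1 ≤ m k := Nat.one_le_iff_ne_zero.2 (Finsupp.mem_support_iff.1 hk)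
    have hle : Finsupp.single k 1 ≤ m := Finsupp.single_le_iff.2 hmk1
    simp only [Sigma.mk.inj_iff, heq_eq_eq]
    refine ⟨tsub_add_cancel_of_le hle, ?_⟩
    try rfl
    try trivial
  · rintro ⟨k, m'⟩ hp
    simp only [Finset.mem_sigma, Finset.mem_Icc] at hp
    obtain ⟨⟨hk1, hkn⟩, hm'⟩ := hp
    have hsupp : m'.support ⊆ range (n+1) :=
      subset_trans (support_subset_of_mem_Scut hm') (by
        intro x hx; simp only [Finset.mem_range] at hx ⊢; omega)
    have hkr : k ∈ range (n+1) := by simp only [Finset.mem_range]; omega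
    have hP := prod_pow_add_single t m' k
    have hF := prod_factorial_add_single m' hsupp hkr
    rw [add_tsub_cancel_right, hP, hF]
    have happ : ((m' + Finsupp.single k 1) : ℕ →₀ ℕ) k = m' k + 1 := by simp
    rw [happ]
    have hFne : (∏ j ∈ m'.support, ((m' j).factorial : ℂ)) ≠ 0 :=
      Finset.prod_ne_zero_iff.2 fun j _ => Nat.cast_ne_zero.2 (Nat.factorial_ne_zero _)
    have hmk1 : ((m' k : ℂ) + 1) ≠ 0 := by
      have : ((m' k : ℂ) + 1) = ((m' k + 1 : ℕ) : ℂ) := by push_cast; ring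
      rw [this]
      exact Nat.cast_ne_zero.2 (Nat.succ_ne_zero _)
    push_cast
    field_simp

noncomputable def Wv (m : ℕ →₀ ℕ) : ℂ := (-1)^(deg m) * ((deg m).factorial : ℂ)

lemma deg_sub_single {m : ℕ →₀ ℕ} {k : ℕ} (hk : k ∈ m.support) :
    deg (m - Finsupp.single k 1) + 1 = deg m := by
  have hle : Finsupp.single k 1 ≤ m :=
    Finsupp.single_le_iff.2 (Nat.one_le_iff_ne_zero.2 (Finsupp.mem_support_iff.1 hk))
  have := deg_add (m - Finsupp.single k 1) (Finsupp.single k 1)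
  rw [tsub_add_cancel_of_le hle, deg_single] at this
  omega

lemma one_le_deg {m : ℕ →₀ ℕ} (hm : m ≠ 0) : 1 ≤ deg m := by
  obtain ⟨k, hk⟩ := Finsupp.support_nonempty_iff.2 hm
  have h1 : m k ≤ deg m := by
    rw [deg_eq_sum]
    exact Finset.single_le_sum (fun _ _ => Nat.zero_le _) hk
  have := Nat.one_le_iff_ne_zero.2 (Finsupp.mem_support_iff.1 hk)
  omega

lemma cast_deg (m : ℕ →₀ ℕ) : ((deg m : ℂ)) = ∑ k ∈ m.support, (m k : ℂ) := by
  rw [deg_eq_sum]; push_cast; rfl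

/-- pointwise weight identity -/
lemma weight_sum (p : ℕ → ℂ) {m : ℕ →₀ ℕ} :
    ∑ k ∈ m.support, p k * (m k : ℂ) * Wv (m - Finsupp.single k 1)
      = -((-1)^(deg m) * (((deg m) - 1).factorial : ℂ) * ∑ k ∈ m.support, p k * (m k : ℂ)) := by
  rcases eq_or_ne m 0 with rfl | hm
  · simp
  · obtain ⟨e, he⟩ : ∃ e, deg m = e + 1 := ⟨deg m - 1, by have := one_le_deg hm; omega⟩
    have hterm : ∀ k ∈ m.support, p k * (m k : ℂ) * Wv (m - Finsupp.single k 1)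
        = ((-1)^e * (e.factorial : ℂ)) * (p k * (m k : ℂ)) := by
      intro k hk
      have hd : deg (m - Finsupp.single k 1) = e := by
        have := deg_sub_single hk; omega
      rw [Wv, hd]; ring
    rw [Finset.sum_congr rfl hterm, ← Finset.mul_sum, he]
    have : (e + 1 - 1).factorial = e.factorial := by simp
    rw [this, pow_succ]
    ring

lemma sum_weight_Wv {m : ℕ →₀ ℕ} (hm : m ≠ 0) :
    ∑ k ∈ m.support, (1 : ℂ) * (m k : ℂ) * Wv (m - Finsupp.single k 1) = -Wv m := by
  rw [weight_sum (fun _ => (1:ℂ))]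
  simp only [one_mul]
  rw [← cast_deg]
  obtain ⟨e, he⟩ : ∃ e, deg m = e + 1 := ⟨deg m - 1, by have := one_le_deg hm; omega⟩
  rw [Wv, he]
  have : (e + 1 - 1).factorial = e.factorial := by simp
  rw [this]
  push_cast [Nat.factorial_succ, pow_succ]
  ring

variable {φ : PowerSeries ℂ}

lemma coeff_v (hφ : constantCoeff φ = 1) :
    ∀ n, coeff n (invOfUnit φ 1) = Bsum (fun k => coeff k φ) n Wv := by
  intro n
  induction n using Nat.strong_induction_on with
  | _ n ih =>
    rcases n with _ | n
    · rw [coeff_invOfUnit, if_pos rfl]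
      rw [Bsum, Scut_zero]
      simp [Wv, deg, Finsupp.sum]
    · rw [coeff_invOfUnit, if_neg (Nat.succ_ne_zero n)]
      rw [Finset.Nat.sum_antidiagonal_eq_sum_range_succ_mk]
      have hstep : ∀ k ∈ range (n+2),
          (if (n+1-k : ℕ) < n+1 then
              coeff k φ * coeff (n+1-k) (invOfUnit φ 1) else 0)
          = if k ∈ Icc 1 (n+1) then
              (1:ℂ) * coeff k φ * Bsum (fun k => coeff k φ) (n+1-k) Wv else 0 := by
        intro k hk
        simp only [Finset.mem_range] at hk
        by_cases h1 : 1 ≤ k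
        · have hlt : n+1-k < n+1 := by omega
          rw [if_pos hlt, if_pos (Finset.mem_Icc.2 ⟨h1, by omega⟩), ih _ hlt, one_mul]
        · have hk0 : k = 0 := by omega
          subst hk0
          rw [if_neg (by omega), if_neg (by simp)]
      rw [Finset.sum_congr rfl hstep, Finset.sum_ite_mem]
      have hinter : range (n+2) ∩ Icc 1 (n+1) = Icc 1 (n+1) := by
        ext k; simp only [Finset.mem_inter, Finset.mem_range, Finset.mem_Icc]; omega
      rw [hinter, reindex]
      have hu : (((1:ℂˣ)⁻¹ : ℂˣ) : ℂ) = 1 := by simp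
      rw [hu, Bsum, Bsum, Finset.mul_sum]
      refine Finset.sum_congr rfl fun m hm => ?_
      have hm0 : m ≠ 0 := by
        intro h
        have := (mem_Scut.1 hm).2
        rw [h] at this
        simp [wt] at this
      rw [sum_weight_Wv hm0]
      ring

/-- The master lemma. -/
lemma coeff_mul_v (hφ : constantCoeff φ = 1) (p : ℕ → ℂ) (hp : p 0 = 0)
    (G : PowerSeries ℂ) (hG : ∀ k, coeff k G = p k * coeff k φ) (n : ℕ) :
    coeff n (G * invOfUnit φ 1)
      = -Bsum (fun k => coeff k φ) n
          (fun m => (-1)^(deg m) * (((deg m) - 1).factorial : ℂ)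
            * ∑ k ∈ m.support, p k * (m k : ℂ)) := by
  rw [coeff_mul, Finset.Nat.sum_antidiagonal_eq_sum_range_succ_mk]
  have hrange : range (n+1) = insert 0 (Icc 1 n) := by
    ext k; simp only [Finset.mem_insert, Finset.mem_Icc, Finset.mem_range]; omega
  have hstep : ∀ k, coeff k G * coeff (n-k) (invOfUnit φ 1)
      = p k * coeff k φ * Bsum (fun k => coeff k φ) (n-k) Wv := by
    intro k
    rw [hG, coeff_v hφ]
  simp only [hstep]
  rw [hrange, Finset.sum_insert (by simp), hp]
  simp only [zero_mul]
  rw [zero_add, reindex]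
  rw [Bsum, Bsum, ← Finset.sum_neg_distrib]
  refine Finset.sum_congr rfl fun m hm => ?_
  rw [weight_sum p]
  ring

lemma coeff_derivativeFun' (f : PowerSeries ℂ) (n : ℕ) :
    coeff n f.derivativeFun = coeff (n + 1) f * (n + 1) :=
  coeff_derivative f n

lemma derivativeFun_X' : (PowerSeries.X : PowerSeries ℂ).derivativeFun = 1 := by
  ext n
  rw [coeff_derivativeFun']
  rcases n with _ | n <;> simp [coeff_X]

lemma coeff_X_mul_derivativeFun (f : PowerSeries ℂ) (k : ℕ) :
    coeff k (PowerSeries.X * f.derivativeFun) = (k : ℂ) * coeff k f := by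
  rcases k with _ | k
  · simp [map_mul]
  · rw [coeff_succ_X_mul, coeff_derivativeFun']
    push_cast
    ring

lemma constantCoeff_u (c : ℕ → ℂ) : constantCoeff (fSeries c).derivativeFun = 1 := by
  rw [← coeff_zero_eq_constantCoeff_apply, coeff_derivativeFun', fSeries, coeff_mk]
  norm_num

lemma coeff_u (c : ℕ → ℂ) {k : ℕ} (hk : k ≠ 0) :
    coeff k (fSeries c).derivativeFun = ((k : ℂ) + 1) * c k := by
  rw [coeff_derivativeFun', fSeries, coeff_mk]
  rw [if_neg (by omega), if_neg (by omega)]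
  have : k + 1 - 1 = k := by omega
  rw [this]
  push_cast
  ring

end SchwAux

open SchwAux in
/-- For `f(z) = z + c₁z² + ⋯`,
`z² S_f(z) = ∑_{m ≠ 0} 𝔡_m (∏ⱼ(j+1)^{mⱼ}/∏ⱼ mⱼ!) c^m z^{‖m‖}` with
`𝔡_m = (−1)^{|m|} (|m|−1)! (M₂ − 3M₁² + 2M₁)`; coefficientwise, for every `n` the
coefficient of `zⁿ` in `z² S_f(z)` equals the sum of
`𝔡_m (∏(j+1)^{mⱼ}/∏ mⱼ!) c^m` over nonzero finitely supported `m` with `‖m‖ = n`. -/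
theorem coeff_schwarzian (c : ℕ → ℂ) (n : ℕ) :
    PowerSeries.coeff n (PowerSeries.X ^ 2 * schwarzian c) =
      ∑ᶠ (m : ℕ →₀ ℕ) (_ : m ≠ 0 ∧ m 0 = 0 ∧ (m.sum fun j e => j * e) = n),
        (-1 : ℂ) ^ (m.sum fun _ e => e) * (((m.sum fun _ e => e) - 1).factorial : ℂ) *
          (((m.sum fun j e => j ^ 2 * e : ℕ) : ℂ) -
            3 * ((m.sum fun j e => j * e : ℕ) : ℂ) ^ 2 +
            2 * ((m.sum fun j e => j * e : ℕ) : ℂ)) *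
          ((∏ j ∈ m.support, ((j : ℂ) + 1) ^ m j) / ∏ j ∈ m.support, ((m j).factorial : ℂ)) *
          ∏ j ∈ m.support, c j ^ m j := by
  classical
  have hu0 : constantCoeff (fSeries c).derivativeFun = 1 := constantCoeff_u c
  have huv : (fSeries c).derivativeFun * (fSeries c).derivativeFun.invOfUnit 1 = 1 :=
    PowerSeries.mul_invOfUnit _ 1 (by rw [hu0]; rfl)
  -- abbreviations (plain let-style haves)
  -- derivative of the inverse
  have hD : (fSeries c).derivativeFun * ((fSeries c).derivativeFun.invOfUnit 1).derivativeFun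
      + ((fSeries c).derivativeFun.invOfUnit 1) * (fSeries c).derivativeFun.derivativeFun = 0 := by
    have h0 := PowerSeries.derivativeFun_mul (fSeries c).derivativeFun
      ((fSeries c).derivativeFun.invOfUnit 1)
    rw [huv, PowerSeries.derivativeFun_one, smul_eq_mul, smul_eq_mul] at h0
    linear_combination -h0
  have hI3 : ((fSeries c).derivativeFun.invOfUnit 1).derivativeFun
      = -((fSeries c).derivativeFun.derivativeFun
          * ((fSeries c).derivativeFun.invOfUnit 1)^2) := by
    linear_combination ((fSeries c).derivativeFun.invOfUnit 1) * hD
      - ((fSeries c).derivativeFun.invOfUnit 1).derivativeFun * huv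
  -- the two auxiliary series
  have hI4 : PowerSeries.X ^ 2 * schwarzian c
      = 2 * (((PowerSeries.X * (PowerSeries.X * (fSeries c).derivativeFun.derivativeFun).derivativeFun)
              - (PowerSeries.X * (fSeries c).derivativeFun.derivativeFun))
            * ((fSeries c).derivativeFun.invOfUnit 1))
        - 3 * ((PowerSeries.X * (fSeries c).derivativeFun.derivativeFun)
            * ((fSeries c).derivativeFun.invOfUnit 1))^2 := by
    unfold schwarzian
    rw [PowerSeries.derivativeFun_mul PowerSeries.X (fSeries c).derivativeFun.derivativeFun,
      derivativeFun_X', smul_eq_mul, smul_eq_mul]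
    ring
  have hI5 : ((PowerSeries.X * (fSeries c).derivativeFun.derivativeFun)
          * ((fSeries c).derivativeFun.invOfUnit 1))^2
      = (PowerSeries.X * (PowerSeries.X * (fSeries c).derivativeFun.derivativeFun).derivativeFun)
          * ((fSeries c).derivativeFun.invOfUnit 1)
        - PowerSeries.X * ((PowerSeries.X * (fSeries c).derivativeFun.derivativeFun)
          * ((fSeries c).derivativeFun.invOfUnit 1)).derivativeFun := by
    rw [PowerSeries.derivativeFun_mul
        (PowerSeries.X * (fSeries c).derivativeFun.derivativeFun)
        ((fSeries c).derivativeFun.invOfUnit 1),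
      smul_eq_mul, smul_eq_mul, hI3,
      PowerSeries.derivativeFun_mul PowerSeries.X (fSeries c).derivativeFun.derivativeFun,
      derivativeFun_X', smul_eq_mul, smul_eq_mul]
    ring
  -- coefficient computations
  have hB1 := coeff_mul_v hu0 (fun k => (k:ℂ)) (by norm_num)
    (PowerSeries.X * (fSeries c).derivativeFun.derivativeFun)
    (fun k => coeff_X_mul_derivativeFun _ k) n
  have hcg2 : ∀ k, coeff k (PowerSeries.X
      * (PowerSeries.X * (fSeries c).derivativeFun.derivativeFun).derivativeFun)
      = (k:ℂ)^2 * coeff k (fSeries c).derivativeFun := by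
    intro k
    rw [coeff_X_mul_derivativeFun, coeff_X_mul_derivativeFun]
    ring
  have hB2 := coeff_mul_v hu0 (fun k => (k:ℂ)^2) (by norm_num)
    (PowerSeries.X * (PowerSeries.X * (fSeries c).derivativeFun.derivativeFun).derivativeFun)
    hcg2 n
  have hsq : coeff n (((PowerSeries.X * (fSeries c).derivativeFun.derivativeFun)
          * ((fSeries c).derivativeFun.invOfUnit 1))^2)
      = coeff n ((PowerSeries.X * (PowerSeries.X * (fSeries c).derivativeFun.derivativeFun).derivativeFun)
          * ((fSeries c).derivativeFun.invOfUnit 1))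
        - (n:ℂ) * coeff n ((PowerSeries.X * (fSeries c).derivativeFun.derivativeFun)
          * ((fSeries c).derivativeFun.invOfUnit 1)) := by
    rw [hI5, map_sub, coeff_X_mul_derivativeFun]
  -- LHS value
  have hLHS : PowerSeries.coeff n (PowerSeries.X ^ 2 * schwarzian c)
      = Bsum (fun k => coeff k (fSeries c).derivativeFun) n
          (fun m => (-1)^(deg m) * (((deg m) - 1).factorial : ℂ)
            * ∑ k ∈ m.support, (k:ℂ)^2 * (m k : ℂ))
        + (2 - 3*(n:ℂ)) * Bsum (fun k => coeff k (fSeries c).derivativeFun) n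
          (fun m => (-1)^(deg m) * (((deg m) - 1).factorial : ℂ)
            * ∑ k ∈ m.support, (k:ℂ) * (m k : ℂ)) := by
    rw [hI4, map_sub, ← map_ofNat (PowerSeries.C (R := ℂ)) 2, ← map_ofNat (PowerSeries.C (R := ℂ)) 3,
      coeff_C_mul, coeff_C_mul, hsq, sub_mul, map_sub, hB1, hB2]
    ring
  rw [hLHS]
  -- RHS: convert finsum to a Finset sum
  rw [finsum_cond_eq_sum_of_cond_iff _
    (t := (Scut n).filter (fun m => m ≠ 0)) (fun {m} _ => by
      rw [Finset.mem_filter, mem_Scut]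
      show m ≠ 0 ∧ m 0 = 0 ∧ wt m = n ↔ (m 0 = 0 ∧ wt m = n) ∧ m ≠ 0
      tauto)]
  rw [Finset.sum_filter_of_ne (by
    intro m hm hne
    rintro rfl
    apply hne
    simp [Finsupp.sum_zero_index])]
  -- now a sum over Scut n
  rw [Bsum, Bsum, Finset.mul_sum, ← Finset.sum_add_distrib]
  refine Finset.sum_congr rfl fun m hm => ?_
  obtain ⟨hm0, hmwt⟩ := mem_Scut.1 hm
  have hwtc : ((m.sum fun j e => j * e : ℕ) : ℂ) = (n : ℂ) := by
    exact_mod_cast congrArg (Nat.cast : ℕ → ℂ) hmwt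
  have hM2 : ((m.sum fun j e => j^2*e : ℕ) : ℂ) = ∑ k ∈ m.support, (k:ℂ)^2 * (m k : ℂ) := by
    rw [show (m.sum fun j e => j^2*e) = ∑ j ∈ m.support, j^2 * m j from rfl]
    push_cast
    rfl
  have hM1 : (∑ k ∈ m.support, (k:ℂ) * (m k : ℂ)) = (n:ℂ) := by
    rw [← hwtc, show (m.sum fun j e => j * e) = ∑ j ∈ m.support, j * m j from rfl]
    push_cast
    rfl
  have hdeg : (m.sum fun _ e => e) = deg m := rfl
  have hcu : ∀ j ∈ m.support, coeff j (fSeries c).derivativeFun = ((j:ℂ)+1) * c j := by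
    intro j hj
    have hj0 : j ≠ 0 := fun h => (Finsupp.mem_support_iff.1 hj) (h ▸ hm0)
    exact coeff_u c hj0
  have hprod : ∏ j ∈ m.support, (coeff j (fSeries c).derivativeFun) ^ m j
      = (∏ j ∈ m.support, ((j:ℂ)+1) ^ m j) * ∏ j ∈ m.support, c j ^ m j := by
    rw [← Finset.prod_mul_distrib]
    refine Finset.prod_congr rfl fun j hj => ?_
    rw [hcu j hj, mul_pow]
  have hfne : (∏ j ∈ m.support, ((m j).factorial : ℂ)) ≠ 0 :=
    Finset.prod_ne_zero_iff.2 fun j _ => Nat.cast_ne_zero.2 (Nat.factorial_ne_zero _)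
  rw [hM2, hwtc, hprod, hdeg]
  rw [← hM1]
  field_simp
  ring
end

section
/- Let b_2, b_3, …, b_M ∈ ℂ. In the ring ℂ[[x,y]] of formal power series in two variables, consider L(x,y) := log(1 − ∑_{j=2}^M b_j · x y · h_{j−2}(x,y)), where h_d(x,y) = ∑_{a+b=d} x^a y^b and log(1−u) := −∑_{l≥1} u^l/l. Then for all integers n, k ≥ 1, the coefficient of x^k y^n in L(x,y) equals −∑_{m} ((|m|−1)!/∏_{j≥2} m_j!) · b^m · V_{k−|m|}(m), where the sum is over finitely supported sequences m = (m_2, m_3, …) of nonnegative integers (with m_1 = 0) satisfying ∑_{j≥2} j·m_j = n+k, b^m = ∏_{j≥2} b_j^{m_j}, and V_p(m) denotes the coefficient of t^p in ∏_{j≥3} (1 + t + ⋯ + t^{j−2})^{m_j}. (Consequently, for g(z) = z + b_1 + b_2 z^{−1} + b_3 z^{−2} + …, whose Grunsky coefficients β_{nk} are defined by ∑_{n,k≥1} β_{nk} z^{−k} ζ^{−n} = ζ ∂_ζ log((g(ζ)−g(z))/(ζ−z)) and satisfy β_{nk} = −n·[x^k y^n]L with x = z^{−1}, y = ζ^{−1},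 one gets β_{nk} = n ∑_{m: ‖m‖=n+k, m_1=0} ((|m|−1)!/∏ m_j!) b^m V_{k−|m|}(m).) -/
open PowerSeries Finset

/-- `V_p(m)` for `p ∈ ℤ`: the coefficient of `t^p` in
`∏_{j≥3} (1 + t + ⋯ + t^{j−2})^{mⱼ}` (zero when `p < 0`). -/
noncomputable def Vcoeff (m : ℕ →₀ ℕ) (p : ℤ) : ℂ :=
  if 0 ≤ p then
    PowerSeries.coeff p.toNat
      (∏ j ∈ m.support, (∑ i ∈ Finset.range (j - 1), (PowerSeries.X : PowerSeries ℂ) ^ i) ^ m j)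
  else 0

/-- The series `L(x,y) := log(1 − ∑_{j=2}^M bⱼ·xy·h_{j−2}(x,y)) = −∑_{l≥1} uˡ/l` in
`ℂ⟦x,y⟧`, where `h_d(x,y) = ∑_{a+b=d} x^a y^b` and
`u = ∑_{j=2}^M bⱼ·xy·h_{j−2}(x,y)` has zero constant term (so only `l ≤` total
degree contribute to each coefficient). -/
noncomputable def Lseries (M : ℕ) (b : ℕ → ℂ) : MvPowerSeries (Fin 2) ℂ :=
  fun d =>
    -∑ l ∈ Finset.range ((d 0 + d 1) + 1),
      (l : ℂ)⁻¹ *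
        MvPowerSeries.coeff d
          ((∑ j ∈ Finset.Icc 2 M,
              (MvPowerSeries.C (b j) : MvPowerSeries (Fin 2) ℂ) * MvPowerSeries.X 0 * MvPowerSeries.X 1 *
                ∑ ab ∈ Finset.HasAntidiagonal.antidiagonal (j - 2),
                  MvPowerSeries.X (0 : Fin 2) ^ ab.1 * MvPowerSeries.X 1 ^ ab.2) ^ l)

/- ### Auxiliary development -/

lemma fin2_eta (a : Fin 2 →₀ ℕ) : Finsupp.single 0 (a 0) + Finsupp.single 1 (a 1) = a := by
  ext i; fin_cases i <;> simp [Finsupp.single_apply]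

lemma sum_antidiag_fin2 (p q : ℕ) (F : (Fin 2 →₀ ℕ) → (Fin 2 →₀ ℕ) → ℂ) :
    ∑ e ∈ Finset.HasAntidiagonal.antidiagonal (Finsupp.single (0:Fin 2) p + Finsupp.single 1 q),
        F e.1 e.2 =
      ∑ i ∈ range (p+1), ∑ j ∈ range (q+1),
        F (Finsupp.single 0 i + Finsupp.single 1 j)
          (Finsupp.single 0 (p-i) + Finsupp.single 1 (q-j)) := by
  rw [← Finset.sum_product']
  refine Finset.sum_nbij' (fun e => (e.1 0, e.1 1))
    (fun ij => (Finsupp.single 0 ij.1 + Finsupp.single 1 ij.2,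
      Finsupp.single 0 (p - ij.1) + Finsupp.single 1 (q - ij.2))) ?_ ?_ ?_ ?_ ?_
  · rintro ⟨a, c⟩ h
    rw [Finset.HasAntidiagonal.mem_antidiagonal] at h
    have h0 : a 0 + c 0 = p := by
      have := congrArg (fun g : Fin 2 →₀ ℕ => g 0) h; simpa using this
    have h1 : a 1 + c 1 = q := by
      have := congrArg (fun g : Fin 2 →₀ ℕ => g 1) h; simpa using this
    simp only [Finset.mem_product, Finset.mem_range]
    omega
  · rintro ⟨i, j⟩ h
    simp only [Finset.mem_product, Finset.mem_range] at h
    rw [Finset.HasAntidiagonal.mem_antidiagonal]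
    ext t
    fin_cases t <;> simp [Finsupp.single_apply] <;> omega
  · rintro ⟨a, c⟩ h
    rw [Finset.HasAntidiagonal.mem_antidiagonal] at h
    have h0 : a 0 + c 0 = p := by
      have := congrArg (fun g : Fin 2 →₀ ℕ => g 0) h; simpa using this
    have h1 : a 1 + c 1 = q := by
      have := congrArg (fun g : Fin 2 →₀ ℕ => g 1) h; simpa using this
    have ha := fin2_eta a
    have hc := fin2_eta c
    simp only [Prod.mk.injEq]
    constructor
    · exact ha
    · rw [← hc]; congr 1 <;> [skip; skip] <;> congr 1 <;> omega
  · rintro ⟨i, j⟩ h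
    simp only [Finset.mem_product, Finset.mem_range] at h
    simp [Finsupp.single_apply]
  · rintro ⟨a, c⟩ h
    rw [Finset.HasAntidiagonal.mem_antidiagonal] at h
    have h0 : a 0 + c 0 = p := by
      have := congrArg (fun g : Fin 2 →₀ ℕ => g 0) h; simpa using this
    have h1 : a 1 + c 1 = q := by
      have := congrArg (fun g : Fin 2 →₀ ℕ => g 1) h; simpa using this
    have hc2 : (Finsupp.single (0:Fin 2) (p - a 0) + Finsupp.single 1 (q - a 1)) = c := by
      rw [← fin2_eta c]
      congr 1 <;> congr 1 <;> omega
    dsimp only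
    rw [fin2_eta a, hc2]

/-- Bigraded correspondence: `F` is the homogenization of degree `D` of the
one-variable series `f` (which is supported in degrees `≤ D`). -/
def IsH (F : MvPowerSeries (Fin 2) ℂ) (f : PowerSeries ℂ) (D : ℕ) : Prop :=
  (∀ p q : ℕ, MvPowerSeries.coeff (Finsupp.single (0:Fin 2) p + Finsupp.single 1 q) F =
      if p + q = D then PowerSeries.coeff p f else 0) ∧
  ∀ i : ℕ, D < i → PowerSeries.coeff i f = 0

lemma isH_one : IsH 1 1 0 := by
  constructor
  · intro p q
    rw [MvPowerSeries.coeff_one]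
    have h0 : ((Finsupp.single (0:Fin 2) p + Finsupp.single 1 q : Fin 2 →₀ ℕ) = 0)
        ↔ (p = 0 ∧ q = 0) := by
      constructor
      · intro h
        constructor
        · have := congrArg (fun g : Fin 2 →₀ ℕ => g 0) h; simpa using this
        · have := congrArg (fun g : Fin 2 →₀ ℕ => g 1) h; simpa using this
      · rintro ⟨rfl, rfl⟩; simp
    rw [PowerSeries.coeff_one]
    by_cases hp : p = 0 ∧ q = 0
    · obtain ⟨rfl, rfl⟩ := hp; simp
    · rw [if_neg (fun h => hp (h0.1 h))]
      split_ifs with h1 h2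
      · omega
      · rfl
      · rfl
  · intro i hi
    rw [PowerSeries.coeff_one, if_neg (by omega)]

lemma isH_mono (a c : ℕ) :
    IsH (MvPowerSeries.X 0 ^ a * MvPowerSeries.X 1 ^ c) (PowerSeries.X ^ a) (a + c) := by
  constructor
  · intro p q
    rw [MvPowerSeries.X_pow_eq, MvPowerSeries.X_pow_eq, MvPowerSeries.monomial_mul_monomial,
      MvPowerSeries.coeff_monomial, PowerSeries.coeff_X_pow]
    have h0 : ((Finsupp.single (0:Fin 2) p + Finsupp.single 1 q : Fin 2 →₀ ℕ)
        = Finsupp.single 0 a + Finsupp.single 1 c) ↔ (p = a ∧ q = c) := by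
      constructor
      · intro h
        constructor
        · have := congrArg (fun g : Fin 2 →₀ ℕ => g 0) h; simpa using this
        · have := congrArg (fun g : Fin 2 →₀ ℕ => g 1) h; simpa using this
      · rintro ⟨rfl, rfl⟩; rfl
    rw [mul_one]
    by_cases hp : p = a ∧ q = c
    · obtain ⟨rfl, rfl⟩ := hp
      rw [if_pos (h0.2 ⟨rfl, rfl⟩), if_pos rfl, if_pos rfl]
    · rw [if_neg (fun h => hp (h0.1 h))]
      split_ifs with h1 h2
      · exact absurd ⟨h2, by omega⟩ hp
      · rfl
      · rfl
  · intro i hi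
    rw [PowerSeries.coeff_X_pow, if_neg (by omega)]

lemma sum_ite_add (q D i : ℕ) (X : ℕ → ℂ) :
    ∑ j ∈ range (q+1), (if i + j = D then X j else 0)
      = if i ≤ D ∧ D - i ≤ q then X (D - i) else 0 := by
  by_cases h : i ≤ D ∧ D - i ≤ q
  · rw [if_pos h]
    rw [Finset.sum_eq_single (D - i)]
    · rw [if_pos (by omega)]
    · intro c hc hne
      rw [if_neg (by simp only [mem_range] at hc; omega)]
    · intro hno
      exact absurd (by simp only [mem_range]; omega) hno
  · rw [if_neg h]
    apply Finset.sum_eq_zero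
    intro j hj
    simp only [mem_range] at hj
    rw [if_neg (by omega)]

lemma isH_mul {F G f g D E} (hF : IsH F f D) (hG : IsH G g E) :
    IsH (F * G) (f * g) (D + E) := by
  obtain ⟨hF1, hF2⟩ := hF
  obtain ⟨hG1, hG2⟩ := hG
  constructor
  · intro p q
    rw [MvPowerSeries.coeff_mul, sum_antidiag_fin2 p q
      (fun e1 e2 => MvPowerSeries.coeff e1 F * MvPowerSeries.coeff e2 G)]
    simp only [hF1, hG1]
    by_cases hpq : p + q = D + E
    · rw [if_pos hpq, PowerSeries.coeff_mul,
        Finset.Nat.sum_antidiagonal_eq_sum_range_succ_mk]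
      have key : ∀ i ∈ range (p+1),
          ∑ j ∈ range (q+1),
            ((if i + j = D then PowerSeries.coeff i f else 0) *
              (if p - i + (q - j) = E then PowerSeries.coeff (p-i) g else 0))
          = PowerSeries.coeff i f * PowerSeries.coeff (p-i) g := by
        intro i hi
        simp only [mem_range] at hi
        have step : ∀ j ∈ range (q+1),
            ((if i + j = D then PowerSeries.coeff i f else 0) *
              (if p - i + (q - j) = E then PowerSeries.coeff (p-i) g else 0))
            = (if i + j = D then PowerSeries.coeff i f * PowerSeries.coeff (p-i) g
              else 0) := by
          intro j hj
          simp only [mem_range] at hj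
          split_ifs with h1 h2 h3
          · ring
          · omega
          · omega
          · ring
        rw [Finset.sum_congr rfl step, sum_ite_add]
        by_cases h : i ≤ D ∧ D - i ≤ q
        · rw [if_pos h]
        · rw [if_neg h]
          rcases not_and_or.1 h with h' | h'
          · rw [hF2 i (by omega), zero_mul]
          · rw [hG2 (p - i) (by omega), mul_zero]
      rw [Finset.sum_congr rfl key]
    · rw [if_neg hpq]
      apply Finset.sum_eq_zero
      intro i hi
      apply Finset.sum_eq_zero
      intro j hj
      simp only [mem_range] at hi hj
      split_ifs with h1 h2
      · omega
      · exact mul_zero _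
      · exact zero_mul _
      · exact zero_mul _
  · intro i hi
    rw [PowerSeries.coeff_mul]
    apply Finset.sum_eq_zero
    rintro ⟨a, c⟩ hac
    rw [Finset.HasAntidiagonal.mem_antidiagonal] at hac
    simp only at hac
    rcases lt_or_ge D a with h | h
    · rw [hF2 a h, zero_mul]
    · rw [hG2 c (by omega), mul_zero]

lemma isH_C_mul {F f D} (a : ℂ) (h : IsH F f D) :
    IsH (MvPowerSeries.C (σ := Fin 2) (R := ℂ) a * F) (PowerSeries.C a * f) D := by
  obtain ⟨h1, h2⟩ := h
  constructor
  · intro p q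
    rw [MvPowerSeries.coeff_C_mul, PowerSeries.coeff_C_mul, h1]
    split_ifs <;> simp
  · intro i hi
    rw [PowerSeries.coeff_C_mul, h2 i hi, mul_zero]

lemma isH_sum {ι : Type*} (s : Finset ι) (F : ι → MvPowerSeries (Fin 2) ℂ)
    (f : ι → PowerSeries ℂ) (D : ℕ) (h : ∀ t ∈ s, IsH (F t) (f t) D) :
    IsH (∑ t ∈ s, F t) (∑ t ∈ s, f t) D := by
  constructor
  · intro p q
    rw [map_sum, map_sum]
    rw [Finset.sum_congr rfl (fun t ht => (h t ht).1 p q)]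
    rw [Finset.sum_ite_irrel, Finset.sum_const_zero]
  · intro i hi
    rw [map_sum]
    exact Finset.sum_eq_zero fun t ht => (h t ht).2 i hi

lemma isH_pow {F f D} (h : IsH F f D) (e : ℕ) : IsH (F ^ e) (f ^ e) (e * D) := by
  induction e with
  | zero => simpa using isH_one
  | succ e ih =>
      have := isH_mul ih h
      have h3 : (e + 1) * D = e * D + D := by ring
      rw [pow_succ, pow_succ, h3]
      exact this

lemma isH_prod {ι : Type*} (s : Finset ι) (F : ι → MvPowerSeries (Fin 2) ℂ)
    (f : ι → PowerSeries ℂ) (D : ι → ℕ) (h : ∀ t ∈ s, IsH (F t) (f t) (D t)) :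
    IsH (∏ t ∈ s, F t) (∏ t ∈ s, f t) (∑ t ∈ s, D t) := by
  classical
  induction s using Finset.induction_on with
  | empty => simpa using isH_one
  | @insert a s ha ih =>
      rw [Finset.prod_insert ha, Finset.prod_insert ha, Finset.sum_insert ha]
      exact isH_mul (h a (mem_insert_self a s))
        (ih fun t ht => h t (mem_insert_of_mem ht))

lemma isH_c (b : ℂ) (j : ℕ) (hj : 2 ≤ j) :
    IsH (MvPowerSeries.C (σ := Fin 2) (R := ℂ) b * MvPowerSeries.X 0 * MvPowerSeries.X 1 *
          ∑ ab ∈ Finset.HasAntidiagonal.antidiagonal (j - 2),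
            MvPowerSeries.X (0 : Fin 2) ^ ab.1 * MvPowerSeries.X 1 ^ ab.2)
        (PowerSeries.C b *
          (PowerSeries.X * ∑ i ∈ Finset.range (j - 1), (PowerSeries.X : PowerSeries ℂ) ^ i))
        j := by
  have hh : IsH (∑ ab ∈ Finset.HasAntidiagonal.antidiagonal (j - 2),
      MvPowerSeries.X (0 : Fin 2) ^ ab.1 * MvPowerSeries.X 1 ^ ab.2)
      (∑ ab ∈ Finset.HasAntidiagonal.antidiagonal (j - 2), (PowerSeries.X : PowerSeries ℂ) ^ ab.1)
      (j - 2) := by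
    apply isH_sum
    rintro ⟨a, c⟩ hac
    rw [Finset.HasAntidiagonal.mem_antidiagonal] at hac
    simp only at hac
    have := isH_mono a c
    rwa [hac] at this
  have hxy : IsH (MvPowerSeries.X 0 * MvPowerSeries.X 1) PowerSeries.X 2 := by
    have := isH_mono 1 1
    simpa using this
  have hmul := isH_mul hxy hh
  have h2 : 2 + (j - 2) = j := by omega
  rw [h2] at hmul
  have := isH_C_mul b hmul
  have hre : ∑ ab ∈ Finset.HasAntidiagonal.antidiagonal (j - 2), (PowerSeries.X : PowerSeries ℂ) ^ ab.1
      = ∑ i ∈ Finset.range (j - 1), (PowerSeries.X : PowerSeries ℂ) ^ i := by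
    rw [Finset.Nat.sum_antidiagonal_eq_sum_range_succ_mk]
    exact Finset.sum_congr (by congr 1; omega) (fun _ _ => rfl)
  rw [hre] at this
  have hassoc : MvPowerSeries.C (σ := Fin 2) (R := ℂ) b * MvPowerSeries.X 0 * MvPowerSeries.X 1 *
        (∑ ab ∈ Finset.HasAntidiagonal.antidiagonal (j - 2),
          MvPowerSeries.X (0 : Fin 2) ^ ab.1 * MvPowerSeries.X 1 ^ ab.2)
      = MvPowerSeries.C (σ := Fin 2) (R := ℂ) b * (MvPowerSeries.X 0 * MvPowerSeries.X 1 *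
        (∑ ab ∈ Finset.HasAntidiagonal.antidiagonal (j - 2),
          MvPowerSeries.X (0 : Fin 2) ^ ab.1 * MvPowerSeries.X 1 ^ ab.2)) := by ring
  rw [hassoc]
  exact this

/- ### Main theorem -/

/-- For `b₂,…,b_M ∈ ℂ` and all `n, k ≥ 1`, the coefficient of `x^k yⁿ` in
`L(x,y) = log(1 − ∑_{j=2}^M bⱼ·xy·h_{j−2}(x,y))` equals
`−∑_m ((|m|−1)!/∏_{j≥2} mⱼ!) b^m V_{k−|m|}(m)`, the sum over finitely supported
sequences `m = (m₂, m₃, …)` supported in `{2,…,M}` with `∑ j·mⱼ = n + k`; here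
`V_p(m)` is the coefficient of `t^p` in `∏_{j≥3} (1 + t + ⋯ + t^{j−2})^{mⱼ}`.
(This gives the Grunsky coefficients: `βₙₖ = −n·[x^k yⁿ]L`.) -/
theorem coeff_L_grunsky (M : ℕ) (b : ℕ → ℂ) (n k : ℕ) (hn : 1 ≤ n) (hk : 1 ≤ k) :
    MvPowerSeries.coeff (Finsupp.single 0 k + Finsupp.single 1 n) (Lseries M b) =
      -∑ᶠ (m : ℕ →₀ ℕ)
          (_ : (m.support : Set ℕ) ⊆ Finset.Icc 2 M ∧ (m.sum fun j e => j * e) = n + k),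
          ((((m.sum fun _ e => e) - 1).factorial : ℂ) /
              ∏ j ∈ m.support, ((m j).factorial : ℂ)) *
            (∏ j ∈ m.support, b j ^ m j) *
            Vcoeff m ((k : ℤ) - (m.sum fun _ e => e : ℕ)) := by
  classical
  set S := Finset.Icc 2 M with hS
  set d : Fin 2 →₀ ℕ := Finsupp.single 0 k + Finsupp.single 1 n with hd
  set u : MvPowerSeries (Fin 2) ℂ :=
    ∑ j ∈ S,
      MvPowerSeries.C (σ := Fin 2) (R := ℂ) (b j) * MvPowerSeries.X 0 * MvPowerSeries.X 1 *
        ∑ ab ∈ Finset.HasAntidiagonal.antidiagonal (j - 2),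
          MvPowerSeries.X (0 : Fin 2) ^ ab.1 * MvPowerSeries.X 1 ^ ab.2 with hu
  -- the value of the coefficient of `Lseries`
  have hL : MvPowerSeries.coeff d (Lseries M b) =
      -∑ l ∈ Finset.range (k + n + 1), (l : ℂ)⁻¹ * MvPowerSeries.coeff d (u ^ l) := by
    rw [MvPowerSeries.coeff_apply, Lseries]
    have h0 : d 0 = k := by simp [hd]
    have h1 : d 1 = n := by simp [hd]
    rw [h0, h1]
  rw [hL]
  -- the term function
  set Term : (ℕ →₀ ℕ) → ℂ := fun m =>
    ((((m.sum fun _ e => e) - 1).factorial : ℂ) /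
        ∏ j ∈ m.support, ((m j).factorial : ℂ)) *
      (∏ j ∈ m.support, b j ^ m j) *
      Vcoeff m ((k : ℤ) - (m.sum fun _ e => e : ℕ)) with hTerm
  -- key computation for each l
  have key : ∀ l : ℕ,
      (l : ℂ)⁻¹ * MvPowerSeries.coeff d (u ^ l) =
        ∑ m ∈ Finset.finsuppAntidiag S l,
          (if (m.sum fun j e => j * e) = n + k then Term m else 0) := by
    intro l
    rw [hu, Finset.sum_pow_eq_sum_piAntidiag, map_sum, Finset.mul_sum]
    refine (Finset.sum_bij' (fun m (_ : m ∈ Finset.finsuppAntidiag S l) => (m : ℕ → ℕ))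
      (fun f hf => Finsupp.onFinset S f ?_) ?_ ?_ ?_ ?_ ?_).symm
    · -- support condition for onFinset
      intro a ha
      exact (mem_piAntidiag.1 hf).2 a ha
    · -- maps into piAntidiag
      intro m hm
      rw [Finset.mem_finsuppAntidiag] at hm
      rw [mem_piAntidiag]
      refine ⟨hm.1, fun i hi => hm.2 (Finsupp.mem_support_iff.2 hi)⟩
    · -- maps into finsuppAntidiag
      intro f hf
      rw [mem_piAntidiag] at hf
      rw [Finset.mem_finsuppAntidiag]
      constructor
      · exact hf.1
      · intro a ha
        rw [Finsupp.mem_support_iff, Finsupp.onFinset_apply] at ha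
        exact hf.2 a ha
    · -- left inverse
      intro m hm
      ext a
      simp [Finsupp.onFinset_apply]
    · -- right inverse
      intro f hf
      ext a
      simp [Finsupp.onFinset_apply]
    · -- values agree
      intro m hm
      rw [Finset.mem_finsuppAntidiag] at hm
      obtain ⟨hsum, hsupp⟩ := hm
      have hls : (m.sum fun _ e => e) = l := by
        rw [Finsupp.sum, ← hsum]
        exact Finset.sum_subset hsupp (fun x _ hx => by
          simpa using Finsupp.notMem_support_iff.1 hx)
      have hwt : (m.sum fun j e => j * e) = ∑ j ∈ S, j * m j := by
        rw [Finsupp.sum]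
        exact Finset.sum_subset hsupp (fun x _ hx => by
          simp [Finsupp.notMem_support_iff.1 hx])
      -- the IsH structure of the product
      have hprod : IsH (∏ j ∈ S,
          (MvPowerSeries.C (σ := Fin 2) (R := ℂ) (b j) * MvPowerSeries.X 0 * MvPowerSeries.X 1 *
            ∑ ab ∈ Finset.HasAntidiagonal.antidiagonal (j - 2),
              MvPowerSeries.X (0 : Fin 2) ^ ab.1 * MvPowerSeries.X 1 ^ ab.2) ^ m j)
          (∏ j ∈ S, (PowerSeries.C (b j) *
            (PowerSeries.X *
              ∑ i ∈ Finset.range (j - 1), (PowerSeries.X : PowerSeries ℂ) ^ i)) ^ m j)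
          (∑ j ∈ S, m j * j) := by
        apply isH_prod
        intro j hj
        have hj2 : 2 ≤ j := (Finset.mem_Icc.1 hj).1
        exact isH_pow (isH_c (b j) j hj2) (m j)
      -- one-variable product rewriting
      have hone : (∏ j ∈ S, (PowerSeries.C (b j) *
            (PowerSeries.X *
              ∑ i ∈ Finset.range (j - 1), (PowerSeries.X : PowerSeries ℂ) ^ i)) ^ m j)
          = PowerSeries.C (∏ j ∈ S, b j ^ m j) *
            ((PowerSeries.X : PowerSeries ℂ) ^ l *
              ∏ j ∈ S, (∑ i ∈ Finset.range (j - 1),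
                (PowerSeries.X : PowerSeries ℂ) ^ i) ^ m j) := by
        rw [map_prod]
        simp only [mul_pow, map_pow]
        rw [Finset.prod_mul_distrib, Finset.prod_mul_distrib,
          Finset.prod_pow_eq_pow_sum, hsum]
      -- coefficient of the bivariate product at d
      have hcoeffprod : MvPowerSeries.coeff d (∏ j ∈ S,
          (MvPowerSeries.C (σ := Fin 2) (R := ℂ) (b j) * MvPowerSeries.X 0 * MvPowerSeries.X 1 *
            ∑ ab ∈ Finset.HasAntidiagonal.antidiagonal (j - 2),
              MvPowerSeries.X (0 : Fin 2) ^ ab.1 * MvPowerSeries.X 1 ^ ab.2) ^ m j)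
          = if k + n = ∑ j ∈ S, m j * j then
              (∏ j ∈ S, b j ^ m j) *
                (if l ≤ k then PowerSeries.coeff (k - l)
                  (∏ j ∈ S, (∑ i ∈ Finset.range (j - 1),
                    (PowerSeries.X : PowerSeries ℂ) ^ i) ^ m j) else 0)
            else 0 := by
        rw [hd, hprod.1 k n, hone]
        rw [PowerSeries.coeff_C_mul, PowerSeries.coeff_X_pow_mul']
      rw [← map_natCast (MvPowerSeries.C (σ := Fin 2) (R := ℂ)) (Nat.multinomial S (m : ℕ → ℕ)),
        MvPowerSeries.coeff_C_mul, hcoeffprod]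
      -- now put everything together
      rw [← mul_assoc]
      by_cases hcond : (m.sum fun j e => j * e) = n + k
      · rw [if_pos hcond]
        have hcomm : ∑ j ∈ S, m j * j = ∑ j ∈ S, j * m j :=
          Finset.sum_congr rfl (fun j _ => mul_comm _ _)
        have hcond' : k + n = ∑ j ∈ S, m j * j := by
          rw [hcomm, ← hwt]; omega
        rw [if_pos hcond']
        -- l ≥ 1
        have hl1 : 1 ≤ l := by
          by_contra hl0
          have : l = 0 := by omega
          subst this
          have hm0 : m = 0 := by
            ext a
            simp only [Finsupp.coe_zero, Pi.zero_apply]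
            by_cases ha : m a = 0
            · exact ha
            · have haS := hsupp (Finsupp.mem_support_iff.2 ha)
              exact (Finset.sum_eq_zero_iff.1 hsum) a haS
          rw [hm0] at hcond
          simp [Finsupp.sum] at hcond
          omega

        -- multinomial cast
        have hfactne : (∏ j ∈ S, ((m j).factorial : ℂ)) ≠ 0 := by
          apply Finset.prod_ne_zero_iff.2
          intro j hj
          exact_mod_cast Nat.cast_ne_zero.2 (Nat.factorial_ne_zero _)
        have hmultspec := Nat.multinomial_spec S (m : ℕ → ℕ)
        have hcast : ((Nat.multinomial S (m : ℕ → ℕ) : ℂ)) *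
            (∏ j ∈ S, ((m j).factorial : ℂ)) = ((l.factorial : ℂ)) := by
          rw [← Nat.cast_prod, ← Nat.cast_mul, mul_comm]
          rw [hmultspec, hsum]
        have hscalar : (l : ℂ)⁻¹ * (Nat.multinomial S (m : ℕ → ℕ) : ℂ) =
            ((l - 1).factorial : ℂ) / ∏ j ∈ S, ((m j).factorial : ℂ) := by
          have hlfact : (l.factorial : ℂ) = (l : ℂ) * ((l - 1).factorial : ℂ) := by
            obtain ⟨l', rfl⟩ : ∃ l', l = l' + 1 := ⟨l - 1, by omega⟩
            rw [Nat.factorial_succ]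
            push_cast
            ring_nf
          have hlne : (l : ℂ) ≠ 0 := Nat.cast_ne_zero.2 (by omega)
          rw [eq_div_iff hfactne, mul_assoc, hcast, hlfact, inv_mul_cancel_left₀ hlne]
        -- support products vs S products
        have hbprod : (∏ j ∈ m.support, b j ^ m j) = ∏ j ∈ S, b j ^ m j := by
          apply Finset.prod_subset hsupp
          intro x _ hx
          simp [Finsupp.notMem_support_iff.1 hx]
        have hfprod : (∏ j ∈ m.support, ((m j).factorial : ℂ))
            = ∏ j ∈ S, ((m j).factorial : ℂ) := by
          apply Finset.prod_subset hsupp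
          intro x _ hx
          simp [Finsupp.notMem_support_iff.1 hx]
        have hVprod : (∏ j ∈ m.support, (∑ i ∈ Finset.range (j - 1),
              (PowerSeries.X : PowerSeries ℂ) ^ i) ^ m j)
            = ∏ j ∈ S, (∑ i ∈ Finset.range (j - 1),
              (PowerSeries.X : PowerSeries ℂ) ^ i) ^ m j := by
          apply Finset.prod_subset hsupp
          intro x _ hx
          simp [Finsupp.notMem_support_iff.1 hx]
        have hV : Vcoeff m ((k : ℤ) - ((m.sum fun _ e => e) : ℕ)) =
            (if l ≤ k then PowerSeries.coeff (k - l)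
              (∏ j ∈ S, (∑ i ∈ Finset.range (j - 1),
                (PowerSeries.X : PowerSeries ℂ) ^ i) ^ m j) else 0) := by
          rw [Vcoeff, hVprod, hls]
          by_cases hlk : l ≤ k
          · rw [if_pos (by omega : (0:ℤ) ≤ (k : ℤ) - (l:ℕ)), if_pos hlk]
            have htn : ((k:ℤ) - (l:ℕ)).toNat = k - l := by omega
            rw [htn]
          · rw [if_neg (by omega : ¬ (0:ℤ) ≤ (k : ℤ) - (l:ℕ)), if_neg hlk]
        rw [hTerm]
        dsimp only
        rw [hV, hls, hbprod, hfprod, hscalar]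
        ring
      · rw [if_neg hcond]
        have hcomm : ∑ j ∈ S, m j * j = ∑ j ∈ S, j * m j :=
          Finset.sum_congr rfl (fun j _ => mul_comm _ _)
        have hcond' : ¬ (k + n = ∑ j ∈ S, m j * j) := by
          rw [hcomm, ← hwt]; omega
        rw [if_neg hcond']
        simp
  -- sum over l
  rw [Finset.sum_congr rfl (fun l _ => key l)]
  -- combine into one finset
  rw [← Finset.sum_biUnion (by
    intro l1 _ l2 _ hne
    apply Finset.disjoint_left.2
    intro m hm1 hm2
    rw [Finset.mem_finsuppAntidiag] at hm1 hm2
    exact hne (hm1.1 ▸ hm2.1))]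
  rw [← Finset.sum_filter]
  -- identify with the finsum
  rw [neg_inj]
  refine (finsum_cond_eq_sum_of_cond_iff _ ?_).symm
  intro m _
  constructor
  · rintro ⟨hsupp, hwt⟩
    rw [Finset.mem_filter]
    refine ⟨Finset.mem_biUnion.2 ⟨m.sum fun _ e => e, ?_, ?_⟩, hwt⟩
    · rw [Finset.mem_range]
      have hsupp' : m.support ⊆ S := Finset.coe_subset.1 hsupp
      have hle : (m.sum fun _ e => e) ≤ (m.sum fun j e => j * e) := by
        rw [Finsupp.sum, Finsupp.sum]
        apply Finset.sum_le_sum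
        intro j hj
        have hj2 : 2 ≤ j := (Finset.mem_Icc.1 (hsupp' hj)).1
        nlinarith [Nat.zero_le (m j)]
      omega
    · rw [Finset.mem_finsuppAntidiag]
      have hsupp' : m.support ⊆ S := Finset.coe_subset.1 hsupp
      refine ⟨?_, hsupp'⟩
      rw [Finsupp.sum]
      exact (Finset.sum_subset hsupp' (fun x _ hx => by
        simpa using Finsupp.notMem_support_iff.1 hx)).symm
  · intro hm
    rw [Finset.mem_filter] at hm
    obtain ⟨hm1, hm2⟩ := hm
    obtain ⟨l, _, hml⟩ := Finset.mem_biUnion.1 hm1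
    rw [Finset.mem_finsuppAntidiag] at hml
    exact ⟨Finset.coe_subset.2 hml.2, hm2⟩
end
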